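/- arXiv:1410.4574 — 6 statements merged into one kernel-verified Lean document; each statement's English description precedes it below -/
import Mathlib

section
/- Equivalence of conditions (1) and (3) of Theorem 1: the six cevian feet A₁, A₂, B₁, B₂, C₁, C₂ are conconic if and only if the six cevian lines AA₁, AA₂, BB₁, BB₂, CC₁, CC₂ touch a common conic (dual formulation). -/
open EuclideanGeometry

abbrev Pt := EuclideanSpace ℝ (Fin 2)

/-- Six (or any set of) points lie on a common conic: a nonzero quadratic equation
vanishes at each of them. -/
def Conconic (s : Set Pt) : Prop :=
  ∃ a b c d e f : ℝ, (a, b, c, d, e, f) ≠ (0, 0, 0, 0, 0, 0) ∧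
    ∀ P ∈ s, a * (P 0) ^ 2 + b * (P 0) * (P 1) + c * (P 1) ^ 2 + d * (P 0) + e * (P 1) + f = 0

/-- `L = (u, v, w)` are homogeneous line coordinates of the line through the
points `P` and `Q`. -/
def IsLineCoord (P Q : Pt) (L : Fin 3 → ℝ) : Prop :=
  (L 0, L 1) ≠ (0, 0) ∧
  L 0 * P 0 + L 1 * P 1 + L 2 = 0 ∧
  L 0 * Q 0 + L 1 * Q 1 + L 2 = 0

/-- A family of lines, each given by a pair of points spanning it, touches a common
conic (dual formulation): a nonzero quadratic form on ℝ³ vanishes at the homogeneous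
line coordinates of each line. -/
def TouchCommonConic (ls : List (Pt × Pt)) : Prop :=
  ∃ Q : QuadraticForm ℝ (Fin 3 → ℝ), Q ≠ 0 ∧
    ∀ pq ∈ ls, ∀ L : Fin 3 → ℝ, IsLineCoord pq.1 pq.2 L → Q L = 0

lemma mem_line_param (P Q R : Pt) (h : R ∈ line[ℝ, P, Q]) :
    ∃ s : ℝ, R 0 = P 0 + s*(Q 0 - P 0) ∧ R 1 = P 1 + s*(Q 1 - P 1) := by
  have h' : (R -ᵥ P) +ᵥ P ∈ line[ℝ, P, Q] := by rwa [vsub_vadd]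
  obtain ⟨r, hr⟩ := vadd_left_mem_affineSpan_pair.mp h'
  have h0 := congrFun (congrArg WithLp.ofLp hr) 0
  have h1 := congrFun (congrArg WithLp.ofLp hr) 1
  simp only [PiLp.smul_apply, vsub_eq_sub, PiLp.sub_apply, smul_eq_mul] at h0 h1
  exact ⟨r, by linarith, by linarith⟩

lemma det_ne_zero (A B C : Pt) (hABC : AffineIndependent ℝ ![A, B, C]) :
    (B 0 - A 0)*(C 1 - A 1) - (B 1 - A 1)*(C 0 - A 0) ≠ 0 := by
  intro hD
  rw [affineIndependent_iff_not_collinear_set] at hABC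
  apply hABC
  have hBA : B ≠ A := by
    intro h
    apply hABC
    rw [h]
    have : ({A, A, C} : Set Pt) = {A, C} := by
      simp [Set.insert_comm]
    rw [this]
    exact collinear_pair ℝ A C
  have hu : B 0 - A 0 ≠ 0 ∨ B 1 - A 1 ≠ 0 := by
    by_contra h
    push_neg at h
    apply hBA
    ext i
    fin_cases i
    · show B 0 = A 0
      linarith [h.1]
    · show B 1 = A 1
      linarith [h.2]
  rw [collinear_iff_of_mem (Set.mem_insert A {B, C})]
  refine ⟨B -ᵥ A, ?_⟩
  intro p hp
  simp only [Set.mem_insert_iff, Set.mem_singleton_iff] at hp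
  rcases hp with rfl | rfl | rfl
  · exact ⟨0, by simp⟩
  · exact ⟨1, by simp⟩
  set μ : ℝ := if B 0 - A 0 ≠ 0 then (p 0 - A 0)/(B 0 - A 0) else (p 1 - A 1)/(B 1 - A 1) with hμ
  refine ⟨μ, ?_⟩
  have hc0 : p 0 - A 0 = μ * (B 0 - A 0) := by
    by_cases h0 : B 0 - A 0 ≠ 0
    · rw [hμ, if_pos h0]
      field_simp
    · push_neg at h0
      have h1 : B 1 - A 1 ≠ 0 := by
        rcases hu with h | h
        · exact absurd h0 h
        · exact h
      rw [h0]
      have : (p 0 - A 0) * (B 1 - A 1) = 0 := by linear_combination -hD + (p 1 - A 1)*h0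
      rcases mul_eq_zero.mp this with h'|h'
      · rw [h']; ring
      · exact absurd h' h1
  have hc1 : p 1 - A 1 = μ * (B 1 - A 1) := by
    by_cases h0 : B 0 - A 0 ≠ 0
    · rw [hμ, if_pos h0]
      rw [div_mul_eq_mul_div, eq_div_iff h0]
      linear_combination hD
    · push_neg at h0
      have h1 : B 1 - A 1 ≠ 0 := by
        rcases hu with h | h
        · exact absurd h0 h
        · exact h
      rw [hμ, if_neg (by push_neg; exact h0)]
      field_simp
  ext i
  fin_cases i
  · show p 0 = (μ • (B -ᵥ A) +ᵥ A) 0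
    simp only [PiLp.smul_apply, vsub_eq_sub, vadd_eq_add, PiLp.sub_apply, PiLp.add_apply,
      smul_eq_mul]
    linarith [hc0]
  · show p 1 = (μ • (B -ᵥ A) +ᵥ A) 1
    simp only [PiLp.smul_apply, vsub_eq_sub, vadd_eq_add, PiLp.sub_apply, PiLp.add_apply,
      smul_eq_mul]
    linarith [hc1]


lemma solv_iff (s1 s2 t1 t2 u1 u2 : ℝ)
    (hs10 : s1 ≠ 0) (hs11 : s1 ≠ 1) (hs20 : s2 ≠ 0) (hs21 : s2 ≠ 1)
    (ht10 : t1 ≠ 0) (ht11 : t1 ≠ 1) (ht20 : t2 ≠ 0) (ht21 : t2 ≠ 1)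
    (hu10 : u1 ≠ 0) (hu11 : u1 ≠ 1) (hu20 : u2 ≠ 0) (hu21 : u2 ≠ 1) :
    (∃ P Q R X Y Z : ℝ, ¬(P = 0 ∧ Q = 0 ∧ R = 0 ∧ X = 0 ∧ Y = 0 ∧ Z = 0) ∧
      Q*(1-s1)^2 + R*s1^2 + X*(s1*(1-s1)) = 0 ∧ Q*(1-s2)^2 + R*s2^2 + X*(s2*(1-s2)) = 0 ∧
      P*t1^2 + R*(1-t1)^2 + Y*(t1*(1-t1)) = 0 ∧ P*t2^2 + R*(1-t2)^2 + Y*(t2*(1-t2)) = 0 ∧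
      P*(1-u1)^2 + Q*u1^2 + Z*(u1*(1-u1)) = 0 ∧ P*(1-u2)^2 + Q*u2^2 + Z*(u2*(1-u2)) = 0) ↔
    (s1*s2*t1*t2*u1*u2 = (1-s1)*(1-s2)*(1-t1)*(1-t2)*(1-u1)*(1-u2)
      ∨ s1 = s2 ∨ t1 = t2 ∨ u1 = u2) := by
  have hs11' : (1:ℝ) - s1 ≠ 0 := sub_ne_zero.mpr (Ne.symm hs11)
  have hs21' : (1:ℝ) - s2 ≠ 0 := sub_ne_zero.mpr (Ne.symm hs21)
  have ht11' : (1:ℝ) - t1 ≠ 0 := sub_ne_zero.mpr (Ne.symm ht11)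
  have ht21' : (1:ℝ) - t2 ≠ 0 := sub_ne_zero.mpr (Ne.symm ht21)
  have hu11' : (1:ℝ) - u1 ≠ 0 := sub_ne_zero.mpr (Ne.symm hu11)
  have hu21' : (1:ℝ) - u2 ≠ 0 := sub_ne_zero.mpr (Ne.symm hu21)
  constructor
  · rintro ⟨P, Q, R, X, Y, Z, h0, ea1, ea2, eb1, eb2, ec1, ec2⟩
    by_cases hss : s1 = s2
    · exact Or.inr (Or.inl hss)
    by_cases htt : t1 = t2
    · exact Or.inr (Or.inr (Or.inl htt))
    by_cases huu : u1 = u2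
    · exact Or.inr (Or.inr (Or.inr huu))
    left
    have hss' : s1 - s2 ≠ 0 := sub_ne_zero.mpr hss
    have htt' : t1 - t2 ≠ 0 := sub_ne_zero.mpr htt
    have huu' : u1 - u2 ≠ 0 := sub_ne_zero.mpr huu
    have hRS : R*(s1*s2) = Q*((1-s1)*(1-s2)) := by
      have key : (s1-s2)*(R*(s1*s2) - Q*((1-s1)*(1-s2))) = 0 := by
        linear_combination (s2*(1-s2))*ea1 - (s1*(1-s1))*ea2
      have := mul_eq_zero.mp key
      rcases this with h|h
      · exact absurd h hss'
      · linarith [h]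
    have hPT : P*(t1*t2) = R*((1-t1)*(1-t2)) := by
      have key : (t1-t2)*(P*(t1*t2) - R*((1-t1)*(1-t2))) = 0 := by
        linear_combination (t2*(1-t2))*eb1 - (t1*(1-t1))*eb2
      rcases mul_eq_zero.mp key with h|h
      · exact absurd h htt'
      · linarith [h]
    have hQU : Q*(u1*u2) = P*((1-u1)*(1-u2)) := by
      have key : (u1-u2)*(Q*(u1*u2) - P*((1-u1)*(1-u2))) = 0 := by
        linear_combination (u2*(1-u2))*ec1 - (u1*(1-u1))*ec2
      rcases mul_eq_zero.mp key with h|h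
      · exact absurd h huu'
      · linarith [h]
    -- if Q = 0 then everything is 0
    have allzero : Q = 0 → False := by
      intro hQ
      have hR : R = 0 := by
        have : R*(s1*s2) = 0 := by rw [hRS, hQ]; ring
        rcases mul_eq_zero.mp this with h|h
        · exact h
        · exact absurd h (mul_ne_zero hs10 hs20)
      have hP : P = 0 := by
        have : P*(t1*t2) = 0 := by rw [hPT, hR]; ring
        rcases mul_eq_zero.mp this with h|h
        · exact h
        · exact absurd h (mul_ne_zero ht10 ht20)
      have hX : X = 0 := by
        have : X*(s1*(1-s1)) = 0 := by linear_combination ea1 - (1-s1)^2*hQ - s1^2*hR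
        rcases mul_eq_zero.mp this with h|h
        · exact h
        · exact absurd h (mul_ne_zero hs10 hs11')
      have hY : Y = 0 := by
        have : Y*(t1*(1-t1)) = 0 := by linear_combination eb1 - t1^2*hP - (1-t1)^2*hR
        rcases mul_eq_zero.mp this with h|h
        · exact h
        · exact absurd h (mul_ne_zero ht10 ht11')
      have hZ : Z = 0 := by
        have : Z*(u1*(1-u1)) = 0 := by linear_combination ec1 - (1-u1)^2*hP - u1^2*hQ
        rcases mul_eq_zero.mp this with h|h
        · exact h
        · exact absurd h (mul_ne_zero hu10 hu11')
      exact h0 ⟨hP, hQ, hR, hX, hY, hZ⟩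
    have hQ : Q ≠ 0 := fun h => allzero h
    have hR : R ≠ 0 := by
      intro h
      apply hQ
      have : Q*((1-s1)*(1-s2)) = 0 := by rw [← hRS, h]; ring
      rcases mul_eq_zero.mp this with h'|h'
      · exact h'
      · exact absurd h' (mul_ne_zero hs11' hs21')
    have hP : P ≠ 0 := by
      intro h
      apply hR
      have : R*((1-t1)*(1-t2)) = 0 := by rw [← hPT, h]; ring
      rcases mul_eq_zero.mp this with h'|h'
      · exact h'
      · exact absurd h' (mul_ne_zero ht11' ht21')
    have big : (P*Q*R)*(s1*s2*t1*t2*u1*u2) = (P*Q*R)*((1-s1)*(1-s2)*(1-t1)*(1-t2)*(1-u1)*(1-u2)) := by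
      have h1 : (R*(s1*s2)) * (P*(t1*t2)) * (Q*(u1*u2))
          = (Q*((1-s1)*(1-s2))) * (R*((1-t1)*(1-t2))) * (P*((1-u1)*(1-u2))) := by
        rw [hRS, hPT, hQU]
      linear_combination h1
    exact mul_left_cancel₀ (mul_ne_zero (mul_ne_zero hP hQ) hR) big
  · intro h
    rcases h with h | hss | htt | huu
    · refine ⟨(1-s1)*(1-s2)*(1-t1)*(1-t2)*(u1*u2), s1*s2*(t1*t2)*(u1*u2),
        (1-s1)*(1-s2)*(t1*t2)*(u1*u2), t1*t2*u1*u2*(2*(s1*s2)-s1-s2),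
        (1-s1)*(1-s2)*(u1*u2)*(2*(t1*t2)-t1-t2),
        (1-s1)*(1-s2)*(1-t1)*(1-t2)*(2*(u1*u2)-u1-u2), ?_, by ring, by ring, by ring, by ring,
        by linear_combination (u1^2)*h, by linear_combination (u2^2)*h⟩
      rintro ⟨-, hQ0, -⟩
      exact (mul_ne_zero (mul_ne_zero (mul_ne_zero hs10 hs20) (mul_ne_zero ht10 ht20))
        (mul_ne_zero hu10 hu20)) (by linear_combination hQ0)
    · refine ⟨(1-t1)*(1-t2)*(u1*u2), (1-t1)*(1-t2)*((1-u1)*(1-u2)), t1*t2*(u1*u2),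
        -(((1-t1)*(1-t2)*((1-u1)*(1-u2)))*(1-s1)^2 + (t1*t2*(u1*u2))*s1^2)/(s1*(1-s1)),
        u1*u2*(2*(t1*t2)-t1-t2), (1-t1)*(1-t2)*(2*(u1*u2)-u1-u2),
        ?_, ?_, ?_, by ring, by ring, by ring, by ring⟩
      · rintro ⟨hP0, -⟩
        exact (mul_ne_zero (mul_ne_zero ht11' ht21') (mul_ne_zero hu10 hu20)) (by linear_combination hP0)
      · field_simp
        ring
      · rw [← hss]
        field_simp
        ring
    · refine ⟨s1*s2*(u1*u2), s1*s2*((1-u1)*(1-u2)), (1-s1)*(1-s2)*((1-u1)*(1-u2)),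
        (1-u1)*(1-u2)*(2*(s1*s2)-s1-s2),
        -((s1*s2*(u1*u2))*t1^2 + ((1-s1)*(1-s2)*((1-u1)*(1-u2)))*(1-t1)^2)/(t1*(1-t1)),
        s1*s2*(2*(u1*u2)-u1-u2),
        ?_, by ring, by ring, ?_, ?_, by ring, by ring⟩
      · rintro ⟨hP0, -⟩
        exact (mul_ne_zero (mul_ne_zero hs10 hs20) (mul_ne_zero hu10 hu20)) (by linear_combination hP0)
      · field_simp
        ring
      · rw [← htt]
        field_simp
        ring
    · refine ⟨(1-s1)*(1-s2)*((1-t1)*(1-t2)), s1*s2*(t1*t2), (1-s1)*(1-s2)*(t1*t2),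
        t1*t2*(2*(s1*s2)-s1-s2), (1-s1)*(1-s2)*(2*(t1*t2)-t1-t2),
        -(((1-s1)*(1-s2)*((1-t1)*(1-t2)))*(1-u1)^2 + (s1*s2*(t1*t2))*u1^2)/(u1*(1-u1)),
        ?_, by ring, by ring, by ring, by ring, ?_, ?_⟩
      · rintro ⟨hP0, -⟩
        exact (mul_ne_zero (mul_ne_zero hs11' hs21') (mul_ne_zero ht11' ht21')) (by linear_combination hP0)
      · field_simp
        ring
      · rw [← huu]
        field_simp
        ring

lemma solvD_iff (s1 s2 t1 t2 u1 u2 : ℝ)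
    (hs10 : s1 ≠ 0) (hs11 : s1 ≠ 1) (hs20 : s2 ≠ 0) (hs21 : s2 ≠ 1)
    (ht10 : t1 ≠ 0) (ht11 : t1 ≠ 1) (ht20 : t2 ≠ 0) (ht21 : t2 ≠ 1)
    (hu10 : u1 ≠ 0) (hu11 : u1 ≠ 1) (hu20 : u2 ≠ 0) (hu21 : u2 ≠ 1) :
    (∃ p q r x y z : ℝ, ¬(p = 0 ∧ q = 0 ∧ r = 0 ∧ x = 0 ∧ y = 0 ∧ z = 0) ∧
      q*s1^2 + r*(1-s1)^2 - x*(s1*(1-s1)) = 0 ∧ q*s2^2 + r*(1-s2)^2 - x*(s2*(1-s2)) = 0 ∧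
      p*(1-t1)^2 + r*t1^2 - y*(t1*(1-t1)) = 0 ∧ p*(1-t2)^2 + r*t2^2 - y*(t2*(1-t2)) = 0 ∧
      p*u1^2 + q*(1-u1)^2 - z*(u1*(1-u1)) = 0 ∧ p*u2^2 + q*(1-u2)^2 - z*(u2*(1-u2)) = 0) ↔
    (s1*s2*t1*t2*u1*u2 = (1-s1)*(1-s2)*(1-t1)*(1-t2)*(1-u1)*(1-u2)
      ∨ s1 = s2 ∨ t1 = t2 ∨ u1 = u2) := by
  have H := solv_iff (1-s1) (1-s2) (1-t1) (1-t2) (1-u1) (1-u2)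
    (sub_ne_zero.mpr (Ne.symm hs11)) (fun h => hs10 (by linarith [h]))
    (sub_ne_zero.mpr (Ne.symm hs21)) (fun h => hs20 (by linarith [h]))
    (sub_ne_zero.mpr (Ne.symm ht11)) (fun h => ht10 (by linarith [h]))
    (sub_ne_zero.mpr (Ne.symm ht21)) (fun h => ht20 (by linarith [h]))
    (sub_ne_zero.mpr (Ne.symm hu11)) (fun h => hu10 (by linarith [h]))
    (sub_ne_zero.mpr (Ne.symm hu21)) (fun h => hu20 (by linarith [h]))
  constructor
  · rintro ⟨p, q, r, x, y, z, h0, e1, e2, e3, e4, e5, e6⟩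
    have := H.mp ⟨p, q, r, -x, -y, -z,
      (by simpa only [neg_eq_zero] using h0),
      by linear_combination e1, by linear_combination e2, by linear_combination e3,
      by linear_combination e4, by linear_combination e5, by linear_combination e6⟩
    rcases this with h | h | h | h
    · exact Or.inl (by linear_combination -h)
    · exact Or.inr (Or.inl (by linarith [h]))
    · exact Or.inr (Or.inr (Or.inl (by linarith [h])))
    · exact Or.inr (Or.inr (Or.inr (by linarith [h])))
  · intro h
    have h' : (1-s1)*(1-s2)*(1-t1)*(1-t2)*(1-u1)*(1-u2)
        = (1-(1-s1))*(1-(1-s2))*(1-(1-t1))*(1-(1-t2))*(1-(1-u1))*(1-(1-u2))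
        ∨ (1-s1) = (1-s2) ∨ (1-t1) = (1-t2) ∨ (1-u1) = (1-u2) := by
      rcases h with h | h | h | h
      · exact Or.inl (by linear_combination -h)
      · exact Or.inr (Or.inl (by linarith [h]))
      · exact Or.inr (Or.inr (Or.inl (by linarith [h])))
      · exact Or.inr (Or.inr (Or.inr (by linarith [h])))
    obtain ⟨P, Q, R, X, Y, Z, h0, e1, e2, e3, e4, e5, e6⟩ := H.mpr h'
    exact ⟨P, Q, R, -X, -Y, -Z, (by simpa only [neg_eq_zero] using h0),
      by linear_combination e1, by linear_combination e2, by linear_combination e3,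
      by linear_combination e4, by linear_combination e5, by linear_combination e6⟩


lemma bridgeA (a0 a1 b0 b1 c0 c1 s1 s2 t1 t2 u1 u2 : ℝ)
    (hD : (b0-a0)*(c1-a1) - (b1-a1)*(c0-a0) ≠ 0) :
    (∃ a b c d e f : ℝ, ¬(a = 0 ∧ b = 0 ∧ c = 0 ∧ d = 0 ∧ e = 0 ∧ f = 0) ∧
      a*(b0+s1*(c0-b0))^2 + b*(b0+s1*(c0-b0))*(b1+s1*(c1-b1)) + c*(b1+s1*(c1-b1))^2
        + d*(b0+s1*(c0-b0)) + e*(b1+s1*(c1-b1)) + f = 0 ∧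
      a*(b0+s2*(c0-b0))^2 + b*(b0+s2*(c0-b0))*(b1+s2*(c1-b1)) + c*(b1+s2*(c1-b1))^2
        + d*(b0+s2*(c0-b0)) + e*(b1+s2*(c1-b1)) + f = 0 ∧
      a*(c0+t1*(a0-c0))^2 + b*(c0+t1*(a0-c0))*(c1+t1*(a1-c1)) + c*(c1+t1*(a1-c1))^2
        + d*(c0+t1*(a0-c0)) + e*(c1+t1*(a1-c1)) + f = 0 ∧
      a*(c0+t2*(a0-c0))^2 + b*(c0+t2*(a0-c0))*(c1+t2*(a1-c1)) + c*(c1+t2*(a1-c1))^2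
        + d*(c0+t2*(a0-c0)) + e*(c1+t2*(a1-c1)) + f = 0 ∧
      a*(a0+u1*(b0-a0))^2 + b*(a0+u1*(b0-a0))*(a1+u1*(b1-a1)) + c*(a1+u1*(b1-a1))^2
        + d*(a0+u1*(b0-a0)) + e*(a1+u1*(b1-a1)) + f = 0 ∧
      a*(a0+u2*(b0-a0))^2 + b*(a0+u2*(b0-a0))*(a1+u2*(b1-a1)) + c*(a1+u2*(b1-a1))^2
        + d*(a0+u2*(b0-a0)) + e*(a1+u2*(b1-a1)) + f = 0) ↔
    (∃ P Q R X Y Z : ℝ, ¬(P = 0 ∧ Q = 0 ∧ R = 0 ∧ X = 0 ∧ Y = 0 ∧ Z = 0) ∧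
      Q*(1-s1)^2 + R*s1^2 + X*(s1*(1-s1)) = 0 ∧ Q*(1-s2)^2 + R*s2^2 + X*(s2*(1-s2)) = 0 ∧
      P*t1^2 + R*(1-t1)^2 + Y*(t1*(1-t1)) = 0 ∧ P*t2^2 + R*(1-t2)^2 + Y*(t2*(1-t2)) = 0 ∧
      P*(1-u1)^2 + Q*u1^2 + Z*(u1*(1-u1)) = 0 ∧ P*(1-u2)^2 + Q*u2^2 + Z*(u2*(1-u2)) = 0) := by
  have hD2 : ((b0-a0)*(c1-a1) - (b1-a1)*(c0-a0))^2 ≠ 0 := pow_ne_zero 2 hD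
  constructor
  · rintro ⟨a, b, c, d, e, f, h0, hA1, hA2, hB1, hB2, hC1, hC2⟩
    refine ⟨a*a0^2 + b*a0*a1 + c*a1^2 + d*a0 + e*a1 + f,
      a*b0^2 + b*b0*b1 + c*b1^2 + d*b0 + e*b1 + f,
      a*c0^2 + b*c0*c1 + c*c1^2 + d*c0 + e*c1 + f,
      2*a*b0*c0 + b*(b0*c1+b1*c0) + 2*c*b1*c1 + d*(b0+c0) + e*(b1+c1) + 2*f,
      2*a*c0*a0 + b*(c0*a1+c1*a0) + 2*c*c1*a1 + d*(c0+a0) + e*(c1+a1) + 2*f,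
      2*a*a0*b0 + b*(a0*b1+a1*b0) + 2*c*a1*b1 + d*(a0+b0) + e*(a1+b1) + 2*f,
      ?_, by linear_combination hA1, by linear_combination hA2,
      by linear_combination hB1, by linear_combination hB2,
      by linear_combination hC1, by linear_combination hC2⟩
    rintro ⟨hP, hQ, hR, hX, hY, hZ⟩
    apply h0
    refine ⟨?_, ?_, ?_, ?_, ?_, ?_⟩ <;>
      [ (apply mul_left_cancel₀ hD2 (b := a) (c := 0));
        (apply mul_left_cancel₀ hD2 (b := b) (c := 0));
        (apply mul_left_cancel₀ hD2 (b := c) (c := 0));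
        (apply mul_left_cancel₀ hD2 (b := d) (c := 0));
        (apply mul_left_cancel₀ hD2 (b := e) (c := 0));
        (apply mul_left_cancel₀ hD2 (b := f) (c := 0))]
    · linear_combination (b1-c1)^2*hP + (c1-a1)^2*hQ + (a1-b1)^2*hR + ((c1-a1)*(a1-b1))*hX
        + ((b1-c1)*(a1-b1))*hY + ((b1-c1)*(c1-a1))*hZ
    · linear_combination (2*(b1-c1)*(c0-b0))*hP + (2*(c1-a1)*(a0-c0))*hQ + (2*(a1-b1)*(b0-a0))*hR
        + ((c1-a1)*(b0-a0)+(a0-c0)*(a1-b1))*hX + ((b1-c1)*(b0-a0)+(c0-b0)*(a1-b1))*hY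
        + ((b1-c1)*(a0-c0)+(c0-b0)*(c1-a1))*hZ
    · linear_combination (c0-b0)^2*hP + (a0-c0)^2*hQ + (b0-a0)^2*hR + ((a0-c0)*(b0-a0))*hX
        + ((c0-b0)*(b0-a0))*hY + ((c0-b0)*(a0-c0))*hZ
    · linear_combination (2*(b1-c1)*(b0*c1-b1*c0))*hP + (2*(c1-a1)*(c0*a1-c1*a0))*hQ
        + (2*(a1-b1)*(a0*b1-a1*b0))*hR + ((c1-a1)*(a0*b1-a1*b0)+(c0*a1-c1*a0)*(a1-b1))*hX
        + ((b1-c1)*(a0*b1-a1*b0)+(b0*c1-b1*c0)*(a1-b1))*hY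
        + ((b1-c1)*(c0*a1-c1*a0)+(b0*c1-b1*c0)*(c1-a1))*hZ
    · linear_combination (2*(c0-b0)*(b0*c1-b1*c0))*hP + (2*(a0-c0)*(c0*a1-c1*a0))*hQ
        + (2*(b0-a0)*(a0*b1-a1*b0))*hR + ((a0-c0)*(a0*b1-a1*b0)+(c0*a1-c1*a0)*(b0-a0))*hX
        + ((c0-b0)*(a0*b1-a1*b0)+(b0*c1-b1*c0)*(b0-a0))*hY
        + ((c0-b0)*(c0*a1-c1*a0)+(b0*c1-b1*c0)*(a0-c0))*hZ
    · linear_combination (b0*c1-b1*c0)^2*hP + (c0*a1-c1*a0)^2*hQ + (a0*b1-a1*b0)^2*hR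
        + ((c0*a1-c1*a0)*(a0*b1-a1*b0))*hX + ((b0*c1-b1*c0)*(a0*b1-a1*b0))*hY
        + ((b0*c1-b1*c0)*(c0*a1-c1*a0))*hZ
  · rintro ⟨P, Q, R, X, Y, Z, h0, ea1, ea2, eb1, eb2, ec1, ec2⟩
    refine ⟨P*(b1-c1)^2 + Q*(c1-a1)^2 + R*(a1-b1)^2 + X*((c1-a1)*(a1-b1))
        + Y*((b1-c1)*(a1-b1)) + Z*((b1-c1)*(c1-a1)),
      2*P*(b1-c1)*(c0-b0) + 2*Q*(c1-a1)*(a0-c0) + 2*R*(a1-b1)*(b0-a0)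
        + X*((c1-a1)*(b0-a0)+(a0-c0)*(a1-b1)) + Y*((b1-c1)*(b0-a0)+(c0-b0)*(a1-b1))
        + Z*((b1-c1)*(a0-c0)+(c0-b0)*(c1-a1)),
      P*(c0-b0)^2 + Q*(a0-c0)^2 + R*(b0-a0)^2 + X*((a0-c0)*(b0-a0))
        + Y*((c0-b0)*(b0-a0)) + Z*((c0-b0)*(a0-c0)),
      2*P*(b1-c1)*(b0*c1-b1*c0) + 2*Q*(c1-a1)*(c0*a1-c1*a0) + 2*R*(a1-b1)*(a0*b1-a1*b0)
        + X*((c1-a1)*(a0*b1-a1*b0)+(c0*a1-c1*a0)*(a1-b1))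
        + Y*((b1-c1)*(a0*b1-a1*b0)+(b0*c1-b1*c0)*(a1-b1))
        + Z*((b1-c1)*(c0*a1-c1*a0)+(b0*c1-b1*c0)*(c1-a1)),
      2*P*(c0-b0)*(b0*c1-b1*c0) + 2*Q*(a0-c0)*(c0*a1-c1*a0) + 2*R*(b0-a0)*(a0*b1-a1*b0)
        + X*((a0-c0)*(a0*b1-a1*b0)+(c0*a1-c1*a0)*(b0-a0))
        + Y*((c0-b0)*(a0*b1-a1*b0)+(b0*c1-b1*c0)*(b0-a0))
        + Z*((c0-b0)*(c0*a1-c1*a0)+(b0*c1-b1*c0)*(a0-c0)),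
      P*(b0*c1-b1*c0)^2 + Q*(c0*a1-c1*a0)^2 + R*(a0*b1-a1*b0)^2
        + X*((c0*a1-c1*a0)*(a0*b1-a1*b0)) + Y*((b0*c1-b1*c0)*(a0*b1-a1*b0))
        + Z*((b0*c1-b1*c0)*(c0*a1-c1*a0)),
      ?_,
      by linear_combination (((b0-a0)*(c1-a1) - (b1-a1)*(c0-a0))^2)*ea1,
      by linear_combination (((b0-a0)*(c1-a1) - (b1-a1)*(c0-a0))^2)*ea2,
      by linear_combination (((b0-a0)*(c1-a1) - (b1-a1)*(c0-a0))^2)*eb1,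
      by linear_combination (((b0-a0)*(c1-a1) - (b1-a1)*(c0-a0))^2)*eb2,
      by linear_combination (((b0-a0)*(c1-a1) - (b1-a1)*(c0-a0))^2)*ec1,
      by linear_combination (((b0-a0)*(c1-a1) - (b1-a1)*(c0-a0))^2)*ec2⟩
    rintro ⟨ha, hb, hc, hd, he, hf⟩
    apply h0
    have hP : P * ((b0-a0)*(c1-a1) - (b1-a1)*(c0-a0))^2 = 0 := by
      linear_combination a0^2*ha + a0*a1*hb + a1^2*hc + a0*hd + a1*he + hf
    have hQ : Q * ((b0-a0)*(c1-a1) - (b1-a1)*(c0-a0))^2 = 0 := by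
      linear_combination b0^2*ha + b0*b1*hb + b1^2*hc + b0*hd + b1*he + hf
    have hR : R * ((b0-a0)*(c1-a1) - (b1-a1)*(c0-a0))^2 = 0 := by
      linear_combination c0^2*ha + c0*c1*hb + c1^2*hc + c0*hd + c1*he + hf
    have hX : X * ((b0-a0)*(c1-a1) - (b1-a1)*(c0-a0))^2 = 0 := by
      linear_combination (b0+c0)^2*ha + (b0+c0)*(b1+c1)*hb + (b1+c1)^2*hc + 2*(b0+c0)*hd
        + 2*(b1+c1)*he + 4*hf - hQ - hR
    have hY : Y * ((b0-a0)*(c1-a1) - (b1-a1)*(c0-a0))^2 = 0 := by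
      linear_combination (c0+a0)^2*ha + (c0+a0)*(c1+a1)*hb + (c1+a1)^2*hc + 2*(c0+a0)*hd
        + 2*(c1+a1)*he + 4*hf - hP - hR
    have hZ : Z * ((b0-a0)*(c1-a1) - (b1-a1)*(c0-a0))^2 = 0 := by
      linear_combination (a0+b0)^2*ha + (a0+b0)*(a1+b1)*hb + (a1+b1)^2*hc + 2*(a0+b0)*hd
        + 2*(a1+b1)*he + 4*hf - hP - hQ
    exact ⟨by rcases mul_eq_zero.mp hP with h|h; exact h; exact absurd h hD2,
      by rcases mul_eq_zero.mp hQ with h|h; exact h; exact absurd h hD2,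
      by rcases mul_eq_zero.mp hR with h|h; exact h; exact absurd h hD2,
      by rcases mul_eq_zero.mp hX with h|h; exact h; exact absurd h hD2,
      by rcases mul_eq_zero.mp hY with h|h; exact h; exact absurd h hD2,
      by rcases mul_eq_zero.mp hZ with h|h; exact h; exact absurd h hD2⟩

lemma quad2 (Q : QuadraticForm ℝ (Fin 3 → ℝ)) (a c : ℝ) (U V : Fin 3 → ℝ) :
    Q (a • U + c • V) = a^2 * Q U + c^2 * Q V + a*c*(Q (U+V) - Q U - Q V) := by
  obtain ⟨B, hB⟩ := Q.exists_companion
  have hBUV : Q (U + V) - Q U - Q V = B U V := by rw [hB]; ring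
  have h1 : Q (a • U + c • V) = Q (a•U) + Q (c•V) + B (a•U) (c•V) := hB _ _
  rw [h1, QuadraticMap.map_smul, QuadraticMap.map_smul, hBUV]
  simp only [map_smul, LinearMap.smul_apply, smul_eq_mul]
  ring

lemma quad3 (Q : QuadraticForm ℝ (Fin 3 → ℝ)) (a b c : ℝ) (U V W : Fin 3 → ℝ) :
    Q (a • U + b • V + c • W) = a^2 * Q U + b^2 * Q V + c^2 * Q W
      + b*c*(Q (V+W) - Q V - Q W) + a*c*(Q (U+W) - Q U - Q W)
      + a*b*(Q (U+V) - Q U - Q V) := by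
  obtain ⟨B, hB⟩ := Q.exists_companion
  have hBVW : Q (V + W) - Q V - Q W = B V W := by rw [hB]; ring
  have hBUW : Q (U + W) - Q U - Q W = B U W := by rw [hB]; ring
  have hBUV : Q (U + V) - Q U - Q V = B U V := by rw [hB]; ring
  have h1 : Q (a • U + (b • V + c • W)) = Q (a•U) + Q (b•V + c•W) + B (a•U) (b•V + c•W) := hB _ _
  have h2 : Q (b•V + c•W) = Q (b•V) + Q (c•W) + B (b•V) (c•W) := hB _ _
  rw [add_assoc, h1, h2, QuadraticMap.map_smul, QuadraticMap.map_smul, QuadraticMap.map_smul,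
    hBVW, hBUW, hBUV]
  simp only [map_smul, map_add, LinearMap.smul_apply, LinearMap.add_apply, smul_eq_mul]
  ring

noncomputable def phi (w0 w1 : ℝ) : (Fin 3 → ℝ) →ₗ[ℝ] ℝ where
  toFun v := v 0 * w0 + v 1 * w1 + v 2
  map_add' u v := by simp [Pi.add_apply]; ring
  map_smul' a v := by simp [Pi.smul_apply, smul_eq_mul]; ring

noncomputable def mkQ (p q r x y z : ℝ) (φA φB φC : (Fin 3 → ℝ) →ₗ[ℝ] ℝ) :
    QuadraticForm ℝ (Fin 3 → ℝ) :=
  LinearMap.BilinMap.toQuadraticMap (LinearMap.mk₂ ℝ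
    (fun v w => p*(φA v*φA w) + q*(φB v*φB w) + r*(φC v*φC w)
      + x*(φB v*φC w) + y*(φA v*φC w) + z*(φA v*φB w))
    (by intros; simp [map_add]; ring) (by intros; simp [map_smul, smul_eq_mul]; ring)
    (by intros; simp [map_add]; ring) (by intros; simp [map_smul, smul_eq_mul]; ring))

/-- evaluation of the quadratic form at a cevian line -/
lemma cevianEq (Qf : QuadraticForm ℝ (Fin 3 → ℝ)) (P R : Pt) (U V : Fin 3 → ℝ) (σ : ℝ)
    (hvec : (![P 1 - R 1, R 0 - P 0, P 0 * R 1 - P 1 * R 0] : Fin 3 → ℝ)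
      = (-σ) • U + (1-σ) • V)
    (hPR : R ≠ P)
    (hQ : ∀ L, IsLineCoord P R L → Qf L = 0) :
    σ^2 * Qf U + (1-σ)^2 * Qf V - σ*(1-σ)*(Qf (U+V) - Qf U - Qf V) = 0 := by
  have hiso : IsLineCoord P R ![P 1 - R 1, R 0 - P 0, P 0 * R 1 - P 1 * R 0] := by
    refine ⟨?_, by simp; ring, by simp; ring⟩
    intro h
    simp only [Matrix.cons_val_zero, Matrix.cons_val_one, Matrix.head_cons, Prod.mk.injEq] at h
    apply hPR
    ext i
    fin_cases i
    · show R 0 = P 0; linarith [h.2]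
    · show R 1 = P 1; linarith [h.1]
  have h0 := hQ _ hiso
  rw [hvec, quad2] at h0
  linear_combination h0


lemma bridgeB (A B C A₁ A₂ B₁ B₂ C₁ C₂ : Pt) (s1 s2 t1 t2 u1 u2 : ℝ)
    (hD : (B 0 - A 0)*(C 1 - A 1) - (B 1 - A 1)*(C 0 - A 0) ≠ 0)
    (hA1x : A₁ 0 = B 0 + s1*(C 0 - B 0)) (hA1y : A₁ 1 = B 1 + s1*(C 1 - B 1))
    (hA2x : A₂ 0 = B 0 + s2*(C 0 - B 0)) (hA2y : A₂ 1 = B 1 + s2*(C 1 - B 1))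
    (hB1x : B₁ 0 = C 0 + t1*(A 0 - C 0)) (hB1y : B₁ 1 = C 1 + t1*(A 1 - C 1))
    (hB2x : B₂ 0 = C 0 + t2*(A 0 - C 0)) (hB2y : B₂ 1 = C 1 + t2*(A 1 - C 1))
    (hC1x : C₁ 0 = A 0 + u1*(B 0 - A 0)) (hC1y : C₁ 1 = A 1 + u1*(B 1 - A 1))
    (hC2x : C₂ 0 = A 0 + u2*(B 0 - A 0)) (hC2y : C₂ 1 = A 1 + u2*(B 1 - A 1))
    (hs10 : s1 ≠ 0) (hs20 : s2 ≠ 0) (ht10 : t1 ≠ 0) (ht20 : t2 ≠ 0)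
    (hu10 : u1 ≠ 0) (hu20 : u2 ≠ 0)
    (hA1A : A₁ ≠ A) (hA2A : A₂ ≠ A) (hB1B : B₁ ≠ B) (hB2B : B₂ ≠ B)
    (hC1C : C₁ ≠ C) (hC2C : C₂ ≠ C) :
    TouchCommonConic [(A, A₁), (A, A₂), (B, B₁), (B, B₂), (C, C₁), (C, C₂)] ↔
    (∃ p q r x y z : ℝ, ¬(p = 0 ∧ q = 0 ∧ r = 0 ∧ x = 0 ∧ y = 0 ∧ z = 0) ∧
      q*s1^2 + r*(1-s1)^2 - x*(s1*(1-s1)) = 0 ∧ q*s2^2 + r*(1-s2)^2 - x*(s2*(1-s2)) = 0 ∧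
      p*(1-t1)^2 + r*t1^2 - y*(t1*(1-t1)) = 0 ∧ p*(1-t2)^2 + r*t2^2 - y*(t2*(1-t2)) = 0 ∧
      p*u1^2 + q*(1-u1)^2 - z*(u1*(1-u1)) = 0 ∧ p*u2^2 + q*(1-u2)^2 - z*(u2*(1-u2)) = 0) := by
  constructor
  · rintro ⟨Qf, hQ0, hvan⟩
    have hvA1 : (![A 1 - A₁ 1, A₁ 0 - A 0, A 0 * A₁ 1 - A 1 * A₁ 0] : Fin 3 → ℝ)
        = (-s1) • (![C 1 - A 1, A 0 - C 0, C 0*A 1 - C 1*A 0] : Fin 3 → ℝ) + (1-s1) • (![A 1 - B 1, B 0 - A 0, A 0*B 1 - A 1*B 0] : Fin 3 → ℝ) := by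
      funext i; fin_cases i
      · simp; linear_combination -hA1y
      · simp; linear_combination hA1x
      · simp; linear_combination (A 0)*hA1y - (A 1)*hA1x

    have hvA2 : (![A 1 - A₂ 1, A₂ 0 - A 0, A 0 * A₂ 1 - A 1 * A₂ 0] : Fin 3 → ℝ)
        = (-s2) • (![C 1 - A 1, A 0 - C 0, C 0*A 1 - C 1*A 0] : Fin 3 → ℝ) + (1-s2) • (![A 1 - B 1, B 0 - A 0, A 0*B 1 - A 1*B 0] : Fin 3 → ℝ) := by
      funext i; fin_cases i
      · simp; linear_combination -hA2y
      · simp; linear_combination hA2x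
      · simp; linear_combination (A 0)*hA2y - (A 1)*hA2x

    have hvB1 : (![B 1 - B₁ 1, B₁ 0 - B 0, B 0 * B₁ 1 - B 1 * B₁ 0] : Fin 3 → ℝ)
        = (-t1) • (![A 1 - B 1, B 0 - A 0, A 0*B 1 - A 1*B 0] : Fin 3 → ℝ) + (1-t1) • (![B 1 - C 1, C 0 - B 0, B 0*C 1 - B 1*C 0] : Fin 3 → ℝ) := by
      funext i; fin_cases i
      · simp; linear_combination -hB1y
      · simp; linear_combination hB1x
      · simp; linear_combination (B 0)*hB1y - (B 1)*hB1x

    have hvB2 : (![B 1 - B₂ 1, B₂ 0 - B 0, B 0 * B₂ 1 - B 1 * B₂ 0] : Fin 3 → ℝ)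
        = (-t2) • (![A 1 - B 1, B 0 - A 0, A 0*B 1 - A 1*B 0] : Fin 3 → ℝ) + (1-t2) • (![B 1 - C 1, C 0 - B 0, B 0*C 1 - B 1*C 0] : Fin 3 → ℝ) := by
      funext i; fin_cases i
      · simp; linear_combination -hB2y
      · simp; linear_combination hB2x
      · simp; linear_combination (B 0)*hB2y - (B 1)*hB2x

    have hvC1 : (![C 1 - C₁ 1, C₁ 0 - C 0, C 0 * C₁ 1 - C 1 * C₁ 0] : Fin 3 → ℝ)
        = (-u1) • (![B 1 - C 1, C 0 - B 0, B 0*C 1 - B 1*C 0] : Fin 3 → ℝ) + (1-u1) • (![C 1 - A 1, A 0 - C 0, C 0*A 1 - C 1*A 0] : Fin 3 → ℝ) := by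
      funext i; fin_cases i
      · simp; linear_combination -hC1y
      · simp; linear_combination hC1x
      · simp; linear_combination (C 0)*hC1y - (C 1)*hC1x

    have hvC2 : (![C 1 - C₂ 1, C₂ 0 - C 0, C 0 * C₂ 1 - C 1 * C₂ 0] : Fin 3 → ℝ)
        = (-u2) • (![B 1 - C 1, C 0 - B 0, B 0*C 1 - B 1*C 0] : Fin 3 → ℝ) + (1-u2) • (![C 1 - A 1, A 0 - C 0, C 0*A 1 - C 1*A 0] : Fin 3 → ℝ) := by
      funext i; fin_cases i
      · simp; linear_combination -hC2y
      · simp; linear_combination hC2x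
      · simp; linear_combination (C 0)*hC2y - (C 1)*hC2x

    have eA1 := cevianEq Qf A A₁ (![C 1 - A 1, A 0 - C 0, C 0*A 1 - C 1*A 0] : Fin 3 → ℝ) (![A 1 - B 1, B 0 - A 0, A 0*B 1 - A 1*B 0] : Fin 3 → ℝ) s1 hvA1 hA1A (fun L hL => hvan (A, A₁) (by simp) L hL)
    have eA2 := cevianEq Qf A A₂ (![C 1 - A 1, A 0 - C 0, C 0*A 1 - C 1*A 0] : Fin 3 → ℝ) (![A 1 - B 1, B 0 - A 0, A 0*B 1 - A 1*B 0] : Fin 3 → ℝ) s2 hvA2 hA2A (fun L hL => hvan (A, A₂) (by simp) L hL)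
    have eB1 := cevianEq Qf B B₁ (![A 1 - B 1, B 0 - A 0, A 0*B 1 - A 1*B 0] : Fin 3 → ℝ) (![B 1 - C 1, C 0 - B 0, B 0*C 1 - B 1*C 0] : Fin 3 → ℝ) t1 hvB1 hB1B (fun L hL => hvan (B, B₁) (by simp) L hL)
    have eB2 := cevianEq Qf B B₂ (![A 1 - B 1, B 0 - A 0, A 0*B 1 - A 1*B 0] : Fin 3 → ℝ) (![B 1 - C 1, C 0 - B 0, B 0*C 1 - B 1*C 0] : Fin 3 → ℝ) t2 hvB2 hB2B (fun L hL => hvan (B, B₂) (by simp) L hL)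
    have eC1 := cevianEq Qf C C₁ (![B 1 - C 1, C 0 - B 0, B 0*C 1 - B 1*C 0] : Fin 3 → ℝ) (![C 1 - A 1, A 0 - C 0, C 0*A 1 - C 1*A 0] : Fin 3 → ℝ) u1 hvC1 hC1C (fun L hL => hvan (C, C₁) (by simp) L hL)
    have eC2 := cevianEq Qf C C₂ (![B 1 - C 1, C 0 - B 0, B 0*C 1 - B 1*C 0] : Fin 3 → ℝ) (![C 1 - A 1, A 0 - C 0, C 0*A 1 - C 1*A 0] : Fin 3 → ℝ) u2 hvC2 hC2C (fun L hL => hvan (C, C₂) (by simp) L hL)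
    refine ⟨Qf (![B 1 - C 1, C 0 - B 0, B 0*C 1 - B 1*C 0] : Fin 3 → ℝ), Qf (![C 1 - A 1, A 0 - C 0, C 0*A 1 - C 1*A 0] : Fin 3 → ℝ), Qf (![A 1 - B 1, B 0 - A 0, A 0*B 1 - A 1*B 0] : Fin 3 → ℝ),
      Qf ((![C 1 - A 1, A 0 - C 0, C 0*A 1 - C 1*A 0] : Fin 3 → ℝ) + (![A 1 - B 1, B 0 - A 0, A 0*B 1 - A 1*B 0] : Fin 3 → ℝ)) - Qf (![C 1 - A 1, A 0 - C 0, C 0*A 1 - C 1*A 0] : Fin 3 → ℝ) - Qf (![A 1 - B 1, B 0 - A 0, A 0*B 1 - A 1*B 0] : Fin 3 → ℝ),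
      Qf ((![A 1 - B 1, B 0 - A 0, A 0*B 1 - A 1*B 0] : Fin 3 → ℝ) + (![B 1 - C 1, C 0 - B 0, B 0*C 1 - B 1*C 0] : Fin 3 → ℝ)) - Qf (![A 1 - B 1, B 0 - A 0, A 0*B 1 - A 1*B 0] : Fin 3 → ℝ) - Qf (![B 1 - C 1, C 0 - B 0, B 0*C 1 - B 1*C 0] : Fin 3 → ℝ),
      Qf ((![B 1 - C 1, C 0 - B 0, B 0*C 1 - B 1*C 0] : Fin 3 → ℝ) + (![C 1 - A 1, A 0 - C 0, C 0*A 1 - C 1*A 0] : Fin 3 → ℝ)) - Qf (![B 1 - C 1, C 0 - B 0, B 0*C 1 - B 1*C 0] : Fin 3 → ℝ) - Qf (![C 1 - A 1, A 0 - C 0, C 0*A 1 - C 1*A 0] : Fin 3 → ℝ), ?_,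
      by linear_combination eA1, by linear_combination eA2,
      by linear_combination eB1, by linear_combination eB2,
      by linear_combination eC1, by linear_combination eC2⟩
    rintro ⟨hp, hq, hr, hx, hy, hz⟩
    apply hQ0
    have hallv : ∀ v : Fin 3 → ℝ, Qf v = 0 := by
      intro v
      have key : ((B 0 - A 0)*(C 1 - A 1) - (B 1 - A 1)*(C 0 - A 0)) • v
          = (v 0*A 0 + v 1*A 1 + v 2) • (![B 1 - C 1, C 0 - B 0, B 0*C 1 - B 1*C 0] : Fin 3 → ℝ) + (v 0*B 0 + v 1*B 1 + v 2) • (![C 1 - A 1, A 0 - C 0, C 0*A 1 - C 1*A 0] : Fin 3 → ℝ)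
            + (v 0*C 0 + v 1*C 1 + v 2) • (![A 1 - B 1, B 0 - A 0, A 0*B 1 - A 1*B 0] : Fin 3 → ℝ) := by
        funext i; fin_cases i
        · simp; ring
        · simp; ring
        · simp; ring
      have hyy : Qf ((![B 1 - C 1, C 0 - B 0, B 0*C 1 - B 1*C 0] : Fin 3 → ℝ) + (![A 1 - B 1, B 0 - A 0, A 0*B 1 - A 1*B 0] : Fin 3 → ℝ)) - Qf (![B 1 - C 1, C 0 - B 0, B 0*C 1 - B 1*C 0] : Fin 3 → ℝ) - Qf (![A 1 - B 1, B 0 - A 0, A 0*B 1 - A 1*B 0] : Fin 3 → ℝ) = 0 := by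
        rw [add_comm (![B 1 - C 1, C 0 - B 0, B 0*C 1 - B 1*C 0] : Fin 3 → ℝ) (![A 1 - B 1, B 0 - A 0, A 0*B 1 - A 1*B 0] : Fin 3 → ℝ)]; linear_combination hy
      have h2 : Qf (((B 0 - A 0)*(C 1 - A 1) - (B 1 - A 1)*(C 0 - A 0)) • v) = 0 := by
        rw [key, quad3]
        linear_combination (v 0*A 0 + v 1*A 1 + v 2)^2*hp + (v 0*B 0 + v 1*B 1 + v 2)^2*hq
          + (v 0*C 0 + v 1*C 1 + v 2)^2*hr
          + ((v 0*B 0 + v 1*B 1 + v 2)*(v 0*C 0 + v 1*C 1 + v 2))*hx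
          + ((v 0*A 0 + v 1*A 1 + v 2)*(v 0*C 0 + v 1*C 1 + v 2))*hyy
          + ((v 0*A 0 + v 1*A 1 + v 2)*(v 0*B 0 + v 1*B 1 + v 2))*hz
      rw [QuadraticMap.map_smul] at h2
      rcases mul_eq_zero.mp h2 with h3 | h3
      · rcases mul_eq_zero.mp h3 with h4 | h4 <;> exact absurd h4 hD
      · exact h3
    ext v
    simp [hallv v]
  · rintro ⟨p, q, r, x, y, z, h0, e1, e2, e3, e4, e5, e6⟩
    refine ⟨mkQ p q r x y z (phi (A 0) (A 1)) (phi (B 0) (B 1)) (phi (C 0) (C 1)), ?_, ?_⟩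
    · intro h
      apply h0
      have hev : ∀ v : Fin 3 → ℝ,
          p*((v 0*A 0+v 1*A 1+v 2)*(v 0*A 0+v 1*A 1+v 2))
          + q*((v 0*B 0+v 1*B 1+v 2)*(v 0*B 0+v 1*B 1+v 2))
          + r*((v 0*C 0+v 1*C 1+v 2)*(v 0*C 0+v 1*C 1+v 2))
          + x*((v 0*B 0+v 1*B 1+v 2)*(v 0*C 0+v 1*C 1+v 2))
          + y*((v 0*A 0+v 1*A 1+v 2)*(v 0*C 0+v 1*C 1+v 2))
          + z*((v 0*A 0+v 1*A 1+v 2)*(v 0*B 0+v 1*B 1+v 2)) = 0 := by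
        intro v
        have h1 := DFunLike.congr_fun h v
        rw [QuadraticMap.zero_apply] at h1
        exact h1
      have hvFA := hev (![B 1 - C 1, C 0 - B 0, B 0*C 1 - B 1*C 0] : Fin 3 → ℝ)
      have hvFB := hev (![C 1 - A 1, A 0 - C 0, C 0*A 1 - C 1*A 0] : Fin 3 → ℝ)
      have hvFC := hev (![A 1 - B 1, B 0 - A 0, A 0*B 1 - A 1*B 0] : Fin 3 → ℝ)
      have hvAB := hev ((![B 1 - C 1, C 0 - B 0, B 0*C 1 - B 1*C 0] : Fin 3 → ℝ) + (![C 1 - A 1, A 0 - C 0, C 0*A 1 - C 1*A 0] : Fin 3 → ℝ))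
      have hvAC := hev ((![B 1 - C 1, C 0 - B 0, B 0*C 1 - B 1*C 0] : Fin 3 → ℝ) + (![A 1 - B 1, B 0 - A 0, A 0*B 1 - A 1*B 0] : Fin 3 → ℝ))
      have hvBC := hev ((![C 1 - A 1, A 0 - C 0, C 0*A 1 - C 1*A 0] : Fin 3 → ℝ) + (![A 1 - B 1, B 0 - A 0, A 0*B 1 - A 1*B 0] : Fin 3 → ℝ))
      simp only [Pi.add_apply, Matrix.cons_val_zero, Matrix.cons_val_one, Matrix.head_cons,
        Matrix.cons_val_two, Matrix.tail_cons] at hvFA hvFB hvFC hvAB hvAC hvBC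
      have hD2 : ((B 0 - A 0)*(C 1 - A 1) - (B 1 - A 1)*(C 0 - A 0))^2 ≠ 0 := pow_ne_zero 2 hD
      have hp : p = 0 := by
        apply mul_left_cancel₀ hD2 (b := p) (c := 0)
        linear_combination hvFA
      have hq : q = 0 := by
        apply mul_left_cancel₀ hD2 (b := q) (c := 0)
        linear_combination hvFB
      have hr : r = 0 := by
        apply mul_left_cancel₀ hD2 (b := r) (c := 0)
        linear_combination hvFC
      refine ⟨hp, hq, hr, ?_, ?_, ?_⟩
      · apply mul_left_cancel₀ hD2 (b := x) (c := 0)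
        linear_combination hvBC - ((B 0 - A 0)*(C 1 - A 1) - (B 1 - A 1)*(C 0 - A 0))^2*hq
          - ((B 0 - A 0)*(C 1 - A 1) - (B 1 - A 1)*(C 0 - A 0))^2*hr
      · apply mul_left_cancel₀ hD2 (b := y) (c := 0)
        linear_combination hvAC - ((B 0 - A 0)*(C 1 - A 1) - (B 1 - A 1)*(C 0 - A 0))^2*hp
          - ((B 0 - A 0)*(C 1 - A 1) - (B 1 - A 1)*(C 0 - A 0))^2*hr
      · apply mul_left_cancel₀ hD2 (b := z) (c := 0)
        linear_combination hvAB - ((B 0 - A 0)*(C 1 - A 1) - (B 1 - A 1)*(C 0 - A 0))^2*hp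
          - ((B 0 - A 0)*(C 1 - A 1) - (B 1 - A 1)*(C 0 - A 0))^2*hq
    · intro pq hpq L hL
      simp only [List.mem_cons, List.not_mem_nil, or_false] at hpq
      have hQL : mkQ p q r x y z (phi (A 0) (A 1)) (phi (B 0) (B 1)) (phi (C 0) (C 1)) L
          = p*((L 0*A 0+L 1*A 1+L 2)*(L 0*A 0+L 1*A 1+L 2))
          + q*((L 0*B 0+L 1*B 1+L 2)*(L 0*B 0+L 1*B 1+L 2))
          + r*((L 0*C 0+L 1*C 1+L 2)*(L 0*C 0+L 1*C 1+L 2))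
          + x*((L 0*B 0+L 1*B 1+L 2)*(L 0*C 0+L 1*C 1+L 2))
          + y*((L 0*A 0+L 1*A 1+L 2)*(L 0*C 0+L 1*C 1+L 2))
          + z*((L 0*A 0+L 1*A 1+L 2)*(L 0*B 0+L 1*B 1+L 2)) := rfl
      rcases hpq with h | h | h | h | h | h <;> subst h
      · replace hL : IsLineCoord A A₁ L := hL
        obtain ⟨-, hLP, hLF⟩ := hL
        rw [hA1x, hA1y] at hLF
        have key : s1^2 * (mkQ p q r x y z (phi (A 0) (A 1)) (phi (B 0) (B 1)) (phi (C 0) (C 1)) L) = 0 := by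
          rw [hQL]
          linear_combination (L 0*B 0+L 1*B 1+L 2)^2 * e1
            + (r*((L 0*C 0+L 1*C 1+L 2)*s1 - (1-s1)*(L 0*B 0+L 1*B 1+L 2))
               + x*(L 0*B 0+L 1*B 1+L 2)*s1) * hLF
            + s1^2*(p*(L 0*A 0+L 1*A 1+L 2) + y*(L 0*C 0+L 1*C 1+L 2)
               + z*(L 0*B 0+L 1*B 1+L 2)) * hLP
        rcases mul_eq_zero.mp key with h' | h'
        · exact absurd h' (pow_ne_zero 2 hs10)
        · exact h'
      · replace hL : IsLineCoord A A₂ L := hL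
        obtain ⟨-, hLP, hLF⟩ := hL
        rw [hA2x, hA2y] at hLF
        have key : s2^2 * (mkQ p q r x y z (phi (A 0) (A 1)) (phi (B 0) (B 1)) (phi (C 0) (C 1)) L) = 0 := by
          rw [hQL]
          linear_combination (L 0*B 0+L 1*B 1+L 2)^2 * e2
            + (r*((L 0*C 0+L 1*C 1+L 2)*s2 - (1-s2)*(L 0*B 0+L 1*B 1+L 2))
               + x*(L 0*B 0+L 1*B 1+L 2)*s2) * hLF
            + s2^2*(p*(L 0*A 0+L 1*A 1+L 2) + y*(L 0*C 0+L 1*C 1+L 2)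
               + z*(L 0*B 0+L 1*B 1+L 2)) * hLP
        rcases mul_eq_zero.mp key with h' | h'
        · exact absurd h' (pow_ne_zero 2 hs20)
        · exact h'
      · replace hL : IsLineCoord B B₁ L := hL
        obtain ⟨-, hLP, hLF⟩ := hL
        rw [hB1x, hB1y] at hLF
        have key : t1^2 * (mkQ p q r x y z (phi (A 0) (A 1)) (phi (B 0) (B 1)) (phi (C 0) (C 1)) L) = 0 := by
          rw [hQL]
          linear_combination (L 0*C 0+L 1*C 1+L 2)^2 * e3
            + (p*((L 0*A 0+L 1*A 1+L 2)*t1 - (1-t1)*(L 0*C 0+L 1*C 1+L 2))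
               + y*(L 0*C 0+L 1*C 1+L 2)*t1) * hLF
            + t1^2*(q*(L 0*B 0+L 1*B 1+L 2) + x*(L 0*C 0+L 1*C 1+L 2)
               + z*(L 0*A 0+L 1*A 1+L 2)) * hLP
        rcases mul_eq_zero.mp key with h' | h'
        · exact absurd h' (pow_ne_zero 2 ht10)
        · exact h'
      · replace hL : IsLineCoord B B₂ L := hL
        obtain ⟨-, hLP, hLF⟩ := hL
        rw [hB2x, hB2y] at hLF
        have key : t2^2 * (mkQ p q r x y z (phi (A 0) (A 1)) (phi (B 0) (B 1)) (phi (C 0) (C 1)) L) = 0 := by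
          rw [hQL]
          linear_combination (L 0*C 0+L 1*C 1+L 2)^2 * e4
            + (p*((L 0*A 0+L 1*A 1+L 2)*t2 - (1-t2)*(L 0*C 0+L 1*C 1+L 2))
               + y*(L 0*C 0+L 1*C 1+L 2)*t2) * hLF
            + t2^2*(q*(L 0*B 0+L 1*B 1+L 2) + x*(L 0*C 0+L 1*C 1+L 2)
               + z*(L 0*A 0+L 1*A 1+L 2)) * hLP
        rcases mul_eq_zero.mp key with h' | h'
        · exact absurd h' (pow_ne_zero 2 ht20)
        · exact h'
      · replace hL : IsLineCoord C C₁ L := hL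
        obtain ⟨-, hLP, hLF⟩ := hL
        rw [hC1x, hC1y] at hLF
        have key : u1^2 * (mkQ p q r x y z (phi (A 0) (A 1)) (phi (B 0) (B 1)) (phi (C 0) (C 1)) L) = 0 := by
          rw [hQL]
          linear_combination (L 0*A 0+L 1*A 1+L 2)^2 * e5
            + (q*((L 0*B 0+L 1*B 1+L 2)*u1 - (1-u1)*(L 0*A 0+L 1*A 1+L 2))
               + z*(L 0*A 0+L 1*A 1+L 2)*u1) * hLF
            + u1^2*(r*(L 0*C 0+L 1*C 1+L 2) + x*(L 0*B 0+L 1*B 1+L 2)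
               + y*(L 0*A 0+L 1*A 1+L 2)) * hLP
        rcases mul_eq_zero.mp key with h' | h'
        · exact absurd h' (pow_ne_zero 2 hu10)
        · exact h'
      · replace hL : IsLineCoord C C₂ L := hL
        obtain ⟨-, hLP, hLF⟩ := hL
        rw [hC2x, hC2y] at hLF
        have key : u2^2 * (mkQ p q r x y z (phi (A 0) (A 1)) (phi (B 0) (B 1)) (phi (C 0) (C 1)) L) = 0 := by
          rw [hQL]
          linear_combination (L 0*A 0+L 1*A 1+L 2)^2 * e6
            + (q*((L 0*B 0+L 1*B 1+L 2)*u2 - (1-u2)*(L 0*A 0+L 1*A 1+L 2))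
               + z*(L 0*A 0+L 1*A 1+L 2)*u2) * hLF
            + u2^2*(r*(L 0*C 0+L 1*C 1+L 2) + x*(L 0*B 0+L 1*B 1+L 2)
               + y*(L 0*A 0+L 1*A 1+L 2)) * hLP
        rcases mul_eq_zero.mp key with h' | h'
        · exact absurd h' (pow_ne_zero 2 hu20)
        · exact h'


/-- Theorem 1, (1) ⇔ (3): the six cevian feet are conconic iff the six cevian lines
touch a common conic. -/
theorem cevian_feet_conconic_iff_touch_common_conic
    (A B C A₁ A₂ B₁ B₂ C₁ C₂ : Pt)
    (hABC : AffineIndependent ℝ ![A, B, C])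
    (hA₁ : A₁ ∈ line[ℝ, B, C]) (hA₂ : A₂ ∈ line[ℝ, B, C])
    (hB₁ : B₁ ∈ line[ℝ, C, A]) (hB₂ : B₂ ∈ line[ℝ, C, A])
    (hC₁ : C₁ ∈ line[ℝ, A, B]) (hC₂ : C₂ ∈ line[ℝ, A, B])
    (hne : ∀ P ∈ ({A₁, A₂, B₁, B₂, C₁, C₂} : Set Pt), P ≠ A ∧ P ≠ B ∧ P ≠ C) :
    Conconic {A₁, A₂, B₁, B₂, C₁, C₂} ↔
      TouchCommonConic [(A, A₁), (A, A₂), (B, B₁), (B, B₂), (C, C₁), (C, C₂)] := by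
  have hD := det_ne_zero A B C hABC
  obtain ⟨s1, hA1x, hA1y⟩ := mem_line_param B C A₁ hA₁
  obtain ⟨s2, hA2x, hA2y⟩ := mem_line_param B C A₂ hA₂
  obtain ⟨t1, hB1x, hB1y⟩ := mem_line_param C A B₁ hB₁
  obtain ⟨t2, hB2x, hB2y⟩ := mem_line_param C A B₂ hB₂
  obtain ⟨u1, hC1x, hC1y⟩ := mem_line_param A B C₁ hC₁
  obtain ⟨u2, hC2x, hC2y⟩ := mem_line_param A B C₂ hC₂
  obtain ⟨hA1A, hA1B, hA1C⟩ := hne A₁ (by simp)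
  obtain ⟨hA2A, hA2B, hA2C⟩ := hne A₂ (by simp)
  obtain ⟨hB1A, hB1B, hB1C⟩ := hne B₁ (by simp)
  obtain ⟨hB2A, hB2B, hB2C⟩ := hne B₂ (by simp)
  obtain ⟨hC1A, hC1B, hC1C⟩ := hne C₁ (by simp)
  obtain ⟨hC2A, hC2B, hC2C⟩ := hne C₂ (by simp)
  have mkeq : ∀ (P Q : Pt), P 0 = Q 0 → P 1 = Q 1 → P = Q := by
    intro P Q h0 h1
    ext i
    fin_cases i
    · show P 0 = Q 0; exact h0
    · show P 1 = Q 1; exact h1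
  have hs10 : s1 ≠ 0 := fun h => hA1B (mkeq _ _ (by rw [hA1x, h]; ring) (by rw [hA1y, h]; ring))
  have hs11 : s1 ≠ 1 := fun h => hA1C (mkeq _ _ (by rw [hA1x, h]; ring) (by rw [hA1y, h]; ring))
  have hs20 : s2 ≠ 0 := fun h => hA2B (mkeq _ _ (by rw [hA2x, h]; ring) (by rw [hA2y, h]; ring))
  have hs21 : s2 ≠ 1 := fun h => hA2C (mkeq _ _ (by rw [hA2x, h]; ring) (by rw [hA2y, h]; ring))
  have ht10 : t1 ≠ 0 := fun h => hB1C (mkeq _ _ (by rw [hB1x, h]; ring) (by rw [hB1y, h]; ring))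
  have ht11 : t1 ≠ 1 := fun h => hB1A (mkeq _ _ (by rw [hB1x, h]; ring) (by rw [hB1y, h]; ring))
  have ht20 : t2 ≠ 0 := fun h => hB2C (mkeq _ _ (by rw [hB2x, h]; ring) (by rw [hB2y, h]; ring))
  have ht21 : t2 ≠ 1 := fun h => hB2A (mkeq _ _ (by rw [hB2x, h]; ring) (by rw [hB2y, h]; ring))
  have hu10 : u1 ≠ 0 := fun h => hC1A (mkeq _ _ (by rw [hC1x, h]; ring) (by rw [hC1y, h]; ring))
  have hu11 : u1 ≠ 1 := fun h => hC1B (mkeq _ _ (by rw [hC1x, h]; ring) (by rw [hC1y, h]; ring))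
  have hu20 : u2 ≠ 0 := fun h => hC2A (mkeq _ _ (by rw [hC2x, h]; ring) (by rw [hC2y, h]; ring))
  have hu21 : u2 ≠ 1 := fun h => hC2B (mkeq _ _ (by rw [hC2x, h]; ring) (by rw [hC2y, h]; ring))
  have hcc : Conconic {A₁, A₂, B₁, B₂, C₁, C₂} ↔
      (∃ a b c d e f : ℝ, ¬(a = 0 ∧ b = 0 ∧ c = 0 ∧ d = 0 ∧ e = 0 ∧ f = 0) ∧
        a*(B 0+s1*(C 0-B 0))^2 + b*(B 0+s1*(C 0-B 0))*(B 1+s1*(C 1-B 1)) + c*(B 1+s1*(C 1-B 1))^2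
          + d*(B 0+s1*(C 0-B 0)) + e*(B 1+s1*(C 1-B 1)) + f = 0 ∧
        a*(B 0+s2*(C 0-B 0))^2 + b*(B 0+s2*(C 0-B 0))*(B 1+s2*(C 1-B 1)) + c*(B 1+s2*(C 1-B 1))^2
          + d*(B 0+s2*(C 0-B 0)) + e*(B 1+s2*(C 1-B 1)) + f = 0 ∧
        a*(C 0+t1*(A 0-C 0))^2 + b*(C 0+t1*(A 0-C 0))*(C 1+t1*(A 1-C 1)) + c*(C 1+t1*(A 1-C 1))^2
          + d*(C 0+t1*(A 0-C 0)) + e*(C 1+t1*(A 1-C 1)) + f = 0 ∧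
        a*(C 0+t2*(A 0-C 0))^2 + b*(C 0+t2*(A 0-C 0))*(C 1+t2*(A 1-C 1)) + c*(C 1+t2*(A 1-C 1))^2
          + d*(C 0+t2*(A 0-C 0)) + e*(C 1+t2*(A 1-C 1)) + f = 0 ∧
        a*(A 0+u1*(B 0-A 0))^2 + b*(A 0+u1*(B 0-A 0))*(A 1+u1*(B 1-A 1)) + c*(A 1+u1*(B 1-A 1))^2
          + d*(A 0+u1*(B 0-A 0)) + e*(A 1+u1*(B 1-A 1)) + f = 0 ∧
        a*(A 0+u2*(B 0-A 0))^2 + b*(A 0+u2*(B 0-A 0))*(A 1+u2*(B 1-A 1)) + c*(A 1+u2*(B 1-A 1))^2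
          + d*(A 0+u2*(B 0-A 0)) + e*(A 1+u2*(B 1-A 1)) + f = 0) := by
    constructor
    · rintro ⟨a, b, c, d, e, f, h0, hv⟩
      have h1 := hv A₁ (by simp)
      have h2 := hv A₂ (by simp)
      have h3 := hv B₁ (by simp)
      have h4 := hv B₂ (by simp)
      have h5 := hv C₁ (by simp)
      have h6 := hv C₂ (by simp)
      rw [hA1x, hA1y] at h1
      rw [hA2x, hA2y] at h2
      rw [hB1x, hB1y] at h3
      rw [hB2x, hB2y] at h4
      rw [hC1x, hC1y] at h5
      rw [hC2x, hC2y] at h6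
      exact ⟨a, b, c, d, e, f,
        fun hh => by obtain ⟨rfl, rfl, rfl, rfl, rfl, rfl⟩ := hh; exact h0 rfl,
        by linear_combination h1, by linear_combination h2, by linear_combination h3,
        by linear_combination h4, by linear_combination h5, by linear_combination h6⟩
    · rintro ⟨a, b, c, d, e, f, h0, h1, h2, h3, h4, h5, h6⟩
      refine ⟨a, b, c, d, e, f, ?_, ?_⟩
      · intro hh
        apply h0
        simp only [Prod.mk.injEq] at hh
        exact ⟨hh.1, hh.2.1, hh.2.2.1, hh.2.2.2.1, hh.2.2.2.2.1, hh.2.2.2.2.2⟩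
      · intro P hP
        simp only [Set.mem_insert_iff, Set.mem_singleton_iff] at hP
        rcases hP with rfl | rfl | rfl | rfl | rfl | rfl
        · rw [hA1x, hA1y]; linear_combination h1
        · rw [hA2x, hA2y]; linear_combination h2
        · rw [hB1x, hB1y]; linear_combination h3
        · rw [hB2x, hB2y]; linear_combination h4
        · rw [hC1x, hC1y]; linear_combination h5
        · rw [hC2x, hC2y]; linear_combination h6
  refine hcc.trans ?_
  refine (bridgeA (A 0) (A 1) (B 0) (B 1) (C 0) (C 1) s1 s2 t1 t2 u1 u2 hD).trans ?_
  refine ((solv_iff s1 s2 t1 t2 u1 u2 hs10 hs11 hs20 hs21 ht10 ht11 ht20 ht21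
    hu10 hu11 hu20 hu21).trans
    (solvD_iff s1 s2 t1 t2 u1 u2 hs10 hs11 hs20 hs21 ht10 ht11 ht20 ht21
      hu10 hu11 hu20 hu21).symm).trans ?_
  exact (bridgeB A B C A₁ A₂ B₁ B₂ C₁ C₂ s1 s2 t1 t2 u1 u2 hD hA1x hA1y hA2x hA2y
    hB1x hB1y hB2x hB2y hC1x hC1y hC2x hC2y hs10 hs20 ht10 ht20 hu10 hu20
    hA1A hA2A hB1B hB2B hC1C hC2C).symm
end

section
/- Theorem 2 (isogonal cevians): if AA₁, AA₂ and BB₁, BB₂ and CC₁, CC₂ are three pairs of isogonally conjugate cevians of triangle ABC — that is, ∠BAA₁ = ∠CAA₂, ∠CBB₁ = ∠ABB₂, and ∠ACC₁ = ∠BCC₂ (unoriented angles) — then the six cevian feet A₁, A₂, B₁, B₂, C₁, C₂ are conconic. -/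
open EuclideanGeometry

lemma inner2 (x y : Pt) : (inner ℝ x y : ℝ) = x 0 * y 0 + x 1 * y 1 := by
  simp [PiLp.inner_apply, Fin.sum_univ_two, RCLike.inner_apply, mul_comm]

lemma key_vertex (u w : Pt) (t₁ t₂ : ℝ)
    (hD : u 0 * w 1 - u 1 * w 0 ≠ 0)
    (ht₁ : 0 < t₁) (ht₁' : t₁ < 1) (ht₂ : 0 < t₂) (ht₂' : t₂ < 1)
    (h : InnerProductGeometry.angle u ((1-t₁) • u + t₁ • w)
       = InnerProductGeometry.angle w ((1-t₂) • u + t₂ • w)) :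
    t₁ * t₂ * (w 0 ^ 2 + w 1 ^ 2) = (1-t₁) * (1-t₂) * (u 0 ^ 2 + u 1 ^ 2) := by
  set x₁ : Pt := (1-t₁) • u + t₁ • w with hx₁
  set x₂ : Pt := (1-t₂) • u + t₂ • w with hx₂
  set D : ℝ := u 0 * w 1 - u 1 * w 0 with hDdef
  have hx₁c : ∀ i, x₁ i = (1-t₁) * u i + t₁ * w i := by intro i; simp [hx₁]
  have hx₂c : ∀ i, x₂ i = (1-t₂) * u i + t₂ * w i := by intro i; simp [hx₂]
  have hQ₁ : (inner ℝ u u : ℝ) * inner ℝ x₁ x₁ - inner ℝ u x₁ * inner ℝ u x₁ = (t₁ * D) ^ 2 := by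
    rw [inner2, inner2, inner2, hx₁c 0, hx₁c 1]; ring
  have hQ₂ : (inner ℝ w w : ℝ) * inner ℝ x₂ x₂ - inner ℝ w x₂ * inner ℝ w x₂ = ((1-t₂) * D) ^ 2 := by
    rw [inner2, inner2, inner2, hx₂c 0, hx₂c 1]; ring
  have hs₁ : Real.sin (InnerProductGeometry.angle u x₁) * (‖u‖ * ‖x₁‖) = t₁ * |D| := by
    rw [InnerProductGeometry.sin_angle_mul_norm_mul_norm, hQ₁, Real.sqrt_sq_eq_abs,
      abs_mul, abs_of_pos ht₁]
  have hs₂ : Real.sin (InnerProductGeometry.angle w x₂) * (‖w‖ * ‖x₂‖) = (1-t₂) * |D| := by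
    rw [InnerProductGeometry.sin_angle_mul_norm_mul_norm, hQ₂, Real.sqrt_sq_eq_abs,
      abs_mul, abs_of_pos (by linarith)]
  have hDpos : 0 < |D| := abs_pos.mpr hD
  have ha₁ : 0 < ‖u‖ * ‖x₁‖ := by
    rcases (mul_nonneg (norm_nonneg u) (norm_nonneg x₁)).lt_or_eq with h' | h'
    · exact h'
    · exfalso; rw [← h'] at hs₁; nlinarith [mul_pos ht₁ hDpos]
  have ha₂ : 0 < ‖w‖ * ‖x₂‖ := by
    rcases (mul_nonneg (norm_nonneg w) (norm_nonneg x₂)).lt_or_eq with h' | h'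
    · exact h'
    · exfalso; rw [← h'] at hs₂; nlinarith [mul_pos (by linarith : (0:ℝ) < 1 - t₂) hDpos]
  have hE1 : t₁ * (‖w‖ * ‖x₂‖) = (1-t₂) * (‖u‖ * ‖x₁‖) := by
    have h' := hs₁; rw [h] at h'
    have hmul : (t₁ * |D|) * (‖w‖ * ‖x₂‖) = ((1-t₂) * |D|) * (‖u‖ * ‖x₁‖) := by
      rw [← h', ← hs₂]; ring
    exact mul_left_cancel₀ (ne_of_gt hDpos)
      (by linarith [hmul] : |D| * (t₁ * (‖w‖ * ‖x₂‖)) = |D| * ((1-t₂) * (‖u‖ * ‖x₁‖)))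
  have hc₁ : Real.cos (InnerProductGeometry.angle u x₁) * (‖u‖ * ‖x₁‖) = inner ℝ u x₁ :=
    InnerProductGeometry.cos_angle_mul_norm_mul_norm u x₁
  have hc₂ : Real.cos (InnerProductGeometry.angle w x₂) * (‖w‖ * ‖x₂‖) = inner ℝ w x₂ :=
    InnerProductGeometry.cos_angle_mul_norm_mul_norm w x₂
  have hE2 : (inner ℝ u x₁ : ℝ) * (‖w‖ * ‖x₂‖) = inner ℝ w x₂ * (‖u‖ * ‖x₁‖) := by
    rw [← hc₁, ← hc₂, h]; ring
  have hE3 : (1-t₂) * (inner ℝ u x₁ : ℝ) = t₁ * inner ℝ w x₂ := by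
    have hkey : ((1-t₂) * (inner ℝ u x₁ : ℝ)) * (‖u‖ * ‖x₁‖) = (t₁ * inner ℝ w x₂) * (‖u‖ * ‖x₁‖) := by
      calc ((1-t₂) * (inner ℝ u x₁ : ℝ)) * (‖u‖ * ‖x₁‖)
          = (inner ℝ u x₁ : ℝ) * ((1-t₂) * (‖u‖ * ‖x₁‖)) := by ring
        _ = (inner ℝ u x₁ : ℝ) * (t₁ * (‖w‖ * ‖x₂‖)) := by rw [hE1]
        _ = t₁ * ((inner ℝ u x₁ : ℝ) * (‖w‖ * ‖x₂‖)) := by ring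
        _ = t₁ * ((inner ℝ w x₂ : ℝ) * (‖u‖ * ‖x₁‖)) := by rw [hE2]
        _ = (t₁ * inner ℝ w x₂) * (‖u‖ * ‖x₁‖) := by ring
    exact mul_right_cancel₀ (ne_of_gt ha₁) hkey
  rw [inner2, inner2, hx₁c 0, hx₁c 1, hx₂c 0, hx₂c 1] at hE3
  linear_combination -hE3

lemma cross_ne (A B C : Pt) (h : AffineIndependent ℝ ![A, B, C]) :
    (B 0 - A 0) * (C 1 - A 1) - (B 1 - A 1) * (C 0 - A 0) ≠ 0 := by
  intro hD
  rw [affineIndependent_iff_of_fintype] at h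
  have key : ∀ w₁ w₂ : ℝ, w₁ • (B - A) + w₂ • (C - A) = (0 : Pt) → w₁ = 0 ∧ w₂ = 0 := by
    intro w₁ w₂ hv
    have hw : ∑ i, (![-(w₁+w₂), w₁, w₂] : Fin 3 → ℝ) i = 0 := by
      simp [Fin.sum_univ_three]
    have hvs : Finset.univ.weightedVSub ![A,B,C] (![-(w₁+w₂), w₁, w₂] : Fin 3 → ℝ)
        = (0 : EuclideanSpace ℝ (Fin 2)) := by
      rw [Finset.weightedVSub_eq_weightedVSubOfPoint_of_sum_eq_zero _ _ _ hw A,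
        Finset.weightedVSubOfPoint_apply]
      simp only [Fin.sum_univ_three, Matrix.cons_val_zero, Matrix.cons_val_one,
        Matrix.head_cons, Matrix.cons_val_two, Matrix.tail_cons, vsub_eq_sub]
      rw [sub_self, smul_zero, zero_add]
      exact hv
    refine ⟨?_, ?_⟩
    · have := h _ hw hvs 1; simpa using this
    · have := h _ hw hvs 2; simpa using this
  have h1 := key (C 1 - A 1) (-(B 1 - A 1)) (by
    ext i
    fin_cases i <;>
      simp only [Fin.zero_eta, Fin.mk_one, Fin.isValue, PiLp.add_apply, PiLp.smul_apply, PiLp.sub_apply, smul_eq_mul, PiLp.zero_apply] <;>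
      [linear_combination hD; ring])
  have h2 := key (C 0 - A 0) (-(B 0 - A 0)) (by
    ext i
    fin_cases i <;>
      simp only [Fin.zero_eta, Fin.mk_one, Fin.isValue, PiLp.add_apply, PiLp.smul_apply, PiLp.sub_apply, smul_eq_mul, PiLp.zero_apply] <;>
      [ring; linear_combination -hD])
  have h3 := key 1 0 (by
    ext i
    fin_cases i <;>
      simp only [Fin.zero_eta, Fin.mk_one, Fin.isValue, PiLp.add_apply, PiLp.smul_apply, PiLp.sub_apply, smul_eq_mul, PiLp.zero_apply] <;>
      [linear_combination -h2.2; linear_combination -h1.2])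
  exact one_ne_zero h3.1
lemma Gdecomp (p q r uu vv ww aa ba ca ab bb cb ag bg cg x y : ℝ) :
    (p*aa^2 + q*ab^2 + r*ag^2 + uu*(ab*ag) + vv*(ag*aa) + ww*(aa*ab)) * x ^ 2 + (p*(2*(aa*ba)) + q*(2*(ab*bb)) + r*(2*(ag*bg)) + uu*(ab*bg+bb*ag) + vv*(ag*ba+bg*aa) + ww*(aa*bb+ba*ab)) * x * y + (p*ba^2 + q*bb^2 + r*bg^2 + uu*(bb*bg) + vv*(bg*ba) + ww*(ba*bb)) * y ^ 2 + (p*(2*(aa*ca)) + q*(2*(ab*cb)) + r*(2*(ag*cg)) + uu*(ab*cg+cb*ag) + vv*(ag*ca+cg*aa) + ww*(aa*cb+ca*ab)) * x + (p*(2*(ba*ca)) + q*(2*(bb*cb)) + r*(2*(bg*cg)) + uu*(bb*cg+cb*bg) + vv*(bg*ca+cg*ba) + ww*(ba*cb+ca*bb)) * y + (p*ca^2 + q*cb^2 + r*cg^2 + uu*(cb*cg) + vv*(cg*ca) + ww*(ca*cb))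
    = p*(aa*x+ba*y+ca)^2 + q*(ab*x+bb*y+cb)^2 + r*(ag*x+bg*y+cg)^2
      + uu*((ab*x+bb*y+cb)*(ag*x+bg*y+cg)) + vv*((ag*x+bg*y+cg)*(aa*x+ba*y+ca))
      + ww*((aa*x+ba*y+ca)*(ab*x+bb*y+cb)) := by ring

lemma sideA1 (t₁ t₂ s₁ s₂ z₁ z₂ Dv : ℝ) :
    (t₁*t₂*s₁*s₂*z₁*z₂)*(0:ℝ)^2 + ((1-z₁)*(1-z₂)*s₁*s₂*(t₁*t₂))*((1-t₁) * Dv)^2 + ((1-z₁)*(1-z₂)*s₁*s₂*((1-t₁)*(1-t₂)))*(t₁ * Dv)^2 + ((1-z₁)*(1-z₂)*s₁*s₂*(2*t₁*t₂-t₁-t₂))*(((1-t₁) * Dv)*(t₁ * Dv)) + ((1-z₁)*(1-z₂)*((1-t₁)*(1-t₂))*(2*s₁*s₂-s₁-s₂))*((t₁ * Dv)*(0:ℝ)) + (t₁*t₂*s₁*s₂*(2*z₁*z₂-z₁-z₂))*((0:ℝ)*((1-t₁) * Dv)) = 0 := by ring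

lemma sideA2 (t₁ t₂ s₁ s₂ z₁ z₂ Dv : ℝ) :
    (t₁*t₂*s₁*s₂*z₁*z₂)*(0:ℝ)^2 + ((1-z₁)*(1-z₂)*s₁*s₂*(t₁*t₂))*((1-t₂) * Dv)^2 + ((1-z₁)*(1-z₂)*s₁*s₂*((1-t₁)*(1-t₂)))*(t₂ * Dv)^2 + ((1-z₁)*(1-z₂)*s₁*s₂*(2*t₁*t₂-t₁-t₂))*(((1-t₂) * Dv)*(t₂ * Dv)) + ((1-z₁)*(1-z₂)*((1-t₁)*(1-t₂))*(2*s₁*s₂-s₁-s₂))*((t₂ * Dv)*(0:ℝ)) + (t₁*t₂*s₁*s₂*(2*z₁*z₂-z₁-z₂))*((0:ℝ)*((1-t₂) * Dv)) = 0 := by ring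

lemma sideB1 (t₁ t₂ s₁ s₂ z₁ z₂ Dv : ℝ) (hcar : t₁*t₂*s₁*s₂*z₁*z₂ = (1-t₁)*(1-t₂)*(1-s₁)*(1-s₂)*(1-z₁)*(1-z₂)) :
    (t₁*t₂*s₁*s₂*z₁*z₂)*(s₁ * Dv)^2 + ((1-z₁)*(1-z₂)*s₁*s₂*(t₁*t₂))*(0:ℝ)^2 + ((1-z₁)*(1-z₂)*s₁*s₂*((1-t₁)*(1-t₂)))*((1-s₁) * Dv)^2 + ((1-z₁)*(1-z₂)*s₁*s₂*(2*t₁*t₂-t₁-t₂))*((0:ℝ)*((1-s₁) * Dv)) + ((1-z₁)*(1-z₂)*((1-t₁)*(1-t₂))*(2*s₁*s₂-s₁-s₂))*(((1-s₁) * Dv)*(s₁ * Dv)) + (t₁*t₂*s₁*s₂*(2*z₁*z₂-z₁-z₂))*((s₁ * Dv)*(0:ℝ)) = 0 := by linear_combination (Dv^2 * s₁^2) * hcar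

lemma sideB2 (t₁ t₂ s₁ s₂ z₁ z₂ Dv : ℝ) (hcar : t₁*t₂*s₁*s₂*z₁*z₂ = (1-t₁)*(1-t₂)*(1-s₁)*(1-s₂)*(1-z₁)*(1-z₂)) :
    (t₁*t₂*s₁*s₂*z₁*z₂)*(s₂ * Dv)^2 + ((1-z₁)*(1-z₂)*s₁*s₂*(t₁*t₂))*(0:ℝ)^2 + ((1-z₁)*(1-z₂)*s₁*s₂*((1-t₁)*(1-t₂)))*((1-s₂) * Dv)^2 + ((1-z₁)*(1-z₂)*s₁*s₂*(2*t₁*t₂-t₁-t₂))*((0:ℝ)*((1-s₂) * Dv)) + ((1-z₁)*(1-z₂)*((1-t₁)*(1-t₂))*(2*s₁*s₂-s₁-s₂))*(((1-s₂) * Dv)*(s₂ * Dv)) + (t₁*t₂*s₁*s₂*(2*z₁*z₂-z₁-z₂))*((s₂ * Dv)*(0:ℝ)) = 0 := by linear_combination (Dv^2 * s₂^2) * hcar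

lemma sideC1 (t₁ t₂ s₁ s₂ z₁ z₂ Dv : ℝ) :
    (t₁*t₂*s₁*s₂*z₁*z₂)*((1-z₁) * Dv)^2 + ((1-z₁)*(1-z₂)*s₁*s₂*(t₁*t₂))*(z₁ * Dv)^2 + ((1-z₁)*(1-z₂)*s₁*s₂*((1-t₁)*(1-t₂)))*(0:ℝ)^2 + ((1-z₁)*(1-z₂)*s₁*s₂*(2*t₁*t₂-t₁-t₂))*((z₁ * Dv)*(0:ℝ)) + ((1-z₁)*(1-z₂)*((1-t₁)*(1-t₂))*(2*s₁*s₂-s₁-s₂))*((0:ℝ)*((1-z₁) * Dv)) + (t₁*t₂*s₁*s₂*(2*z₁*z₂-z₁-z₂))*(((1-z₁) * Dv)*(z₁ * Dv)) = 0 := by ring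

lemma sideC2 (t₁ t₂ s₁ s₂ z₁ z₂ Dv : ℝ) :
    (t₁*t₂*s₁*s₂*z₁*z₂)*((1-z₂) * Dv)^2 + ((1-z₁)*(1-z₂)*s₁*s₂*(t₁*t₂))*(z₂ * Dv)^2 + ((1-z₁)*(1-z₂)*s₁*s₂*((1-t₁)*(1-t₂)))*(0:ℝ)^2 + ((1-z₁)*(1-z₂)*s₁*s₂*(2*t₁*t₂-t₁-t₂))*((z₂ * Dv)*(0:ℝ)) + ((1-z₁)*(1-z₂)*((1-t₁)*(1-t₂))*(2*s₁*s₂-s₁-s₂))*((0:ℝ)*((1-z₂) * Dv)) + (t₁*t₂*s₁*s₂*(2*z₁*z₂-z₁-z₂))*(((1-z₂) * Dv)*(z₂ * Dv)) = 0 := by ring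

lemma NposAux (x y : ℝ) (h : ¬(x = 0 ∧ y = 0)) : 0 < x ^ 2 + y ^ 2 := by
  rcases eq_or_ne x 0 with h0 | h0
  · rcases eq_or_ne y 0 with h1 | h1
    · exact absurd ⟨h0, h1⟩ h
    · have := sq_pos_iff.mpr h1
      nlinarith [sq_nonneg x]
  · have := sq_pos_iff.mpr h0
    nlinarith [sq_nonneg y]

lemma carnot_mul (t₁ t₂ s₁ s₂ z₁ z₂ nAB nBC nCA : ℝ)
    (h1 : t₁ * t₂ * nCA = (1 - t₁) * (1 - t₂) * nAB)
    (h2 : s₁ * s₂ * nAB = (1 - s₁) * (1 - s₂) * nBC)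
    (h3 : z₁ * z₂ * nBC = (1 - z₁) * (1 - z₂) * nCA)
    (hAB : 0 < nAB) (hBC : 0 < nBC) (hCA : 0 < nCA) :
    t₁*t₂*s₁*s₂*z₁*z₂ = (1-t₁)*(1-t₂)*(1-s₁)*(1-s₂)*(1-z₁)*(1-z₂) := by
  have hbig : (t₁*t₂*s₁*s₂*z₁*z₂) * (nCA * nAB * nBC)
      = ((1-t₁)*(1-t₂)*(1-s₁)*(1-s₂)*(1-z₁)*(1-z₂)) * (nCA * nAB * nBC) := by
    linear_combination (s₁*s₂*nAB*(z₁*z₂*nBC)) * h1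
      + ((1-t₁)*(1-t₂)*nAB*(z₁*z₂*nBC)) * h2
      + ((1-t₁)*(1-t₂)*nAB*((1-s₁)*(1-s₂)*nBC)) * h3
  exact mul_right_cancel₀ (mul_pos (mul_pos hCA hAB) hBC).ne' hbig

lemma build (A B C A₁ A₂ B₁ B₂ C₁ C₂ : Pt) (t₁ t₂ s₁ s₂ z₁ z₂ : ℝ)
    (cA₁ : ∀ i, A₁ i = B i + t₁ * (C i - B i))
    (cA₂ : ∀ i, A₂ i = B i + t₂ * (C i - B i))
    (cB₁ : ∀ i, B₁ i = C i + s₁ * (A i - C i))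
    (cB₂ : ∀ i, B₂ i = C i + s₂ * (A i - C i))
    (cC₁ : ∀ i, C₁ i = A i + z₁ * (B i - A i))
    (cC₂ : ∀ i, C₂ i = A i + z₂ * (B i - A i))
    (hD : ((B 0 - A 0) * (C 1 - A 1) - (B 1 - A 1) * (C 0 - A 0)) ≠ 0)
    (ht₁ : t₁ ≠ 0) (ht₂ : t₂ ≠ 0) (hs₁ : s₁ ≠ 0) (hs₂ : s₂ ≠ 0) (hz₁ : z₁ ≠ 0) (hz₂ : z₂ ≠ 0)
    (hcar : t₁*t₂*s₁*s₂*z₁*z₂ = (1-t₁)*(1-t₂)*(1-s₁)*(1-s₂)*(1-z₁)*(1-z₂)) :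
    Conconic {A₁, A₂, B₁, B₂, C₁, C₂} := by
  refine ⟨((t₁*t₂*s₁*s₂*z₁*z₂)*(-(C 1 - B 1))^2 + ((1-z₁)*(1-z₂)*s₁*s₂*(t₁*t₂))*(-(A 1 - C 1))^2 + ((1-z₁)*(1-z₂)*s₁*s₂*((1-t₁)*(1-t₂)))*(-(B 1 - A 1))^2 + ((1-z₁)*(1-z₂)*s₁*s₂*(2*t₁*t₂-t₁-t₂))*((-(A 1 - C 1))*(-(B 1 - A 1))) + ((1-z₁)*(1-z₂)*((1-t₁)*(1-t₂))*(2*s₁*s₂-s₁-s₂))*((-(B 1 - A 1))*(-(C 1 - B 1))) + (t₁*t₂*s₁*s₂*(2*z₁*z₂-z₁-z₂))*((-(C 1 - B 1))*(-(A 1 - C 1)))), ((t₁*t₂*s₁*s₂*z₁*z₂)*(2*((-(C 1 - B 1))*(C 0 - B 0))) + ((1-z₁)*(1-z₂)*s₁*s₂*(t₁*t₂))*(2*((-(A 1 - C 1))*(A 0 - C 0))) + ((1-z₁)*(1-z₂)*s₁*s₂*((1-t₁)*(1-t₂)))*(2*((-(B 1 - A 1))*(B 0 - A 0))) + ((1-z₁)*(1-z₂)*s₁*s₂*(2*t₁*t₂-t₁-t₂))*((-(A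 1 - C 1))*(B 0 - A 0)+(A 0 - C 0)*(-(B 1 - A 1))) + ((1-z₁)*(1-z₂)*((1-t₁)*(1-t₂))*(2*s₁*s₂-s₁-s₂))*((-(B 1 - A 1))*(C 0 - B 0)+(B 0 - A 0)*(-(C 1 - B 1))) + (t₁*t₂*s₁*s₂*(2*z₁*z₂-z₁-z₂))*((-(C 1 - B 1))*(A 0 - C 0)+(C 0 - B 0)*(-(A 1 - C 1)))), ((t₁*t₂*s₁*s₂*z₁*z₂)*(C 0 - B 0)^2 + ((1-z₁)*(1-z₂)*s₁*s₂*(t₁*t₂))*(A 0 - C 0)^2 + ((1-z₁)*(1-z₂)*s₁*s₂*((1-t₁)*(1-t₂)))*(B 0 - A 0)^2 + ((1-z₁)*(1-z₂)*s₁*s₂*(2*t₁*t₂-t₁-t₂))*((A 0 - C 0)*(B 0 - A 0)) + ((1-z₁)*(1-z₂)*((1-t₁)*(1-t₂))*(2*s₁*s₂-s₁-s₂))*((B 0 - A 0)*(C 0 - B 0)) + (t₁*t₂*s₁*s₂*(2*z₁*z₂-z₁-z₂))*((C 0 - B 0)*(A 0 - C 0))), ((t₁*t₂*s₁*s₂*z₁*z₂)*(2*((-(C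 1 - B 1))*((C 1 - B 1) * B 0 - (C 0 - B 0) * B 1))) + ((1-z₁)*(1-z₂)*s₁*s₂*(t₁*t₂))*(2*((-(A 1 - C 1))*((A 1 - C 1) * C 0 - (A 0 - C 0) * C 1))) + ((1-z₁)*(1-z₂)*s₁*s₂*((1-t₁)*(1-t₂)))*(2*((-(B 1 - A 1))*((B 1 - A 1) * A 0 - (B 0 - A 0) * A 1))) + ((1-z₁)*(1-z₂)*s₁*s₂*(2*t₁*t₂-t₁-t₂))*((-(A 1 - C 1))*((B 1 - A 1) * A 0 - (B 0 - A 0) * A 1)+((A 1 - C 1) * C 0 - (A 0 - C 0) * C 1)*(-(B 1 - A 1))) + ((1-z₁)*(1-z₂)*((1-t₁)*(1-t₂))*(2*s₁*s₂-s₁-s₂))*((-(B 1 - A 1))*((C 1 - B 1) * B 0 - (C 0 - B 0) * B 1)+((B 1 - A 1) * A 0 - (B 0 - A 0) * A 1)*(-(C 1 - B 1))) + (t₁*t₂*s₁*s₂*(2*z₁*z₂-z₁-z₂))*((-(C 1 - B 1))*((A 1 - C 1) * C 0 - (A 0 - C 0) * C 1)+((C 1 - B 1) * B 0 - (C 0 -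 B 0) * B 1)*(-(A 1 - C 1)))), ((t₁*t₂*s₁*s₂*z₁*z₂)*(2*((C 0 - B 0)*((C 1 - B 1) * B 0 - (C 0 - B 0) * B 1))) + ((1-z₁)*(1-z₂)*s₁*s₂*(t₁*t₂))*(2*((A 0 - C 0)*((A 1 - C 1) * C 0 - (A 0 - C 0) * C 1))) + ((1-z₁)*(1-z₂)*s₁*s₂*((1-t₁)*(1-t₂)))*(2*((B 0 - A 0)*((B 1 - A 1) * A 0 - (B 0 - A 0) * A 1))) + ((1-z₁)*(1-z₂)*s₁*s₂*(2*t₁*t₂-t₁-t₂))*((A 0 - C 0)*((B 1 - A 1) * A 0 - (B 0 - A 0) * A 1)+((A 1 - C 1) * C 0 - (A 0 - C 0) * C 1)*(B 0 - A 0)) + ((1-z₁)*(1-z₂)*((1-t₁)*(1-t₂))*(2*s₁*s₂-s₁-s₂))*((B 0 - A 0)*((C 1 - B 1) * B 0 - (C 0 - B 0) * B 1)+((B 1 - A 1) * A 0 - (B 0 - A 0) * A 1)*(C 0 - B 0)) + (t₁*t₂*s₁*s₂*(2*z₁*z₂-z₁-z₂))*((C 0 - B 0)*((A 1 - C 1)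 * C 0 - (A 0 - C 0) * C 1)+((C 1 - B 1) * B 0 - (C 0 - B 0) * B 1)*(A 0 - C 0))), ((t₁*t₂*s₁*s₂*z₁*z₂)*((C 1 - B 1) * B 0 - (C 0 - B 0) * B 1)^2 + ((1-z₁)*(1-z₂)*s₁*s₂*(t₁*t₂))*((A 1 - C 1) * C 0 - (A 0 - C 0) * C 1)^2 + ((1-z₁)*(1-z₂)*s₁*s₂*((1-t₁)*(1-t₂)))*((B 1 - A 1) * A 0 - (B 0 - A 0) * A 1)^2 + ((1-z₁)*(1-z₂)*s₁*s₂*(2*t₁*t₂-t₁-t₂))*(((A 1 - C 1) * C 0 - (A 0 - C 0) * C 1)*((B 1 - A 1) * A 0 - (B 0 - A 0) * A 1)) + ((1-z₁)*(1-z₂)*((1-t₁)*(1-t₂))*(2*s₁*s₂-s₁-s₂))*(((B 1 - A 1) * A 0 - (B 0 - A 0) * A 1)*((C 1 - B 1) * B 0 - (C 0 - B 0) * B 1)) + (t₁*t₂*s₁*s₂*(2*z₁*z₂-z₁-z₂))*(((C 1 - B 1) * B 0 - (C 0 - B 0) * B 1)*((A 1 - C 1) * C 0 - (A 0 - C 0)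 * C 1))), ?_, ?_⟩
  · intro h0
    simp only [Prod.mk.injEq] at h0
    obtain ⟨h1, h2, h3, h4, h5, h6⟩ := h0
    have hGA := Gdecomp (t₁*t₂*s₁*s₂*z₁*z₂) ((1-z₁)*(1-z₂)*s₁*s₂*(t₁*t₂)) ((1-z₁)*(1-z₂)*s₁*s₂*((1-t₁)*(1-t₂))) ((1-z₁)*(1-z₂)*s₁*s₂*(2*t₁*t₂-t₁-t₂)) ((1-z₁)*(1-z₂)*((1-t₁)*(1-t₂))*(2*s₁*s₂-s₁-s₂)) (t₁*t₂*s₁*s₂*(2*z₁*z₂-z₁-z₂)) (-(C 1 - B 1)) (C 0 - B 0) ((C 1 - B 1) * B 0 - (C 0 - B 0) * B 1) (-(A 1 - C 1)) (A 0 - C 0) ((A 1 - C 1) * C 0 - (A 0 - C 0) * C 1) (-(B 1 - A 1)) (B 0 - A 0) ((B 1 - A 1) * A 0 - (B 0 - A 0) * A 1) (A 0) (A 1)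
    rw [h1, h2, h3, h4, h5, h6] at hGA
    have hal : (-(C 1 - B 1)) * (A 0) + (C 0 - B 0) * (A 1) + ((C 1 - B 1) * B 0 - (C 0 - B 0) * B 1) = ((B 0 - A 0) * (C 1 - A 1) - (B 1 - A 1) * (C 0 - A 0)) := by ring
    have hbe : (-(A 1 - C 1)) * (A 0) + (A 0 - C 0) * (A 1) + ((A 1 - C 1) * C 0 - (A 0 - C 0) * C 1) = (0:ℝ) := by ring
    have hga : (-(B 1 - A 1)) * (A 0) + (B 0 - A 0) * (A 1) + ((B 1 - A 1) * A 0 - (B 0 - A 0) * A 1) = (0:ℝ) := by ring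
    rw [hal, hbe, hga] at hGA
    have hzero : (t₁*t₂*s₁*s₂*z₁*z₂) * ((B 0 - A 0) * (C 1 - A 1) - (B 1 - A 1) * (C 0 - A 0)) ^ 2 = 0 := by linear_combination -hGA
    exact (mul_ne_zero
      (mul_ne_zero (mul_ne_zero (mul_ne_zero (mul_ne_zero (mul_ne_zero ht₁ ht₂) hs₁) hs₂) hz₁) hz₂)
      (pow_ne_zero 2 hD)) hzero
  · intro P hP
    simp only [Set.mem_insert_iff, Set.mem_singleton_iff] at hP
    rcases hP with rfl | rfl | rfl | rfl | rfl | rfl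
    · have hal : (-(C 1 - B 1)) * (P 0) + (C 0 - B 0) * (P 1) + ((C 1 - B 1) * B 0 - (C 0 - B 0) * B 1) = (0:ℝ) := by
        rw [cA₁ 0, cA₁ 1]; ring
      have hbe : (-(A 1 - C 1)) * (P 0) + (A 0 - C 0) * (P 1) + ((A 1 - C 1) * C 0 - (A 0 - C 0) * C 1) = ((1-t₁) * ((B 0 - A 0) * (C 1 - A 1) - (B 1 - A 1) * (C 0 - A 0))) := by
        rw [cA₁ 0, cA₁ 1]; ring
      have hga : (-(B 1 - A 1)) * (P 0) + (B 0 - A 0) * (P 1) + ((B 1 - A 1) * A 0 - (B 0 - A 0) * A 1) = (t₁ * ((B 0 - A 0) * (C 1 - A 1) - (B 1 - A 1) * (C 0 - A 0))) := by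
        rw [cA₁ 0, cA₁ 1]; ring
      rw [Gdecomp, hal, hbe, hga]
      exact sideA1 t₁ t₂ s₁ s₂ z₁ z₂ ((B 0 - A 0) * (C 1 - A 1) - (B 1 - A 1) * (C 0 - A 0))
    · have hal : (-(C 1 - B 1)) * (P 0) + (C 0 - B 0) * (P 1) + ((C 1 - B 1) * B 0 - (C 0 - B 0) * B 1) = (0:ℝ) := by
        rw [cA₂ 0, cA₂ 1]; ring
      have hbe : (-(A 1 - C 1)) * (P 0) + (A 0 - C 0) * (P 1) + ((A 1 - C 1) * C 0 - (A 0 - C 0) * C 1) = ((1-t₂) * ((B 0 - A 0) * (C 1 - A 1) - (B 1 - A 1) * (C 0 - A 0))) := by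
        rw [cA₂ 0, cA₂ 1]; ring
      have hga : (-(B 1 - A 1)) * (P 0) + (B 0 - A 0) * (P 1) + ((B 1 - A 1) * A 0 - (B 0 - A 0) * A 1) = (t₂ * ((B 0 - A 0) * (C 1 - A 1) - (B 1 - A 1) * (C 0 - A 0))) := by
        rw [cA₂ 0, cA₂ 1]; ring
      rw [Gdecomp, hal, hbe, hga]
      exact sideA2 t₁ t₂ s₁ s₂ z₁ z₂ ((B 0 - A 0) * (C 1 - A 1) - (B 1 - A 1) * (C 0 - A 0))
    · have hal : (-(C 1 - B 1)) * (P 0) + (C 0 - B 0) * (P 1) + ((C 1 - B 1) * B 0 - (C 0 - B 0) * B 1) = (s₁ * ((B 0 - A 0) * (C 1 - A 1) - (B 1 - A 1) * (C 0 - A 0))) := by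
        rw [cB₁ 0, cB₁ 1]; ring
      have hbe : (-(A 1 - C 1)) * (P 0) + (A 0 - C 0) * (P 1) + ((A 1 - C 1) * C 0 - (A 0 - C 0) * C 1) = (0:ℝ) := by
        rw [cB₁ 0, cB₁ 1]; ring
      have hga : (-(B 1 - A 1)) * (P 0) + (B 0 - A 0) * (P 1) + ((B 1 - A 1) * A 0 - (B 0 - A 0) * A 1) = ((1-s₁) * ((B 0 - A 0) * (C 1 - A 1) - (B 1 - A 1) * (C 0 - A 0))) := by
        rw [cB₁ 0, cB₁ 1]; ring
      rw [Gdecomp, hal, hbe, hga]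
      exact sideB1 t₁ t₂ s₁ s₂ z₁ z₂ ((B 0 - A 0) * (C 1 - A 1) - (B 1 - A 1) * (C 0 - A 0)) hcar
    · have hal : (-(C 1 - B 1)) * (P 0) + (C 0 - B 0) * (P 1) + ((C 1 - B 1) * B 0 - (C 0 - B 0) * B 1) = (s₂ * ((B 0 - A 0) * (C 1 - A 1) - (B 1 - A 1) * (C 0 - A 0))) := by
        rw [cB₂ 0, cB₂ 1]; ring
      have hbe : (-(A 1 - C 1)) * (P 0) + (A 0 - C 0) * (P 1) + ((A 1 - C 1) * C 0 - (A 0 - C 0) * C 1) = (0:ℝ) := by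
        rw [cB₂ 0, cB₂ 1]; ring
      have hga : (-(B 1 - A 1)) * (P 0) + (B 0 - A 0) * (P 1) + ((B 1 - A 1) * A 0 - (B 0 - A 0) * A 1) = ((1-s₂) * ((B 0 - A 0) * (C 1 - A 1) - (B 1 - A 1) * (C 0 - A 0))) := by
        rw [cB₂ 0, cB₂ 1]; ring
      rw [Gdecomp, hal, hbe, hga]
      exact sideB2 t₁ t₂ s₁ s₂ z₁ z₂ ((B 0 - A 0) * (C 1 - A 1) - (B 1 - A 1) * (C 0 - A 0)) hcar
    · have hal : (-(C 1 - B 1)) * (P 0) + (C 0 - B 0) * (P 1) + ((C 1 - B 1) * B 0 - (C 0 - B 0) * B 1) = ((1-z₁) * ((B 0 - A 0) * (C 1 - A 1) - (B 1 - A 1) * (C 0 - A 0))) := by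
        rw [cC₁ 0, cC₁ 1]; ring
      have hbe : (-(A 1 - C 1)) * (P 0) + (A 0 - C 0) * (P 1) + ((A 1 - C 1) * C 0 - (A 0 - C 0) * C 1) = (z₁ * ((B 0 - A 0) * (C 1 - A 1) - (B 1 - A 1) * (C 0 - A 0))) := by
        rw [cC₁ 0, cC₁ 1]; ring
      have hga : (-(B 1 - A 1)) * (P 0) + (B 0 - A 0) * (P 1) + ((B 1 - A 1) * A 0 - (B 0 - A 0) * A 1) = (0:ℝ) := by
        rw [cC₁ 0, cC₁ 1]; ring
      rw [Gdecomp, hal, hbe, hga]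
      exact sideC1 t₁ t₂ s₁ s₂ z₁ z₂ ((B 0 - A 0) * (C 1 - A 1) - (B 1 - A 1) * (C 0 - A 0))
    · have hal : (-(C 1 - B 1)) * (P 0) + (C 0 - B 0) * (P 1) + ((C 1 - B 1) * B 0 - (C 0 - B 0) * B 1) = ((1-z₂) * ((B 0 - A 0) * (C 1 - A 1) - (B 1 - A 1) * (C 0 - A 0))) := by
        rw [cC₂ 0, cC₂ 1]; ring
      have hbe : (-(A 1 - C 1)) * (P 0) + (A 0 - C 0) * (P 1) + ((A 1 - C 1) * C 0 - (A 0 - C 0) * C 1) = (z₂ * ((B 0 - A 0) * (C 1 - A 1) - (B 1 - A 1) * (C 0 - A 0))) := by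
        rw [cC₂ 0, cC₂ 1]; ring
      have hga : (-(B 1 - A 1)) * (P 0) + (B 0 - A 0) * (P 1) + ((B 1 - A 1) * A 0 - (B 0 - A 0) * A 1) = (0:ℝ) := by
        rw [cC₂ 0, cC₂ 1]; ring
      rw [Gdecomp, hal, hbe, hga]
      exact sideC2 t₁ t₂ s₁ s₂ z₁ z₂ ((B 0 - A 0) * (C 1 - A 1) - (B 1 - A 1) * (C 0 - A 0))

set_option maxHeartbeats 1000000

/-- Theorem 2: the feet of three pairs of isogonally conjugate cevians are conconic. -/
theorem isogonal_cevian_feet_conconic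
    (A B C A₁ A₂ B₁ B₂ C₁ C₂ : Pt)
    (hABC : AffineIndependent ℝ ![A, B, C])
    (hA₁ : Sbtw ℝ B A₁ C) (hA₂ : Sbtw ℝ B A₂ C)
    (hB₁ : Sbtw ℝ C B₁ A) (hB₂ : Sbtw ℝ C B₂ A)
    (hC₁ : Sbtw ℝ A C₁ B) (hC₂ : Sbtw ℝ A C₂ B)
    (hisoA : ∠ B A A₁ = ∠ C A A₂)
    (hisoB : ∠ C B B₁ = ∠ A B B₂)
    (hisoC : ∠ A C C₁ = ∠ B C C₂) :
    Conconic {A₁, A₂, B₁, B₂, C₁, C₂} := by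
  obtain ⟨t₁, ⟨ht₁0, ht₁1⟩, hA₁e⟩ := hA₁.mem_image_Ioo
  obtain ⟨t₂, ⟨ht₂0, ht₂1⟩, hA₂e⟩ := hA₂.mem_image_Ioo
  obtain ⟨s₁, ⟨hs₁0, hs₁1⟩, hB₁e⟩ := hB₁.mem_image_Ioo
  obtain ⟨s₂, ⟨hs₂0, hs₂1⟩, hB₂e⟩ := hB₂.mem_image_Ioo
  obtain ⟨z₁, ⟨hz₁0, hz₁1⟩, hC₁e⟩ := hC₁.mem_image_Ioo
  obtain ⟨z₂, ⟨hz₂0, hz₂1⟩, hC₂e⟩ := hC₂.mem_image_Ioo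
  have hD := cross_ne A B C hABC
  -- coordinate descriptions
  have cA₁ : ∀ i, A₁ i = B i + t₁ * (C i - B i) := by
    intro i; rw [← hA₁e]
    simp [AffineMap.lineMap_apply, vsub_eq_sub, vadd_eq_add, PiLp.add_apply,
      PiLp.sub_apply, PiLp.smul_apply, smul_eq_mul]
    try ring
  have cA₂ : ∀ i, A₂ i = B i + t₂ * (C i - B i) := by
    intro i; rw [← hA₂e]
    simp [AffineMap.lineMap_apply, vsub_eq_sub, vadd_eq_add, PiLp.add_apply,
      PiLp.sub_apply, PiLp.smul_apply, smul_eq_mul]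
    try ring
  have cB₁ : ∀ i, B₁ i = C i + s₁ * (A i - C i) := by
    intro i; rw [← hB₁e]
    simp [AffineMap.lineMap_apply, vsub_eq_sub, vadd_eq_add, PiLp.add_apply,
      PiLp.sub_apply, PiLp.smul_apply, smul_eq_mul]
    try ring
  have cB₂ : ∀ i, B₂ i = C i + s₂ * (A i - C i) := by
    intro i; rw [← hB₂e]
    simp [AffineMap.lineMap_apply, vsub_eq_sub, vadd_eq_add, PiLp.add_apply,
      PiLp.sub_apply, PiLp.smul_apply, smul_eq_mul]
    try ring
  have cC₁ : ∀ i, C₁ i = A i + z₁ * (B i - A i) := by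
    intro i; rw [← hC₁e]
    simp [AffineMap.lineMap_apply, vsub_eq_sub, vadd_eq_add, PiLp.add_apply,
      PiLp.sub_apply, PiLp.smul_apply, smul_eq_mul]
    try ring
  have cC₂ : ∀ i, C₂ i = A i + z₂ * (B i - A i) := by
    intro i; rw [← hC₂e]
    simp [AffineMap.lineMap_apply, vsub_eq_sub, vadd_eq_add, PiLp.add_apply,
      PiLp.sub_apply, PiLp.smul_apply, smul_eq_mul]
    try ring
  -- vector forms
  have vA₁ : A₁ - A = (1 - t₁) • (B - A) + t₁ • (C - A) := by
    ext i
    simp only [PiLp.add_apply, PiLp.sub_apply, PiLp.smul_apply, smul_eq_mul]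
    rw [cA₁ i]; ring
  have vA₂ : A₂ - A = (1 - t₂) • (B - A) + t₂ • (C - A) := by
    ext i
    simp only [PiLp.add_apply, PiLp.sub_apply, PiLp.smul_apply, smul_eq_mul]
    rw [cA₂ i]; ring
  have vB₁ : B₁ - B = (1 - s₁) • (C - B) + s₁ • (A - B) := by
    ext i
    simp only [PiLp.add_apply, PiLp.sub_apply, PiLp.smul_apply, smul_eq_mul]
    rw [cB₁ i]; ring
  have vB₂ : B₂ - B = (1 - s₂) • (C - B) + s₂ • (A - B) := by
    ext i
    simp only [PiLp.add_apply, PiLp.sub_apply, PiLp.smul_apply, smul_eq_mul]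
    rw [cB₂ i]; ring
  have vC₁ : C₁ - C = (1 - z₁) • (A - C) + z₁ • (B - C) := by
    ext i
    simp only [PiLp.add_apply, PiLp.sub_apply, PiLp.smul_apply, smul_eq_mul]
    rw [cC₁ i]; ring
  have vC₂ : C₂ - C = (1 - z₂) • (A - C) + z₂ • (B - C) := by
    ext i
    simp only [PiLp.add_apply, PiLp.sub_apply, PiLp.smul_apply, smul_eq_mul]
    rw [cC₂ i]; ring
  -- the three metric relations
  have kA := key_vertex (B - A) (C - A) t₁ t₂
    (by simp only [PiLp.sub_apply]; exact hD) ht₁0 ht₁1 ht₂0 ht₂1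
    (by rw [← vA₁, ← vA₂]; exact hisoA)
  have kB := key_vertex (C - B) (A - B) s₁ s₂
    (by simp only [PiLp.sub_apply]; intro hcon; exact hD (by linear_combination hcon))
    hs₁0 hs₁1 hs₂0 hs₂1
    (by rw [← vB₁, ← vB₂]; exact hisoB)
  have kC := key_vertex (A - C) (B - C) z₁ z₂
    (by simp only [PiLp.sub_apply]; intro hcon; exact hD (by linear_combination hcon))
    hz₁0 hz₁1 hz₂0 hz₂1
    (by rw [← vC₁, ← vC₂]; exact hisoC)
  simp only [PiLp.sub_apply] at kA kB kC
  -- Carnot relation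
  have hNAB : 0 < (B 0 - A 0) ^ 2 + (B 1 - A 1) ^ 2 := by
    refine NposAux _ _ ?_
    rintro ⟨h0, h1⟩
    exact hD (by linear_combination (C 1 - A 1) * h0 - (C 0 - A 0) * h1)
  have hNBC : 0 < (C 0 - B 0) ^ 2 + (C 1 - B 1) ^ 2 := by
    refine NposAux _ _ ?_
    rintro ⟨h0, h1⟩
    exact hD (by linear_combination (B 0 - A 0) * h1 - (B 1 - A 1) * h0)
  have hNCA : 0 < (C 0 - A 0) ^ 2 + (C 1 - A 1) ^ 2 := by
    refine NposAux _ _ ?_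
    rintro ⟨h0, h1⟩
    exact hD (by linear_combination (B 0 - A 0) * h1 - (B 1 - A 1) * h0)
  have kB' : s₁ * s₂ * ((B 0 - A 0) ^ 2 + (B 1 - A 1) ^ 2)
      = (1 - s₁) * (1 - s₂) * ((C 0 - B 0) ^ 2 + (C 1 - B 1) ^ 2) := by linear_combination kB
  have kC' : z₁ * z₂ * ((C 0 - B 0) ^ 2 + (C 1 - B 1) ^ 2)
      = (1 - z₁) * (1 - z₂) * ((C 0 - A 0) ^ 2 + (C 1 - A 1) ^ 2) := by linear_combination kC
  have hcar := carnot_mul t₁ t₂ s₁ s₂ z₁ z₂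
    ((B 0 - A 0) ^ 2 + (B 1 - A 1) ^ 2) ((C 0 - B 0) ^ 2 + (C 1 - B 1) ^ 2)
    ((C 0 - A 0) ^ 2 + (C 1 - A 1) ^ 2) kA kB' kC' hNAB hNBC hNCA
  exact build A B C A₁ A₂ B₁ B₂ C₁ C₂ t₁ t₂ s₁ s₂ z₁ z₂ cA₁ cA₂ cB₁ cB₂ cC₁ cC₂ hD
    ht₁0.ne' ht₂0.ne' hs₁0.ne' hs₂0.ne' hz₁0.ne' hz₂0.ne' hcar
end

section
/- Theorem 3 (isotomic cevians): if AA₁, AA₂ and BB₁, BB₂ and CC₁, CC₂ are three pairs of isotomically conjugate cevians of triangle ABC — that is, the midpoint of A₁A₂ equals the midpoint of BC, the midpoint of B₁B₂ equals the midpoint of CA, and the midpoint of C₁C₂ equals the midpoint of AB — then the six cevian feet A₁, A₂, B₁, B₂, C₁, C₂ are conconic. -/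
open EuclideanGeometry

namespace IsotomicAux

def cA (a0 a1 b0 b1 c0 c1 t u v : ℝ) : ℝ :=
  (t*(1-t)*u*(1-u)*v*(1-v))*((b1-c1)^2+(c1-a1)^2+(a1-b1)^2) + (-(((1-t)^2+t^2))*(u*(1-u)*v*(1-v)))*(c1-a1)*(a1-b1) + (-(((1-u)^2+u^2))*(t*(1-t)*v*(1-v)))*(a1-b1)*(b1-c1) + (-(((1-v)^2+v^2))*(t*(1-t)*u*(1-u)))*(b1-c1)*(c1-a1)

def cB (a0 a1 b0 b1 c0 c1 t u v : ℝ) : ℝ :=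
  (t*(1-t)*u*(1-u)*v*(1-v))*(2*(b1-c1)*(c0-b0)+2*(c1-a1)*(a0-c0)+2*(a1-b1)*(b0-a0)) + (-(((1-t)^2+t^2))*(u*(1-u)*v*(1-v)))*((c1-a1)*(b0-a0)+(a1-b1)*(a0-c0)) + (-(((1-u)^2+u^2))*(t*(1-t)*v*(1-v)))*((a1-b1)*(c0-b0)+(b1-c1)*(b0-a0)) + (-(((1-v)^2+v^2))*(t*(1-t)*u*(1-u)))*((b1-c1)*(a0-c0)+(c1-a1)*(c0-b0))

def cC (a0 a1 b0 b1 c0 c1 t u v : ℝ) : ℝ :=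
  (t*(1-t)*u*(1-u)*v*(1-v))*((c0-b0)^2+(a0-c0)^2+(b0-a0)^2) + (-(((1-t)^2+t^2))*(u*(1-u)*v*(1-v)))*(a0-c0)*(b0-a0) + (-(((1-u)^2+u^2))*(t*(1-t)*v*(1-v)))*(b0-a0)*(c0-b0) + (-(((1-v)^2+v^2))*(t*(1-t)*u*(1-u)))*(c0-b0)*(a0-c0)

def cD (a0 a1 b0 b1 c0 c1 t u v : ℝ) : ℝ :=
  (t*(1-t)*u*(1-u)*v*(1-v))*(2*(b0*c1-b1*c0)*(b1-c1)+2*(c0*a1-c1*a0)*(c1-a1)+2*(a0*b1-a1*b0)*(a1-b1)) + (-(((1-t)^2+t^2))*(u*(1-u)*v*(1-v)))*((c0*a1-c1*a0)*(a1-b1)+(a0*b1-a1*b0)*(c1-a1)) + (-(((1-u)^2+u^2))*(t*(1-t)*v*(1-v)))*((a0*b1-a1*b0)*(b1-c1)+(b0*c1-b1*c0)*(a1-b1)) + (-(((1-v)^2+v^2))*(t*(1-t)*u*(1-u)))*((b0*c1-b1*c0)*(c1-a1)+(c0*a1-c1*a0)*(b1-c1))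

def cE (a0 a1 b0 b1 c0 c1 t u v : ℝ) : ℝ :=
  (t*(1-t)*u*(1-u)*v*(1-v))*(2*(b0*c1-b1*c0)*(c0-b0)+2*(c0*a1-c1*a0)*(a0-c0)+2*(a0*b1-a1*b0)*(b0-a0)) + (-(((1-t)^2+t^2))*(u*(1-u)*v*(1-v)))*((c0*a1-c1*a0)*(b0-a0)+(a0*b1-a1*b0)*(a0-c0)) + (-(((1-u)^2+u^2))*(t*(1-t)*v*(1-v)))*((a0*b1-a1*b0)*(c0-b0)+(b0*c1-b1*c0)*(b0-a0)) + (-(((1-v)^2+v^2))*(t*(1-t)*u*(1-u)))*((b0*c1-b1*c0)*(a0-c0)+(c0*a1-c1*a0)*(c0-b0))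

def cF (a0 a1 b0 b1 c0 c1 t u v : ℝ) : ℝ :=
  (t*(1-t)*u*(1-u)*v*(1-v))*((b0*c1-b1*c0)^2+(c0*a1-c1*a0)^2+(a0*b1-a1*b0)^2) + (-(((1-t)^2+t^2))*(u*(1-u)*v*(1-v)))*(c0*a1-c1*a0)*(a0*b1-a1*b0) + (-(((1-u)^2+u^2))*(t*(1-t)*v*(1-v)))*(a0*b1-a1*b0)*(b0*c1-b1*c0) + (-(((1-v)^2+v^2))*(t*(1-t)*u*(1-u)))*(b0*c1-b1*c0)*(c0*a1-c1*a0)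

theorem eval_gen (a0 a1 b0 b1 c0 c1 t u v x y : ℝ) :
    cA a0 a1 b0 b1 c0 c1 t u v * x^2 + cB a0 a1 b0 b1 c0 c1 t u v * x*y + cC a0 a1 b0 b1 c0 c1 t u v * y^2 + cD a0 a1 b0 b1 c0 c1 t u v * x + cE a0 a1 b0 b1 c0 c1 t u v * y + cF a0 a1 b0 b1 c0 c1 t u v
    = (t*(1-t)*u*(1-u)*v*(1-v))*(((b0*c1-b1*c0)+(b1-c1)*x+(c0-b0)*y)^2+((c0*a1-c1*a0)+(c1-a1)*x+(a0-c0)*y)^2+((a0*b1-a1*b0)+(a1-b1)*x+(b0-a0)*y)^2) + (-(((1-t)^2+t^2))*(u*(1-u)*v*(1-v)))*((c0*a1-c1*a0)+(c1-a1)*x+(a0-c0)*y)*((a0*b1-a1*b0)+(a1-b1)*x+(b0-a0)*y) + (-(((1-u)^2+u^2))*(t*(1-t)*v*(1-v)))*((a0*b1-a1*b0)+(a1-b1)*x+(b0-a0)*y)*((b0*c1-b1*c0)+(b1-c1)*x+(c0-b0)*y) + (-(((1-v)^2+v^2))*(t*(1-t)*u*(1-u)))*((b0*c1-b1*c0)+(b1-c1)*x+(c0-b0)*y)*((c0*a1-c1*a0)+(c1-a1)*x+(a0-c0)*y)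 := by
  unfold cA cB cC cD cE cF; ring

theorem evalA1 (a0 a1 b0 b1 c0 c1 t u v : ℝ) :
    cA a0 a1 b0 b1 c0 c1 t u v * (b0+t*(c0-b0))^2 + cB a0 a1 b0 b1 c0 c1 t u v * (b0+t*(c0-b0))*(b1+t*(c1-b1)) + cC a0 a1 b0 b1 c0 c1 t u v * (b1+t*(c1-b1))^2 + cD a0 a1 b0 b1 c0 c1 t u v * (b0+t*(c0-b0)) + cE a0 a1 b0 b1 c0 c1 t u v * (b1+t*(c1-b1)) + cF a0 a1 b0 b1 c0 c1 t u v = 0 := by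
  rw [eval_gen]; ring

theorem evalA2 (a0 a1 b0 b1 c0 c1 t u v : ℝ) :
    cA a0 a1 b0 b1 c0 c1 t u v * (b0+(1-t)*(c0-b0))^2 + cB a0 a1 b0 b1 c0 c1 t u v * (b0+(1-t)*(c0-b0))*(b1+(1-t)*(c1-b1)) + cC a0 a1 b0 b1 c0 c1 t u v * (b1+(1-t)*(c1-b1))^2 + cD a0 a1 b0 b1 c0 c1 t u v * (b0+(1-t)*(c0-b0)) + cE a0 a1 b0 b1 c0 c1 t u v * (b1+(1-t)*(c1-b1)) + cF a0 a1 b0 b1 c0 c1 t u v = 0 := by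
  rw [eval_gen]; ring

theorem evalB1 (a0 a1 b0 b1 c0 c1 t u v : ℝ) :
    cA a0 a1 b0 b1 c0 c1 t u v * (c0+u*(a0-c0))^2 + cB a0 a1 b0 b1 c0 c1 t u v * (c0+u*(a0-c0))*(c1+u*(a1-c1)) + cC a0 a1 b0 b1 c0 c1 t u v * (c1+u*(a1-c1))^2 + cD a0 a1 b0 b1 c0 c1 t u v * (c0+u*(a0-c0)) + cE a0 a1 b0 b1 c0 c1 t u v * (c1+u*(a1-c1)) + cF a0 a1 b0 b1 c0 c1 t u v = 0 := by
  rw [eval_gen]; ring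

theorem evalB2 (a0 a1 b0 b1 c0 c1 t u v : ℝ) :
    cA a0 a1 b0 b1 c0 c1 t u v * (c0+(1-u)*(a0-c0))^2 + cB a0 a1 b0 b1 c0 c1 t u v * (c0+(1-u)*(a0-c0))*(c1+(1-u)*(a1-c1)) + cC a0 a1 b0 b1 c0 c1 t u v * (c1+(1-u)*(a1-c1))^2 + cD a0 a1 b0 b1 c0 c1 t u v * (c0+(1-u)*(a0-c0)) + cE a0 a1 b0 b1 c0 c1 t u v * (c1+(1-u)*(a1-c1)) + cF a0 a1 b0 b1 c0 c1 t u v = 0 := by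
  rw [eval_gen]; ring

theorem evalC1 (a0 a1 b0 b1 c0 c1 t u v : ℝ) :
    cA a0 a1 b0 b1 c0 c1 t u v * (a0+v*(b0-a0))^2 + cB a0 a1 b0 b1 c0 c1 t u v * (a0+v*(b0-a0))*(a1+v*(b1-a1)) + cC a0 a1 b0 b1 c0 c1 t u v * (a1+v*(b1-a1))^2 + cD a0 a1 b0 b1 c0 c1 t u v * (a0+v*(b0-a0)) + cE a0 a1 b0 b1 c0 c1 t u v * (a1+v*(b1-a1)) + cF a0 a1 b0 b1 c0 c1 t u v = 0 := by
  rw [eval_gen]; ring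

theorem evalC2 (a0 a1 b0 b1 c0 c1 t u v : ℝ) :
    cA a0 a1 b0 b1 c0 c1 t u v * (a0+(1-v)*(b0-a0))^2 + cB a0 a1 b0 b1 c0 c1 t u v * (a0+(1-v)*(b0-a0))*(a1+(1-v)*(b1-a1)) + cC a0 a1 b0 b1 c0 c1 t u v * (a1+(1-v)*(b1-a1))^2 + cD a0 a1 b0 b1 c0 c1 t u v * (a0+(1-v)*(b0-a0)) + cE a0 a1 b0 b1 c0 c1 t u v * (a1+(1-v)*(b1-a1)) + cF a0 a1 b0 b1 c0 c1 t u v = 0 := by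
  rw [eval_gen]; ring

theorem evalVertA (a0 a1 b0 b1 c0 c1 t u v : ℝ) :
    cA a0 a1 b0 b1 c0 c1 t u v * a0^2 + cB a0 a1 b0 b1 c0 c1 t u v * a0*a1 + cC a0 a1 b0 b1 c0 c1 t u v * a1^2 + cD a0 a1 b0 b1 c0 c1 t u v * a0 + cE a0 a1 b0 b1 c0 c1 t u v * a1 + cF a0 a1 b0 b1 c0 c1 t u v
    = (t*(1-t)*u*(1-u)*v*(1-v)) * ((b0-a0)*(c1-a1)-(b1-a1)*(c0-a0))^2 := by
  rw [eval_gen]; ring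

end IsotomicAux


lemma pt_ext {p q : Pt} (h0 : p 0 = q 0) (h1 : p 1 = q 1) : p = q := by
  ext i; fin_cases i <;> assumption

lemma det_ne_zero_of_not_collinear {A B C : Pt} (h : ¬Collinear ℝ ({A,B,C} : Set Pt)) :
    (B 0 - A 0)*(C 1 - A 1) - (B 1 - A 1)*(C 0 - A 0) ≠ 0 := by
  intro hd
  apply h
  rw [collinear_iff_of_mem (Set.mem_insert A _)]
  by_cases hB : B = A
  · refine ⟨C -ᵥ A, ?_⟩
    rintro p (rfl | rfl | rfl)
    · exact ⟨0, by simp⟩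
    · exact ⟨0, by simp [hB]⟩
    · exact ⟨1, by simp⟩
  · refine ⟨B -ᵥ A, ?_⟩
    rintro p (rfl | rfl | rfl)
    · exact ⟨0, by simp⟩
    · exact ⟨1, by simp⟩
    · have hcoord : B 0 - A 0 ≠ 0 ∨ B 1 - A 1 ≠ 0 := by
        by_contra hc
        push_neg at hc
        exact hB (pt_ext (by linarith [hc.1]) (by linarith [hc.2]))
      rcases hcoord with h0 | h0
      · refine ⟨(p 0 - A 0)/(B 0 - A 0), pt_ext ?_ ?_⟩ <;>
        · simp [vsub_eq_sub, vadd_eq_add, PiLp.smul_apply, PiLp.sub_apply, PiLp.add_apply,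
            smul_eq_mul]
          field_simp
          try nlinarith [hd]
      · refine ⟨(p 1 - A 1)/(B 1 - A 1), pt_ext ?_ ?_⟩ <;>
        · simp [vsub_eq_sub, vadd_eq_add, PiLp.smul_apply, PiLp.sub_apply, PiLp.add_apply,
            smul_eq_mul]
          field_simp
          try nlinarith [hd]

set_option maxHeartbeats 1000000 in
/-- Theorem 3: the feet of three pairs of isotomically conjugate cevians are conconic. -/
theorem isotomic_cevian_feet_conconic
    (A B C A₁ A₂ B₁ B₂ C₁ C₂ : Pt)
    (hABC : AffineIndependent ℝ ![A, B, C])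
    (hA₁ : A₁ ∈ line[ℝ, B, C]) (hA₂ : A₂ ∈ line[ℝ, B, C])
    (hB₁ : B₁ ∈ line[ℝ, C, A]) (hB₂ : B₂ ∈ line[ℝ, C, A])
    (hC₁ : C₁ ∈ line[ℝ, A, B]) (hC₂ : C₂ ∈ line[ℝ, A, B])
    (hne : ∀ P ∈ ({A₁, A₂, B₁, B₂, C₁, C₂} : Set Pt), P ≠ A ∧ P ≠ B ∧ P ≠ C)
    (hisoA : midpoint ℝ A₁ A₂ = midpoint ℝ B C)
    (hisoB : midpoint ℝ B₁ B₂ = midpoint ℝ C A)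
    (hisoC : midpoint ℝ C₁ C₂ = midpoint ℝ A B) :
    Conconic {A₁, A₂, B₁, B₂, C₁, C₂} := by
  have hncol := affineIndependent_iff_not_collinear_set.mp hABC
  have hD := det_ne_zero_of_not_collinear hncol
  rw [← vsub_vadd A₁ B] at hA₁
  obtain ⟨t, ht⟩ := vadd_left_mem_affineSpan_pair.mp hA₁
  rw [← vsub_vadd B₁ C] at hB₁
  obtain ⟨u, hu⟩ := vadd_left_mem_affineSpan_pair.mp hB₁
  rw [← vsub_vadd C₁ A] at hC₁
  obtain ⟨v, hv⟩ := vadd_left_mem_affineSpan_pair.mp hC₁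
  have coord : ∀ (P Q R : Pt) (r : ℝ), r • (R -ᵥ Q) = P -ᵥ Q →
      ∀ i, P i = Q i + r * (R i - Q i) := by
    intro P Q R r h i
    have h0 := congr_arg (fun z : Pt => z i) h
    simp only [vsub_eq_sub, PiLp.smul_apply, PiLp.sub_apply, smul_eq_mul] at h0
    linarith
  have msum : ∀ (P Q R S : Pt), midpoint ℝ P Q = midpoint ℝ R S →
      ∀ i, P i + Q i = R i + S i := by
    intro P Q R S h i
    have h0 := congr_arg (fun z : Pt => z i) h
    simp only [midpoint_eq_smul_add, PiLp.smul_apply, PiLp.add_apply, smul_eq_mul] at h0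
    have h2 : (⅟2 : ℝ) = 1/2 := by norm_num
    rw [h2] at h0
    linarith
  have hA₁ne := hne A₁ (by simp)
  have hB₁ne := hne B₁ (by simp)
  have hC₁ne := hne C₁ (by simp)
  have ht0 : t ≠ 0 := by
    rintro rfl; rw [zero_smul] at ht; exact hA₁ne.2.1 (vsub_eq_zero_iff_eq.mp ht.symm)
  have ht1 : t ≠ 1 := by
    rintro rfl; rw [one_smul] at ht; exact hA₁ne.2.2 (vsub_left_cancel ht).symm
  have hu0 : u ≠ 0 := by
    rintro rfl; rw [zero_smul] at hu; exact hB₁ne.2.2 (vsub_eq_zero_iff_eq.mp hu.symm)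
  have hu1 : u ≠ 1 := by
    rintro rfl; rw [one_smul] at hu; exact hB₁ne.1 (vsub_left_cancel hu).symm
  have hv0 : v ≠ 0 := by
    rintro rfl; rw [zero_smul] at hv; exact hC₁ne.1 (vsub_eq_zero_iff_eq.mp hv.symm)
  have hv1 : v ≠ 1 := by
    rintro rfl; rw [one_smul] at hv; exact hC₁ne.2.1 (vsub_left_cancel hv).symm
  have hx1 : A₁ 0 = B 0 + t * (C 0 - B 0) := coord A₁ B C t ht 0
  have hy1 : A₁ 1 = B 1 + t * (C 1 - B 1) := coord A₁ B C t ht 1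
  have hx3 : B₁ 0 = C 0 + u * (A 0 - C 0) := coord B₁ C A u hu 0
  have hy3 : B₁ 1 = C 1 + u * (A 1 - C 1) := coord B₁ C A u hu 1
  have hx5 : C₁ 0 = A 0 + v * (B 0 - A 0) := coord C₁ A B v hv 0
  have hy5 : C₁ 1 = A 1 + v * (B 1 - A 1) := coord C₁ A B v hv 1
  have hx2 : A₂ 0 = B 0 + (1 - t) * (C 0 - B 0) := by
    have h := msum A₁ A₂ B C hisoA 0; rw [hx1] at h; linarith
  have hy2 : A₂ 1 = B 1 + (1 - t) * (C 1 - B 1) := by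
    have h := msum A₁ A₂ B C hisoA 1; rw [hy1] at h; linarith
  have hx4 : B₂ 0 = C 0 + (1 - u) * (A 0 - C 0) := by
    have h := msum B₁ B₂ C A hisoB 0; rw [hx3] at h; linarith
  have hy4 : B₂ 1 = C 1 + (1 - u) * (A 1 - C 1) := by
    have h := msum B₁ B₂ C A hisoB 1; rw [hy3] at h; linarith
  have hx6 : C₂ 0 = A 0 + (1 - v) * (B 0 - A 0) := by
    have h := msum C₁ C₂ A B hisoC 0; rw [hx5] at h; linarith
  have hy6 : C₂ 1 = A 1 + (1 - v) * (B 1 - A 1) := by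
    have h := msum C₁ C₂ A B hisoC 1; rw [hy5] at h; linarith
  refine ⟨IsotomicAux.cA (A 0) (A 1) (B 0) (B 1) (C 0) (C 1) t u v, IsotomicAux.cB (A 0) (A 1) (B 0) (B 1) (C 0) (C 1) t u v, IsotomicAux.cC (A 0) (A 1) (B 0) (B 1) (C 0) (C 1) t u v,
    IsotomicAux.cD (A 0) (A 1) (B 0) (B 1) (C 0) (C 1) t u v, IsotomicAux.cE (A 0) (A 1) (B 0) (B 1) (C 0) (C 1) t u v, IsotomicAux.cF (A 0) (A 1) (B 0) (B 1) (C 0) (C 1) t u v, ?_, ?_⟩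
  · intro hz
    simp only [Prod.mk.injEq] at hz
    obtain ⟨h1, h2, h3, h4, h5, h6⟩ := hz
    have key := IsotomicAux.evalVertA (A 0) (A 1) (B 0) (B 1) (C 0) (C 1) t u v
    rw [h1, h2, h3, h4, h5, h6] at key
    simp only [zero_mul, zero_add, add_zero] at key
    have hs : t * (1 - t) * u * (1 - u) * v * (1 - v) ≠ 0 :=
      mul_ne_zero (mul_ne_zero (mul_ne_zero (mul_ne_zero (mul_ne_zero ht0
        (sub_ne_zero.mpr (Ne.symm ht1))) hu0) (sub_ne_zero.mpr (Ne.symm hu1))) hv0)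
        (sub_ne_zero.mpr (Ne.symm hv1))
    exact mul_ne_zero hs (pow_ne_zero 2 hD) key.symm
  · rintro P hP
    simp only [Set.mem_insert_iff, Set.mem_singleton_iff] at hP
    rcases hP with rfl | rfl | rfl | rfl | rfl | rfl
    · rw [hx1, hy1]; exact IsotomicAux.evalA1 (A 0) (A 1) (B 0) (B 1) (C 0) (C 1) t u v
    · rw [hx2, hy2]; exact IsotomicAux.evalA2 (A 0) (A 1) (B 0) (B 1) (C 0) (C 1) t u v
    · rw [hx3, hy3]; exact IsotomicAux.evalB1 (A 0) (A 1) (B 0) (B 1) (C 0) (C 1) t u v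
    · rw [hx4, hy4]; exact IsotomicAux.evalB2 (A 0) (A 1) (B 0) (B 1) (C 0) (C 1) t u v
    · rw [hx5, hy5]; exact IsotomicAux.evalC1 (A 0) (A 1) (B 0) (B 1) (C 0) (C 1) t u v
    · rw [hx6, hy6]; exact IsotomicAux.evalC2 (A 0) (A 1) (B 0) (B 1) (C 0) (C 1) t u v
end

section
/- Theorem 4 (cevians through two points): let P₁ and P₂ be two points of the interior of triangle ABC, and suppose that for each i ∈ {1,2} the cevians AAᵢ, BBᵢ, CCᵢ all pass through Pᵢ (i.e. Aᵢ lies on line BC and on line APᵢ, Bᵢ lies on line CA and on line BPᵢ, Cᵢ lies on line AB and on line CPᵢ). Then the six cevian feet A₁, A₂, B₁, B₂, C₁, C₂ are conconic. -/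
open EuclideanGeometry

/-- `P` lies in the interior of the triangle `ABC`: it is a strictly positive convex
combination of the vertices. -/
def InTriangleInterior (A B C P : Pt) : Prop :=
  ∃ a b c : ℝ, 0 < a ∧ 0 < b ∧ 0 < c ∧ a + b + c = 1 ∧ P = a • A + b • B + c • C

lemma line_param {p q X : Pt} (h : X ∈ line[ℝ, p, q]) : ∃ r : ℝ, X = r • (q - p) + p := by
  rw [show X = (X -ᵥ p) +ᵥ p from (vsub_vadd X p).symm, vadd_left_mem_affineSpan_pair] at h
  obtain ⟨r, hr⟩ := h
  exact ⟨r, by rw [show q - p = q -ᵥ p from rfl, hr]; exact (vsub_vadd X p).symm⟩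

lemma apply_comb (r : ℝ) (p q : Pt) (i : Fin 2) :
    (r • (q - p) + p) i = r * (q i - p i) + p i := by
  simp [PiLp.add_apply, PiLp.smul_apply, PiLp.sub_apply, smul_eq_mul]

lemma apply_comb3 (u v w : ℝ) (A B C : Pt) (i : Fin 2) :
    (u • A + v • B + w • C) i = u * A i + v * B i + w * C i := by
  simp [PiLp.add_apply, PiLp.smul_apply, smul_eq_mul]

lemma line_coords {p q X : Pt} (h : X ∈ line[ℝ, p, q]) :
    ∃ r : ℝ, X 0 = r * (q 0 - p 0) + p 0 ∧ X 1 = r * (q 1 - p 1) + p 1 := by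
  obtain ⟨r, hr⟩ := line_param h
  exact ⟨r, by rw [hr, apply_comb], by rw [hr, apply_comb]⟩

lemma det_ne_zero_of_affineIndependent {A B C : Pt} (h : AffineIndependent ℝ ![A, B, C]) :
    (A 0 - C 0) * (B 1 - C 1) - (A 1 - C 1) * (B 0 - C 0) ≠ 0 := by
  intro hD
  have hinj := h.injective
  rw [affineIndependent_iff] at h
  have h1 := h Finset.univ ![B 1 - C 1, -(A 1 - C 1), (A 1 - C 1) - (B 1 - C 1)]
    (by simp [Fin.sum_univ_three]; try ring)
    (by
      ext i
      fin_cases i <;>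
        simp [Fin.sum_univ_three, PiLp.add_apply, PiLp.smul_apply, smul_eq_mul] <;>
        first | linear_combination hD | linear_combination -hD | ring)
  have h2 := h Finset.univ ![B 0 - C 0, -(A 0 - C 0), (A 0 - C 0) - (B 0 - C 0)]
    (by simp [Fin.sum_univ_three]; try ring)
    (by
      ext i
      fin_cases i <;>
        simp [Fin.sum_univ_three, PiLp.add_apply, PiLp.smul_apply, smul_eq_mul] <;>
        first | linear_combination hD | linear_combination -hD | ring)
  have e1 : A 1 = C 1 := by have := h1 1 (Finset.mem_univ _); simp at this; linarith
  have e0 : A 0 = C 0 := by have := h2 1 (Finset.mem_univ _); simp at this; linarith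
  have hAC : A = C := by
    ext i; fin_cases i
    · exact e0
    · exact e1
  have : (0 : Fin 3) = 2 := hinj (by simp [hAC])
  exact absurd this (by decide)

/-- Theorem 4: the feet of two triples of concurrent cevians are conconic. -/
theorem concurrent_cevian_feet_conconic
    (A B C A₁ A₂ B₁ B₂ C₁ C₂ P₁ P₂ : Pt)
    (hABC : AffineIndependent ℝ ![A, B, C])
    (hP₁ : InTriangleInterior A B C P₁) (hP₂ : InTriangleInterior A B C P₂)
    (hA₁ : A₁ ∈ line[ℝ, B, C]) (hA₂ : A₂ ∈ line[ℝ, B, C])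
    (hB₁ : B₁ ∈ line[ℝ, C, A]) (hB₂ : B₂ ∈ line[ℝ, C, A])
    (hC₁ : C₁ ∈ line[ℝ, A, B]) (hC₂ : C₂ ∈ line[ℝ, A, B])
    (hne : ∀ P ∈ ({A₁, A₂, B₁, B₂, C₁, C₂} : Set Pt), P ≠ A ∧ P ≠ B ∧ P ≠ C)
    (hA₁P : A₁ ∈ line[ℝ, A, P₁]) (hB₁P : B₁ ∈ line[ℝ, B, P₁]) (hC₁P : C₁ ∈ line[ℝ, C, P₁])
    (hA₂P : A₂ ∈ line[ℝ, A, P₂]) (hB₂P : B₂ ∈ line[ℝ, B, P₂]) (hC₂P : C₂ ∈ line[ℝ, C, P₂]) :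
    Conconic {A₁, A₂, B₁, B₂, C₁, C₂} := by
  obtain ⟨u1, v1, w1, hu1, hv1, hw1, hsum1, hP1rep⟩ := hP₁
  obtain ⟨u2, v2, w2, hu2, hv2, hw2, hsum2, hP2rep⟩ := hP₂
  have hwe1 : w1 = 1 - u1 - v1 := by linarith
  have hwe2 : w2 = 1 - u2 - v2 := by linarith
  subst hwe1
  subst hwe2
  obtain ⟨D, hD⟩ : ∃ x : ℝ, x = (A 0 - C 0) * (B 1 - C 1) - (A 1 - C 1) * (B 0 - C 0) := ⟨_, rfl⟩
  have hDne : D ≠ 0 := by rw [hD]; exact det_ne_zero_of_affineIndependent hABC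
  obtain ⟨al1, hal1⟩ : ∃ x : ℝ, x = u1 * D := ⟨_, rfl⟩
  obtain ⟨be1, hbe1⟩ : ∃ x : ℝ, x = v1 * D := ⟨_, rfl⟩
  obtain ⟨ga1, hga1⟩ : ∃ x : ℝ, x = (1 - u1 - v1) * D := ⟨_, rfl⟩
  obtain ⟨al2, hal2⟩ : ∃ x : ℝ, x = u2 * D := ⟨_, rfl⟩
  obtain ⟨be2, hbe2⟩ : ∃ x : ℝ, x = v2 * D := ⟨_, rfl⟩
  obtain ⟨ga2, hga2⟩ : ∃ x : ℝ, x = (1 - u2 - v2) * D := ⟨_, rfl⟩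
  obtain ⟨cA, hcA⟩ : ∃ x : ℝ, x = be1 * be2 * ga1 * ga2 := ⟨_, rfl⟩
  obtain ⟨cB, hcB⟩ : ∃ x : ℝ, x = al1 * al2 * ga1 * ga2 := ⟨_, rfl⟩
  obtain ⟨cC, hcC⟩ : ∃ x : ℝ, x = al1 * al2 * be1 * be2 := ⟨_, rfl⟩
  obtain ⟨cBC, hcBC⟩ : ∃ x : ℝ, x = -(al1 * al2 * (be1 * ga2 + be2 * ga1)) := ⟨_, rfl⟩
  obtain ⟨cCA, hcCA⟩ : ∃ x : ℝ, x = -(be1 * be2 * (al1 * ga2 + al2 * ga1)) := ⟨_, rfl⟩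
  obtain ⟨cAB, hcAB⟩ : ∃ x : ℝ, x = -(ga1 * ga2 * (al1 * be2 + al2 * be1)) := ⟨_, rfl⟩
  obtain ⟨p1, hp1⟩ : ∃ x : ℝ, x = B 1 - C 1 := ⟨_, rfl⟩
  obtain ⟨q1, hq1⟩ : ∃ x : ℝ, x = -(B 0 - C 0) := ⟨_, rfl⟩
  obtain ⟨r1, hr1⟩ : ∃ x : ℝ, x = C 1 * (B 0 - C 0) - C 0 * (B 1 - C 1) := ⟨_, rfl⟩
  obtain ⟨p2, hp2⟩ : ∃ x : ℝ, x = -(A 1 - C 1) := ⟨_, rfl⟩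
  obtain ⟨q2, hq2⟩ : ∃ x : ℝ, x = A 0 - C 0 := ⟨_, rfl⟩
  obtain ⟨r2, hr2⟩ : ∃ x : ℝ, x = C 0 * (A 1 - C 1) - C 1 * (A 0 - C 0) := ⟨_, rfl⟩
  obtain ⟨p3, hp3⟩ : ∃ x : ℝ, x = -(p1 + p2) := ⟨_, rfl⟩
  obtain ⟨q3, hq3⟩ : ∃ x : ℝ, x = -(q1 + q2) := ⟨_, rfl⟩
  obtain ⟨r3, hr3⟩ : ∃ x : ℝ, x = D - r1 - r2 := ⟨_, rfl⟩
  obtain ⟨k0, hk0⟩ : ∃ x : ℝ, x = cA * p1 ^ 2 + cB * p2 ^ 2 + cC * p3 ^ 2 + cBC * (p2 * p3) + cCA * (p3 * p1) +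
    cAB * (p1 * p2) := ⟨_, rfl⟩
  obtain ⟨k1, hk1⟩ : ∃ x : ℝ, x = 2 * cA * p1 * q1 + 2 * cB * p2 * q2 + 2 * cC * p3 * q3 +
    cBC * (p2 * q3 + p3 * q2) + cCA * (p3 * q1 + p1 * q3) + cAB * (p1 * q2 + p2 * q1) := ⟨_, rfl⟩
  obtain ⟨k2, hk2⟩ : ∃ x : ℝ, x = cA * q1 ^ 2 + cB * q2 ^ 2 + cC * q3 ^ 2 + cBC * (q2 * q3) + cCA * (q3 * q1) +
    cAB * (q1 * q2) := ⟨_, rfl⟩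
  obtain ⟨k3, hk3⟩ : ∃ x : ℝ, x = 2 * cA * p1 * r1 + 2 * cB * p2 * r2 + 2 * cC * p3 * r3 +
    cBC * (p2 * r3 + p3 * r2) + cCA * (p3 * r1 + p1 * r3) + cAB * (p1 * r2 + p2 * r1) := ⟨_, rfl⟩
  obtain ⟨k4, hk4⟩ : ∃ x : ℝ, x = 2 * cA * q1 * r1 + 2 * cB * q2 * r2 + 2 * cC * q3 * r3 +
    cBC * (q2 * r3 + q3 * r2) + cCA * (q3 * r1 + q1 * r3) + cAB * (q1 * r2 + q2 * r1) := ⟨_, rfl⟩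
  obtain ⟨k5, hk5⟩ : ∃ x : ℝ, x = cA * r1 ^ 2 + cB * r2 ^ 2 + cC * r3 ^ 2 + cBC * (r2 * r3) + cCA * (r3 * r1) +
    cAB * (r1 * r2) := ⟨_, rfl⟩
  have key : ∀ x0 x1 : ℝ, k0 * x0 ^ 2 + k1 * x0 * x1 + k2 * x1 ^ 2 + k3 * x0 + k4 * x1 + k5 =
      cA * (p1 * x0 + q1 * x1 + r1) ^ 2 + cB * (p2 * x0 + q2 * x1 + r2) ^ 2 +
      cC * (p3 * x0 + q3 * x1 + r3) ^ 2 +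
      cBC * ((p2 * x0 + q2 * x1 + r2) * (p3 * x0 + q3 * x1 + r3)) +
      cCA * ((p3 * x0 + q3 * x1 + r3) * (p1 * x0 + q1 * x1 + r1)) +
      cAB * ((p1 * x0 + q1 * x1 + r1) * (p2 * x0 + q2 * x1 + r2)) := by
    intro x0 x1
    simp only [hk0, hk1, hk2, hk3, hk4, hk5, hp3, hq3, hr3]
    ring
  have hP10 : P₁ 0 = u1 * A 0 + v1 * B 0 + (1 - u1 - v1) * C 0 := by
    rw [hP1rep, apply_comb3]
  have hP11 : P₁ 1 = u1 * A 1 + v1 * B 1 + (1 - u1 - v1) * C 1 := by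
    rw [hP1rep, apply_comb3]
  have hP20 : P₂ 0 = u2 * A 0 + v2 * B 0 + (1 - u2 - v2) * C 0 := by
    rw [hP2rep, apply_comb3]
  have hP21 : P₂ 1 = u2 * A 1 + v2 * B 1 + (1 - u2 - v2) * C 1 := by
    rw [hP2rep, apply_comb3]
  obtain ⟨sa1, hsa1x, hsa1y⟩ := line_coords hA₁
  obtain ⟨ta1, hta1x, hta1y⟩ := line_coords hA₁P
  have hL1a1 : p1 * A₁ 0 + q1 * A₁ 1 + r1 = 0 := by
    simp only [hp1, hq1, hr1, hsa1x, hsa1y]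
    ring
  have hL2a1 : p2 * A₁ 0 + q2 * A₁ 1 + r2 = ta1 * be1 := by
    simp only [hp2, hq2, hr2, hta1x, hta1y, hP10, hP11, hbe1, hD]
    ring
  have hL3a1 : p3 * A₁ 0 + q3 * A₁ 1 + r3 = ta1 * ga1 := by
    simp only [hp3, hq3, hr3, hp3, hq3, hr3, hp1, hq1, hr1, hp2, hq2, hr2, hD, hta1x, hta1y, hP10, hP11, hga1, hD]
    ring
  obtain ⟨sa2, hsa2x, hsa2y⟩ := line_coords hA₂
  obtain ⟨ta2, hta2x, hta2y⟩ := line_coords hA₂P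
  have hL1a2 : p1 * A₂ 0 + q1 * A₂ 1 + r1 = 0 := by
    simp only [hp1, hq1, hr1, hsa2x, hsa2y]
    ring
  have hL2a2 : p2 * A₂ 0 + q2 * A₂ 1 + r2 = ta2 * be2 := by
    simp only [hp2, hq2, hr2, hta2x, hta2y, hP20, hP21, hbe2, hD]
    ring
  have hL3a2 : p3 * A₂ 0 + q3 * A₂ 1 + r3 = ta2 * ga2 := by
    simp only [hp3, hq3, hr3, hp3, hq3, hr3, hp1, hq1, hr1, hp2, hq2, hr2, hD, hta2x, hta2y, hP20, hP21, hga2, hD]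
    ring
  obtain ⟨sb1, hsb1x, hsb1y⟩ := line_coords hB₁
  obtain ⟨tb1, htb1x, htb1y⟩ := line_coords hB₁P
  have hL2b1 : p2 * B₁ 0 + q2 * B₁ 1 + r2 = 0 := by
    simp only [hp2, hq2, hr2, hsb1x, hsb1y]
    ring
  have hL1b1 : p1 * B₁ 0 + q1 * B₁ 1 + r1 = tb1 * al1 := by
    simp only [hp1, hq1, hr1, htb1x, htb1y, hP10, hP11, hal1, hD]
    ring
  have hL3b1 : p3 * B₁ 0 + q3 * B₁ 1 + r3 = tb1 * ga1 := by
    simp only [hp3, hq3, hr3, hp3, hq3, hr3, hp1, hq1, hr1, hp2, hq2, hr2, hD, htb1x, htb1y, hP10, hP11, hga1, hD]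
    ring
  obtain ⟨sb2, hsb2x, hsb2y⟩ := line_coords hB₂
  obtain ⟨tb2, htb2x, htb2y⟩ := line_coords hB₂P
  have hL2b2 : p2 * B₂ 0 + q2 * B₂ 1 + r2 = 0 := by
    simp only [hp2, hq2, hr2, hsb2x, hsb2y]
    ring
  have hL1b2 : p1 * B₂ 0 + q1 * B₂ 1 + r1 = tb2 * al2 := by
    simp only [hp1, hq1, hr1, htb2x, htb2y, hP20, hP21, hal2, hD]
    ring
  have hL3b2 : p3 * B₂ 0 + q3 * B₂ 1 + r3 = tb2 * ga2 := by
    simp only [hp3, hq3, hr3, hp3, hq3, hr3, hp1, hq1, hr1, hp2, hq2, hr2, hD, htb2x, htb2y, hP20, hP21, hga2, hD]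
    ring
  obtain ⟨sc1, hsc1x, hsc1y⟩ := line_coords hC₁
  obtain ⟨tc1, htc1x, htc1y⟩ := line_coords hC₁P
  have hL3c1 : p3 * C₁ 0 + q3 * C₁ 1 + r3 = 0 := by
    simp only [hp3, hq3, hr3, hp3, hq3, hr3, hp1, hq1, hr1, hp2, hq2, hr2, hD, hsc1x, hsc1y]
    ring
  have hL1c1 : p1 * C₁ 0 + q1 * C₁ 1 + r1 = tc1 * al1 := by
    simp only [hp1, hq1, hr1, htc1x, htc1y, hP10, hP11, hal1, hD]
    ring
  have hL2c1 : p2 * C₁ 0 + q2 * C₁ 1 + r2 = tc1 * be1 := by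
    simp only [hp2, hq2, hr2, htc1x, htc1y, hP10, hP11, hbe1, hD]
    ring
  obtain ⟨sc2, hsc2x, hsc2y⟩ := line_coords hC₂
  obtain ⟨tc2, htc2x, htc2y⟩ := line_coords hC₂P
  have hL3c2 : p3 * C₂ 0 + q3 * C₂ 1 + r3 = 0 := by
    simp only [hp3, hq3, hr3, hp3, hq3, hr3, hp1, hq1, hr1, hp2, hq2, hr2, hD, hsc2x, hsc2y]
    ring
  have hL1c2 : p1 * C₂ 0 + q1 * C₂ 1 + r1 = tc2 * al2 := by
    simp only [hp1, hq1, hr1, htc2x, htc2y, hP20, hP21, hal2, hD]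
    ring
  have hL2c2 : p2 * C₂ 0 + q2 * C₂ 1 + r2 = tc2 * be2 := by
    simp only [hp2, hq2, hr2, htc2x, htc2y, hP20, hP21, hbe2, hD]
    ring
  refine ⟨k0, k1, k2, k3, k4, k5, ?_, ?_⟩
  · intro hzero
    simp only [Prod.mk.injEq] at hzero
    obtain ⟨h0, h1, h2, h3, h4, h5⟩ := hzero
    have hAv := key (A 0) (A 1)
    have hLAA : p1 * A 0 + q1 * A 1 + r1 = D := by
      simp only [hp1, hq1, hr1, hD]; ring
    have hLBA : p2 * A 0 + q2 * A 1 + r2 = 0 := by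
      simp only [hp2, hq2, hr2]; ring
    have hLCA : p3 * A 0 + q3 * A 1 + r3 = 0 := by
      simp only [hp3, hq3, hr3, hp1, hq1, hr1, hp2, hq2, hr2, hD]; ring
    rw [h0, h1, h2, h3, h4, h5, hLAA, hLBA, hLCA] at hAv
    have hcontr : v1 * v2 * ((1 - u1 - v1) * (1 - u2 - v2)) * D ^ 6 = 0 := by
      simp only [hcA, hbe1, hbe2, hga1, hga2] at hAv
      first | linear_combination hAv | linear_combination -hAv
    have hpos : v1 * v2 * ((1 - u1 - v1) * (1 - u2 - v2)) * D ^ 6 ≠ 0 :=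
      mul_ne_zero (mul_ne_zero (mul_ne_zero (ne_of_gt hv1) (ne_of_gt hv2))
        (mul_ne_zero (ne_of_gt hw1) (ne_of_gt hw2))) (pow_ne_zero 6 hDne)
    exact hpos hcontr
  · intro P hP
    simp only [Set.mem_insert_iff, Set.mem_singleton_iff] at hP
    rcases hP with rfl | rfl | rfl | rfl | rfl | rfl
    · rw [key, hL1a1, hL2a1, hL3a1]
      simp only [hcA, hcB, hcC, hcBC, hcCA, hcAB, hal1, hal2, hbe1, hbe2, hga1, hga2]
      ring
    · rw [key, hL1a2, hL2a2, hL3a2]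
      simp only [hcA, hcB, hcC, hcBC, hcCA, hcAB, hal1, hal2, hbe1, hbe2, hga1, hga2]
      ring
    · rw [key, hL1b1, hL2b1, hL3b1]
      simp only [hcA, hcB, hcC, hcBC, hcCA, hcAB, hal1, hal2, hbe1, hbe2, hga1, hga2]
      ring
    · rw [key, hL1b2, hL2b2, hL3b2]
      simp only [hcA, hcB, hcC, hcBC, hcCA, hcAB, hal1, hal2, hbe1, hbe2, hga1, hga2]
      ring
    · rw [key, hL1c1, hL2c1, hL3c1]
      simp only [hcA, hcB, hcC, hcBC, hcCA, hcAB, hal1, hal2, hbe1, hbe2, hga1, hga2]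
      ring
    · rw [key, hL1c2, hL2c2, hL3c2]
      simp only [hcA, hcB, hcC, hcBC, hcCA, hcAB, hal1, hal2, hbe1, hbe2, hga1, hga2]
      ring
end

section
/- Morley's trisector theorem: for any triangle ABC, the three points U₁, V₁, W₁ of intersection of the adjacent angle trisectors form an equilateral triangle, i.e. dist(U₁,V₁) = dist(V₁,W₁) = dist(W₁,U₁). -/
open EuclideanGeometry

section Aux

noncomputable instance : Module.Oriented ℝ Pt (Fin 2) :=
  ⟨(EuclideanSpace.basisFun (Fin 2) ℝ).toBasis.orientation⟩

instance : Fact (Module.finrank ℝ Pt = 2) := ⟨finrank_euclideanSpace_fin⟩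

open Real

lemma sin_three (x : ℝ) :
    Real.sin (3 * x) = 4 * Real.sin (π / 3 + x) * Real.sin (π / 3 - x) * Real.sin x := by
  have h3 : Real.sqrt 3 ^ 2 = 3 := Real.sq_sqrt (by norm_num)
  rw [Real.sin_three_mul, Real.sin_add, Real.sin_sub, Real.sin_pi_div_three,
    Real.cos_pi_div_three]
  linear_combination (-(Real.sin x * Real.cos x ^ 2)) * h3 +
    (-(3 * Real.sin x)) * Real.sin_sq_add_cos_sq x

lemma bracket {u v w : ℝ} (h : u + v + w = π) :
    Real.sin u ^ 2 + Real.sin v ^ 2 - 2 * Real.sin u * Real.sin v * Real.cos w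
      = Real.sin w ^ 2 := by
  have hw : w = π - (u + v) := by linarith
  rw [hw, Real.cos_pi_sub, Real.sin_pi_sub, Real.sin_add, Real.cos_add]
  linear_combination (-(Real.sin u ^ 2)) * Real.sin_sq_add_cos_sq v -
    Real.sin v ^ 2 * Real.sin_sq_add_cos_sq u

lemma morley_calc {x y z a cc dUB dWB dWU : ℝ}
    (hx : 0 < x) (hy : 0 < y) (hz : 0 < z) (hsum : x + y + z = π / 3)
    (ha : 0 ≤ a) (hdWU : 0 ≤ dWU)
    (h1 : dUB * Real.sin (y + z) = a * Real.sin z)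
    (h2 : dWB * Real.sin (x + y) = cc * Real.sin x)
    (h3 : a * Real.sin (3 * z) = cc * Real.sin (3 * x))
    (h4 : dWU * dWU = dWB * dWB + dUB * dUB - 2 * dWB * dUB * Real.cos y) :
    dWU * Real.sin (3 * x) = a * (4 * Real.sin x * Real.sin y * Real.sin z) := by
  have hpi := Real.pi_pos
  have hx3 : x < π / 3 := by linarith
  have hz3 : z < π / 3 := by linarith
  have e1 : y + z = π / 3 - x := by linarith
  have e2 : x + y = π / 3 - z := by linarith
  rw [e1] at h1
  rw [e2] at h2
  have sx_pos : 0 < Real.sin x := Real.sin_pos_of_pos_of_lt_pi hx (by linarith)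
  have sy_pos : 0 < Real.sin y := Real.sin_pos_of_pos_of_lt_pi hy (by linarith)
  have sz_pos : 0 < Real.sin z := Real.sin_pos_of_pos_of_lt_pi hz (by linarith)
  have smz_pos : 0 < Real.sin (π / 3 - z) :=
    Real.sin_pos_of_pos_of_lt_pi (by linarith) (by linarith)
  have s3x_pos : 0 < Real.sin (3 * x) :=
    Real.sin_pos_of_pos_of_lt_pi (by linarith) (by linarith)
  have i3x := sin_three x
  have i3z := sin_three z
  have brk : Real.sin (π / 3 + z) ^ 2 + Real.sin (π / 3 + x) ^ 2 -
      2 * Real.sin (π / 3 + z) * Real.sin (π / 3 + x) * Real.cos y = Real.sin y ^ 2 :=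
    bracket (by linarith)
  have hUp : dUB * Real.sin (3 * x)
      = 4 * a * Real.sin x * Real.sin z * Real.sin (π / 3 + x) := by
    linear_combination dUB * i3x + (4 * Real.sin x * Real.sin (π / 3 + x)) * h1
  have hWpp : dWB * Real.sin (3 * x) * Real.sin (π / 3 - z)
      = 4 * a * Real.sin x * Real.sin z * Real.sin (π / 3 + z) * Real.sin (π / 3 - z) := by
    linear_combination Real.sin (3 * x) * h2 - Real.sin x * h3 + a * Real.sin x * i3z
  have hWp : dWB * Real.sin (3 * x)
      = 4 * a * Real.sin x * Real.sin z * Real.sin (π / 3 + z) :=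
    mul_right_cancel₀ smz_pos.ne' hWpp
  have key : (dWU * Real.sin (3 * x)) ^ 2
      = (a * (4 * Real.sin x * Real.sin y * Real.sin z)) ^ 2 := by
    linear_combination (Real.sin (3 * x)) ^ 2 * h4 +
      (dWB * Real.sin (3 * x) + 4 * a * Real.sin x * Real.sin z * Real.sin (π / 3 + z) -
        2 * Real.cos y * dUB * Real.sin (3 * x)) * hWp +
      (dUB * Real.sin (3 * x) + 4 * a * Real.sin x * Real.sin z * Real.sin (π / 3 + x) -
        2 * Real.cos y * (4 * a * Real.sin x * Real.sin z) * Real.sin (π / 3 + z)) * hUp +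
      (4 * a * Real.sin x * Real.sin z) ^ 2 * brk
  have l0 : 0 ≤ dWU * Real.sin (3 * x) := mul_nonneg hdWU s3x_pos.le
  have r0 : 0 ≤ a * (4 * Real.sin x * Real.sin y * Real.sin z) :=
    mul_nonneg ha (mul_nonneg (mul_nonneg (mul_nonneg (by norm_num) sx_pos.le) sy_pos.le)
      sz_pos.le)
  have := congrArg Real.sqrt key
  rwa [Real.sqrt_sq l0, Real.sqrt_sq r0] at this

lemma sin_mul_dist (p1 p2 p3 : Pt) :
    Real.sin (∠ p2 p1 p3) * (dist p1 p2 * dist p1 p3)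
      = Real.sin (∠ p1 p2 p3) * (dist p2 p1 * dist p2 p3) := by
  unfold EuclideanGeometry.angle
  rw [dist_eq_norm_vsub' Pt p1 p2, dist_eq_norm_vsub' Pt p1 p3,
    dist_eq_norm_vsub' Pt p2 p1, dist_eq_norm_vsub' Pt p2 p3,
    InnerProductGeometry.sin_angle_mul_norm_mul_norm,
    InnerProductGeometry.sin_angle_mul_norm_mul_norm]
  have hx : p1 -ᵥ p2 = -(p2 -ᵥ p1) := (neg_vsub_eq_vsub_rev p2 p1).symm
  have hy : p3 -ᵥ p2 = (p3 -ᵥ p1) - (p2 -ᵥ p1) := (vsub_sub_vsub_cancel_right p3 p2 p1).symm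
  rw [hx, hy]
  congr 1
  simp only [inner_neg_left, inner_neg_right, inner_sub_left, inner_sub_right, neg_neg, neg_sub]
  rw [real_inner_comm (p3 -ᵥ p1) (p2 -ᵥ p1)]
  ring

lemma sine_rule (A B C : Pt) (hAC : A ≠ C) :
    dist C B * Real.sin (∠ B C A) = dist A B * Real.sin (∠ B A C) := by
  have ls3 := sin_mul_dist C A B
  rw [angle_comm A C B, angle_comm C A B, dist_comm A C] at ls3
  refine mul_left_cancel₀ (dist_ne_zero.2 (Ne.symm hAC)) ?_
  linear_combination ls3

lemma InTriangleInterior.rot {A B C P : Pt} (h : InTriangleInterior A B C P) :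
    InTriangleInterior B C A P := by
  obtain ⟨a, b, c, ha, hb, hc, habc, hP⟩ := h
  exact ⟨b, c, a, hb, hc, ha, by linarith, by rw [hP]; module⟩

lemma InTriangleInterior.swap13 {A B C P : Pt} (h : InTriangleInterior A B C P) :
    InTriangleInterior C B A P := by
  obtain ⟨a, b, c, ha, hb, hc, habc, hP⟩ := h
  exact ⟨c, b, a, hc, hb, ha, by linarith, by rw [hP]; module⟩

lemma sign_left_of_interior {A B C P : Pt} (h : InTriangleInterior A B C P) :
    (∡ P B C).sign = (∡ A B C).sign := by
  obtain ⟨a, b, c, ha, hb, hc, habc, hP⟩ := h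
  have hv : P -ᵥ B = a • (A -ᵥ B) + c • (C -ᵥ B) := by
    simp only [vsub_eq_sub, hP]
    have hb' : b = 1 - a - c := by linarith
    rw [hb']; module
  show (o.oangle (P -ᵥ B) (C -ᵥ B)).sign = (o.oangle (A -ᵥ B) (C -ᵥ B)).sign
  rw [hv, Orientation.oangle_sign_smul_add_smul_left, sign_pos ha, one_mul]

lemma sign_right_of_interior {A B C P : Pt} (h : InTriangleInterior A B C P) :
    (∡ A B P).sign = (∡ A B C).sign := by
  obtain ⟨a, b, c, ha, hb, hc, habc, hP⟩ := h
  have hv : P -ᵥ B = a • (A -ᵥ B) + c • (C -ᵥ B) := by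
    simp only [vsub_eq_sub, hP]
    have hb' : b = 1 - a - c := by linarith
    rw [hb']; module
  show (o.oangle (A -ᵥ B) (P -ᵥ B)).sign = (o.oangle (A -ᵥ B) (C -ᵥ B)).sign
  rw [hv, Orientation.oangle_sign_smul_add_smul_right, sign_pos hc, one_mul]

lemma angle_pos_lt_pi {p₁ p₂ p₃ : Pt} (h : (∡ p₁ p₂ p₃).sign ≠ 0) :
    0 < ∠ p₁ p₂ p₃ ∧ ∠ p₁ p₂ p₃ < π := by
  have h1 := left_ne_of_oangle_sign_ne_zero h
  have h3 := right_ne_of_oangle_sign_ne_zero h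
  have hne := Real.Angle.sign_ne_zero_iff.1 h
  constructor
  · exact lt_of_le_of_ne (angle_nonneg _ _ _)
      (fun h0 => hne.1 ((oangle_eq_zero_iff_angle_eq_zero h1 h3).2 h0.symm))
  · exact lt_of_le_of_ne (angle_le_pi _ _ _)
      (fun h0 => hne.2 (oangle_eq_pi_iff_angle_eq_pi.2 h0))

lemma affrot {A B C : Pt} (h : AffineIndependent ℝ ![A, B, C]) :
    AffineIndependent ℝ ![B, C, A] := by
  rw [affineIndependent_iff_not_collinear_set] at h ⊢
  intro hc
  refine h ?_
  have e : ({A, B, C} : Set Pt) = {B, C, A} := by ext p; simp; tauto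
  rw [e]; exact hc

lemma morley_side' (A B C U W : Pt)
    (hsign : (∡ A B C).sign = 1)
    (hU : InTriangleInterior A B C U)
    (hUB : ∠ U B C = ∠ A B C / 3) (hUC : ∠ U C B = ∠ B C A / 3)
    (hW : InTriangleInterior A B C W)
    (hWA : ∠ W A B = ∠ B A C / 3) (hWB : ∠ W B A = ∠ A B C / 3) :
    dist W U = dist B C / Real.sin (∠ B A C) *
      (4 * Real.sin (∠ B A C / 3) * Real.sin (∠ A B C / 3) * Real.sin (∠ B C A / 3)) := by
  have hpi := Real.pi_pos
  have hsBCA : (∡ B C A).sign = 1 := by rw [oangle_rotate_sign A B C]; exact hsign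
  have hsCAB : (∡ C A B).sign = 1 := by rw [oangle_rotate_sign B C A]; exact hsBCA
  have hAB : A ≠ B := left_ne_of_oangle_sign_eq_one hsign
  have hCB : C ≠ B := right_ne_of_oangle_sign_eq_one hsign
  have hAC : A ≠ C := left_ne_right_of_oangle_sign_eq_one hsign
  have hsU : (∡ U B C).sign = 1 := (sign_left_of_interior hU).trans hsign
  have hsW : (∡ A B W).sign = 1 := (sign_right_of_interior hW).trans hsign
  have hsWA : (∡ C A W).sign = 1 := (sign_right_of_interior hW.rot.rot).trans hsCAB
  have hUB' : U ≠ B := left_ne_of_oangle_sign_eq_one hsU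
  have hUC' : U ≠ C := left_ne_right_of_oangle_sign_eq_one hsU
  have hWB' : W ≠ B := right_ne_of_oangle_sign_eq_one hsW
  have hWA' : W ≠ A := right_ne_of_oangle_sign_eq_one hsWA
  set α := ∠ B A C with hαdef
  set β := ∠ A B C with hβdef
  set γ := ∠ B C A with hγdef
  obtain ⟨hβ0, hβπ⟩ := angle_pos_lt_pi (p₁ := A) (p₂ := B) (p₃ := C) (by rw [hsign]; decide)
  obtain ⟨hγ0, hγπ⟩ := angle_pos_lt_pi (p₁ := B) (p₂ := C) (p₃ := A) (by rw [hsBCA]; decide)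
  obtain ⟨hα0', hαπ'⟩ := angle_pos_lt_pi (p₁ := C) (p₂ := A) (p₃ := B) (by rw [hsCAB]; decide)
  have hca : ∠ C A B = α := angle_comm C A B
  rw [hca] at hα0' hαπ'
  have hsum : β + γ + α = π := by
    have h := angle_add_angle_add_angle_eq_pi (p₁ := A) (p₂ := B) C hAB.symm
    rw [hca] at h; exact h
  -- oriented angle values at B
  have oABC : ∡ A B C = (β : Real.Angle) := oangle_eq_angle_of_sign_eq_one hsign
  have oUBC : ∡ U B C = ((β / 3 : ℝ) : Real.Angle) := by
    rw [oangle_eq_angle_of_sign_eq_one hsU, hUB]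
  have oABW : ∡ A B W = ((β / 3 : ℝ) : Real.Angle) := by
    rw [oangle_eq_angle_of_sign_eq_one hsW, angle_comm A B W, hWB]
  have oWBU : ∡ W B U = ((β / 3 : ℝ) : Real.Angle) := by
    have e1 : ∡ W B A + ∡ A B U = ∡ W B U := oangle_add hWB' hAB hUB'
    have e2 : ∡ A B C + ∡ C B U = ∡ A B U := oangle_add hAB hCB hUB'
    have e3 : ∡ W B A = -∡ A B W := oangle_rev A B W
    have e4 : ∡ C B U = -∡ U B C := oangle_rev U B C
    rw [← e1, e3, oABW, ← e2, e4, oUBC, oABC]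
    simp only [← Real.Angle.coe_neg, ← Real.Angle.coe_add]
    congr 1
    ring
  have angWBU : ∠ W B U = β / 3 := by
    rw [angle_eq_abs_oangle_toReal hWB' hUB', oWBU,
      Real.Angle.toReal_coe_eq_self_iff.2 ⟨by linarith, by linarith⟩, abs_of_pos (by linarith)]
  -- angle sums in the small triangles
  have sumU := angle_add_angle_add_angle_eq_pi (p₁ := U) (p₂ := B) C hUB'.symm
  have aCUB : ∠ C U B = π - (β / 3 + γ / 3) := by
    have hbcu : ∠ B C U = γ / 3 := by rw [angle_comm B C U]; exact hUC
    rw [hUB, hbcu] at sumU; linarith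
  have sumW := angle_add_angle_add_angle_eq_pi (p₁ := W) (p₂ := A) B hWA'.symm
  have aAWB : ∠ A W B = π - (α / 3 + β / 3) := by
    have h5 : ∠ A B W = β / 3 := by rw [angle_comm A B W]; exact hWB
    have h6 : ∠ B W A = ∠ A W B := angle_comm B W A
    rw [hWA, h5, h6] at sumW; linarith
  -- law of sines in the small triangles
  have ls1 := sin_mul_dist U C B
  have h1 : dist U B * Real.sin (β / 3 + γ / 3) = dist C B * Real.sin (γ / 3) := by
    rw [aCUB, Real.sin_pi_sub, hUC, dist_comm C U] at ls1
    refine mul_left_cancel₀ (dist_ne_zero.2 hUC') ?_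
    linear_combination ls1
  have ls2 := sin_mul_dist W A B
  have h2 : dist W B * Real.sin (α / 3 + β / 3) = dist A B * Real.sin (α / 3) := by
    rw [aAWB, Real.sin_pi_sub, hWA, dist_comm A W] at ls2
    refine mul_left_cancel₀ (dist_ne_zero.2 hWA') ?_
    linear_combination ls2
  have h3 : dist C B * Real.sin γ = dist A B * Real.sin α := sine_rule A B C hAC
  -- law of cosines
  have h4 : dist W U * dist W U = dist W B * dist W B + dist U B * dist U B -
      2 * dist W B * dist U B * Real.cos (β / 3) := by
    have h := EuclideanGeometry.law_cos W B U
    rwa [angWBU] at h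
  have h3' : dist C B * Real.sin (3 * (γ / 3)) = dist A B * Real.sin (3 * (α / 3)) := by
    rw [show 3 * (γ / 3) = γ by ring, show 3 * (α / 3) = α by ring]; exact h3
  have hcalc := morley_calc (x := α / 3) (y := β / 3) (z := γ / 3) (a := dist C B)
    (cc := dist A B) (dUB := dist U B) (dWB := dist W B) (dWU := dist W U)
    (by linarith) (by linarith) (by linarith) (by linarith)
    dist_nonneg dist_nonneg h1 h2 h3' h4
  rw [show 3 * (α / 3) = α by ring] at hcalc
  rw [dist_comm B C]
  have hsinα : Real.sin α ≠ 0 := (Real.sin_pos_of_pos_of_lt_pi hα0' hαπ').ne'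
  rw [div_mul_eq_mul_div, eq_div_iff hsinα]
  linear_combination hcalc

lemma morley_side (A B C U W : Pt)
    (hABC : AffineIndependent ℝ ![A, B, C])
    (hU : InTriangleInterior A B C U)
    (hUB : ∠ U B C = ∠ A B C / 3) (hUC : ∠ U C B = ∠ B C A / 3)
    (hW : InTriangleInterior A B C W)
    (hWA : ∠ W A B = ∠ B A C / 3) (hWB : ∠ W B A = ∠ A B C / 3) :
    dist W U = dist B C / Real.sin (∠ B A C) *
      (4 * Real.sin (∠ B A C / 3) * Real.sin (∠ A B C / 3) * Real.sin (∠ B C A / 3)) := by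
  have hnz : (∡ A B C).sign ≠ 0 :=
    Real.Angle.sign_ne_zero_iff.2 (oangle_ne_zero_and_ne_pi_iff_affineIndependent.2 hABC)
  have hAC : A ≠ C := left_ne_right_of_oangle_sign_ne_zero hnz
  have htri : (∡ A B C).sign = 1 ∨ (∡ A B C).sign = -1 := by
    cases h : (∡ A B C).sign
    · exact absurd h hnz
    · right; rfl
    · left; rfl
  rcases htri with h1 | h2
  · exact morley_side' A B C U W h1 hU hUB hUC hW hWA hWB
  · have hsign' : (∡ C B A).sign = 1 := by
      rw [← oangle_swap₁₃_sign A B C, h2]; decide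
    have key := morley_side' C B A W U hsign' hW.swap13
      (by rw [angle_comm C B A]; exact hWB) hWA hU.swap13 hUC
      (by rw [angle_comm C B A]; exact hUB)
    -- key : dist U W = dist B A / sin (∠ B C A) * (4 * sin (∠ B C A / 3) * sin (∠ C B A / 3) * sin (∠ B A C / 3))
    have hnzγ : (∡ B C A).sign ≠ 0 := by rw [oangle_rotate_sign A B C]; exact hnz
    have hnzα : (∡ C A B).sign ≠ 0 := by rw [oangle_rotate_sign B C A]; exact hnzγ
    obtain ⟨hγ0, hγπ⟩ := angle_pos_lt_pi hnzγ
    obtain ⟨hα0, hαπ⟩ := angle_pos_lt_pi hnzα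
    rw [angle_comm C A B] at hα0 hαπ
    have hsγ : Real.sin (∠ B C A) ≠ 0 := (Real.sin_pos_of_pos_of_lt_pi hγ0 hγπ).ne'
    have hsα : Real.sin (∠ B A C) ≠ 0 := (Real.sin_pos_of_pos_of_lt_pi hα0 hαπ).ne'
    have hr := sine_rule A B C hAC
    have hQ : dist B A / Real.sin (∠ B C A) = dist B C / Real.sin (∠ B A C) := by
      rw [div_eq_div_iff hsγ hsα, dist_comm B A, dist_comm B C]
      linear_combination -hr
    rw [dist_comm W U, key, angle_comm C B A, hQ]
    ring

end Aux

/-- Morley's trisector theorem: the three intersection points of adjacent angle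
trisectors form an equilateral triangle. -/
theorem morley_trisector
    (A B C U₁ V₁ W₁ : Pt)
    (hABC : AffineIndependent ℝ ![A, B, C])
    (hU : InTriangleInterior A B C U₁)
    (hUB : ∠ U₁ B C = ∠ A B C / 3) (hUC : ∠ U₁ C B = ∠ B C A / 3)
    (hV : InTriangleInterior A B C V₁)
    (hVC : ∠ V₁ C A = ∠ B C A / 3) (hVA : ∠ V₁ A C = ∠ B A C / 3)
    (hW : InTriangleInterior A B C W₁)
    (hWA : ∠ W₁ A B = ∠ B A C / 3) (hWB : ∠ W₁ B A = ∠ A B C / 3) :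
    dist U₁ V₁ = dist V₁ W₁ ∧ dist V₁ W₁ = dist W₁ U₁ := by
  have hABC2 := affrot hABC
  have hABC3 := affrot hABC2
  have K1 := morley_side A B C U₁ W₁ hABC hU hUB hUC hW hWA hWB
  have K2 := morley_side B C A V₁ U₁ hABC2 hV.rot hVC
    (by rw [angle_comm C A B]; exact hVA) hU.rot
    (by rw [angle_comm C B A]; exact hUB) hUC
  have K3 := morley_side C A B W₁ V₁ hABC3 hW.rot.rot
    (by rw [angle_comm C A B]; exact hWA) hWB hV.rot.rot
    (by rw [angle_comm A C B]; exact hVC)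
    (by rw [angle_comm C A B]; exact hVA)
  -- normalize angles
  rw [angle_comm C B A, angle_comm C A B] at K2
  rw [angle_comm A C B, angle_comm C A B] at K3
  -- nondegeneracy facts
  have hnz : (∡ A B C).sign ≠ 0 :=
    Real.Angle.sign_ne_zero_iff.2 (oangle_ne_zero_and_ne_pi_iff_affineIndependent.2 hABC)
  have hAB : A ≠ B := left_ne_of_oangle_sign_ne_zero hnz
  have hCB : C ≠ B := right_ne_of_oangle_sign_ne_zero hnz
  have hAC : A ≠ C := left_ne_right_of_oangle_sign_ne_zero hnz
  have hnzγ : (∡ B C A).sign ≠ 0 := by rw [oangle_rotate_sign A B C]; exact hnz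
  have hnzα : (∡ C A B).sign ≠ 0 := by rw [oangle_rotate_sign B C A]; exact hnzγ
  obtain ⟨hβ0, hβπ⟩ := angle_pos_lt_pi hnz
  obtain ⟨hγ0, hγπ⟩ := angle_pos_lt_pi hnzγ
  obtain ⟨hα0, hαπ⟩ := angle_pos_lt_pi hnzα
  rw [angle_comm C A B] at hα0 hαπ
  have hsα : Real.sin (∠ B A C) ≠ 0 := (Real.sin_pos_of_pos_of_lt_pi hα0 hαπ).ne'
  have hsβ : Real.sin (∠ A B C) ≠ 0 := (Real.sin_pos_of_pos_of_lt_pi hβ0 hβπ).ne'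
  have hsγ : Real.sin (∠ B C A) ≠ 0 := (Real.sin_pos_of_pos_of_lt_pi hγ0 hγπ).ne'
  -- law of sines for the big triangle
  have q1 := sine_rule A B C hAC
  -- q1 : dist C B * sin (∠ B C A) = dist A B * sin (∠ B A C)
  have q2 := sine_rule B A C hCB.symm
  -- q2 : dist C A * sin (∠ A C B) = dist B A * sin (∠ A B C)
  rw [angle_comm A C B, dist_comm B A] at q2
  have e23 : dist C A / Real.sin (∠ A B C) = dist A B / Real.sin (∠ B C A) := by
    rw [div_eq_div_iff hsβ hsγ]
    linear_combination q2
  have e31 : dist A B / Real.sin (∠ B C A) = dist B C / Real.sin (∠ B A C) := by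
    rw [div_eq_div_iff hsγ hsα]
    rw [dist_comm C B] at q1
    linear_combination -q1
  constructor
  · rw [K2, K3, e23]; ring
  · rw [K3, K1, e31]; ring
end

section
/- Second Morley center: for any triangle ABC with Morley vertices U₁, V₁, W₁ (intersections of adjacent angle trisectors), the three lines AU₁, BV₁, CW₁ are concurrent, i.e. there exists a point lying on all three lines. -/
set_option maxHeartbeats 1000000

open EuclideanGeometry Real

namespace Morley

instance : Fact (Module.finrank ℝ Pt = 2) := ⟨finrank_euclideanSpace_fin⟩

noncomputable def o : Orientation ℝ Pt (Fin 2) :=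
  (EuclideanSpace.basisFun (Fin 2) ℝ).toBasis.orientation

lemma abs_areaForm (x y : Pt) :
    |o.areaForm x y| = Real.sin (InnerProductGeometry.angle x y) * (‖x‖ * ‖y‖) := by
  have h2 := o.inner_sq_add_areaForm_sq x y
  have h1 := InnerProductGeometry.sin_angle_mul_norm_mul_norm x y
  rw [real_inner_self_eq_norm_sq, real_inner_self_eq_norm_sq] at h1
  rw [h1, show ‖x‖^2 * ‖y‖^2 - (inner ℝ x y : ℝ) * (inner ℝ x y : ℝ) = o.areaForm x y ^ 2 by nlinarith [h2]]
  exact (Real.sqrt_sq_eq_abs _).symm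

lemma angle_pos_lt_pi_of_areaForm_ne_zero {x y : Pt} (h : o.areaForm x y ≠ 0) :
    0 < InnerProductGeometry.angle x y ∧ InnerProductGeometry.angle x y < π := by
  have h1 := abs_areaForm x y
  have h2 : 0 < |o.areaForm x y| := abs_pos.2 h
  rw [h1] at h2
  have hs : 0 < Real.sin (InnerProductGeometry.angle x y) := by
    rcases le_or_gt (Real.sin (InnerProductGeometry.angle x y)) 0 with hle | hlt
    · nlinarith [mul_nonneg (norm_nonneg x) (norm_nonneg y)]
    · exact hlt
  have h0 := InnerProductGeometry.angle_nonneg x y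
  have hp := InnerProductGeometry.angle_le_pi x y
  constructor
  · rcases h0.lt_or_eq with h' | h'
    · exact h'
    · exfalso; rw [← h'] at hs; simp at hs
  · rcases hp.lt_or_eq with h' | h'
    · exact h'
    · exfalso; rw [h'] at hs; simp at hs

/-- Angle splitting. -/
lemma angle_split {x y : Pt} {a c : ℝ} (ha : 0 < a) (hc : 0 < c)
    (h : o.areaForm x y ≠ 0) :
    InnerProductGeometry.angle x (a • x + c • y)
      + InnerProductGeometry.angle (a • x + c • y) y
      = InnerProductGeometry.angle x y := by
  set w : Pt := a • x + c • y with hw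
  have hx : x ≠ 0 := by rintro rfl; simp at h
  have hy : y ≠ 0 := by rintro rfl; simp at h
  have hωxw : o.areaForm x w = c * o.areaForm x y := by
    simp [hw, map_add, map_smul]
  have hwne : w ≠ 0 := by
    intro h0
    rw [h0] at hωxw
    simp at hωxw
    rcases hωxw with h' | h'
    · exact hc.ne' h'
    · exact h h'
  have hsxw : (o.oangle x w).sign = (o.oangle x y).sign := by
    rw [hw, o.oangle_sign_smul_add_right x (c • y) a, o.oangle_sign_smul_right,
      sign_pos hc, one_mul]
  have hswy : (o.oangle w y).sign = (o.oangle x y).sign := by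
    rw [hw, o.oangle_sign_add_smul_left (a • x) y c, o.oangle_sign_smul_left, sign_pos ha,
      one_mul]
  have hadd := o.oangle_add hx hwne hy
  set θ₁ := InnerProductGeometry.angle x w with hθ₁
  set θ₂ := InnerProductGeometry.angle w y with hθ₂
  set θ₃ := InnerProductGeometry.angle x y with hθ₃
  have hb1 : 0 ≤ θ₁ := InnerProductGeometry.angle_nonneg _ _
  have hb1' : θ₁ ≤ π := InnerProductGeometry.angle_le_pi _ _
  have hb2 : 0 ≤ θ₂ := InnerProductGeometry.angle_nonneg _ _
  have hb2' : θ₂ ≤ π := InnerProductGeometry.angle_le_pi _ _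
  have hb3 : 0 < θ₃ := (angle_pos_lt_pi_of_areaForm_ne_zero h).1
  have hb3' : θ₃ < π := (angle_pos_lt_pi_of_areaForm_ne_zero h).2
  have key : ((θ₁ + θ₂ : ℝ) : Real.Angle) = (θ₃ : Real.Angle) := by
    cases hsgn : (o.oangle x y).sign with
    | zero =>
      exfalso
      rcases o.eq_zero_or_angle_eq_zero_or_pi_of_sign_oangle_eq_zero hsgn with h'|h'|h'|h'
      · exact hx h'
      · exact hy h'
      · exact hb3.ne' h'
      · exact hb3'.ne h'
    | pos =>
      have e1 := o.oangle_eq_angle_of_sign_eq_one (hsxw.trans hsgn)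
      have e2 := o.oangle_eq_angle_of_sign_eq_one (hswy.trans hsgn)
      have e3 := o.oangle_eq_angle_of_sign_eq_one hsgn
      rw [e1, e2, e3] at hadd
      rw [Real.Angle.coe_add]
      exact hadd
    | neg =>
      have e1 := o.oangle_eq_neg_angle_of_sign_eq_neg_one (hsxw.trans hsgn)
      have e2 := o.oangle_eq_neg_angle_of_sign_eq_neg_one (hswy.trans hsgn)
      have e3 := o.oangle_eq_neg_angle_of_sign_eq_neg_one hsgn
      rw [e1, e2, e3] at hadd
      rw [Real.Angle.coe_add]
      rw [← neg_add, neg_inj] at hadd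
      exact hadd
  rcases Real.Angle.angle_eq_iff_two_pi_dvd_sub.1 key with ⟨k, hk⟩
  have hkb1 : -1 < (k : ℝ) := by nlinarith [Real.pi_pos]
  have hkb2 : (k : ℝ) < 1 := by nlinarith [Real.pi_pos]
  have hk0 : k = 0 := by
    have h1 : (-1 : ℤ) < k := by exact_mod_cast hkb1
    have h2 : (k : ℤ) < 1 := by exact_mod_cast hkb2
    omega
  rw [hk0] at hk
  push_cast at hk
  linarith

lemma angE (p1 p2 p3 : Pt) :
    ∠ p1 p2 p3 = InnerProductGeometry.angle (p1 - p2) (p3 - p2) := rfl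

lemma cev (X Y Z P : Pt) {p q r : ℝ} (hp : 0 < p) (hq : 0 < q) (hr : 0 < r)
    (hsum : p + q + r = 1) (hP : P = p • X + q • Y + r • Z)
    (hnc : ¬Collinear ℝ ({X, Y, Z} : Set Pt))
    (hYa : ∠ P Y Z = ∠ X Y Z / 3) (hZa : ∠ P Z Y = ∠ Y Z X / 3) :
    q * Real.sin (∠ Y Z X / 3) * ‖X - Y‖ * Real.sin (∠ X Y Z - ∠ X Y Z / 3)
      = r * Real.sin (∠ X Y Z / 3) * ‖X - Z‖ * Real.sin (∠ Y Z X - ∠ Y Z X / 3) := by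
  have hncYZX : ¬Collinear ℝ ({Y, Z, X} : Set Pt) := by
    intro h; apply hnc
    have : ({Y, Z, X} : Set Pt) = {X, Y, Z} := by ext x; simp only [Set.mem_insert_iff, Set.mem_singleton_iff]; tauto
    rwa [this] at h
  have hncXZY : ¬Collinear ℝ ({X, Z, Y} : Set Pt) := by
    intro h; apply hnc
    have : ({X, Z, Y} : Set Pt) = {X, Y, Z} := by ext x; simp only [Set.mem_insert_iff, Set.mem_singleton_iff]; tauto
    rwa [this] at h
  set β := ∠ X Y Z with hβ
  set γ := ∠ Y Z X with hγ
  have hβ0 : 0 < β := angle_pos_of_not_collinear hnc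
  have hβπ : β < π := angle_lt_pi_of_not_collinear hnc
  have hγ0 : 0 < γ := angle_pos_of_not_collinear hncYZX
  have hγπ : γ < π := angle_lt_pi_of_not_collinear hncYZX
  -- nondegeneracy of vertices
  have hXY : X ≠ Y := by rintro rfl; exact hnc (by simpa using collinear_pair ℝ X Z)
  have hZY : Z ≠ Y := by
    rintro rfl; apply hnc
    have : ({X, Z, Z} : Set Pt) = {X, Z} := by ext x; simp only [Set.mem_insert_iff, Set.mem_singleton_iff]; tauto
    rw [this]; exact collinear_pair ℝ X Z
  have hXZ : X ≠ Z := by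
    rintro rfl; apply hnc
    have : ({X, Y, X} : Set Pt) = {X, Y} := by ext x; simp only [Set.mem_insert_iff, Set.mem_singleton_iff]; tauto
    rw [this]; exact collinear_pair ℝ X Y
  have hnXY : 0 < ‖X - Y‖ := by simpa [sub_eq_zero] using hXY
  have hnZY : 0 < ‖Z - Y‖ := by simpa [sub_eq_zero] using hZY
  have hnXZ : 0 < ‖X - Z‖ := by simpa [sub_eq_zero] using hXZ
  have hnYZ : 0 < ‖Y - Z‖ := by simpa [sub_eq_zero] using hZY.symm
  -- area forms at Y and Z
  set DY := o.areaForm (X - Y) (Z - Y) with hDY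
  set DZ := o.areaForm (X - Z) (Y - Z) with hDZ
  have habsDY : |DY| = Real.sin β * (‖X - Y‖ * ‖Z - Y‖) := by
    rw [hDY, abs_areaForm, ← angE]
  have habsDZ : |DZ| = Real.sin γ * (‖X - Z‖ * ‖Y - Z‖) := by
    rw [hDZ, abs_areaForm, ← angE, angle_comm]
  have hsinβ : 0 < Real.sin β := Real.sin_pos_of_pos_of_lt_pi hβ0 hβπ
  have hsinγ : 0 < Real.sin γ := Real.sin_pos_of_pos_of_lt_pi hγ0 hγπ
  have hDYpos : 0 < |DY| := by rw [habsDY]; positivity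
  have hDZpos : 0 < |DZ| := by rw [habsDZ]; positivity
  have hDYne : DY ≠ 0 := by intro h; rw [h] at hDYpos; simp at hDYpos
  have hDZne : DZ ≠ 0 := by intro h; rw [h] at hDZpos; simp at hDZpos
  -- decompositions of P - Y and P - Z
  have hq' : q = 1 - p - r := by linarith
  have hPY : P - Y = p • (X - Y) + r • (Z - Y) := by rw [hP, hq']; module
  have hPZ : P - Z = p • (X - Z) + q • (Y - Z) := by
    have hr' : r = 1 - p - q := by linarith
    rw [hP, hr']; module
  -- angle splits
  have hsplitY := angle_split hp hr hDYne
  rw [← hPY, ← angE, ← angE] at hsplitY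
  -- hsplitY : InnerProductGeometry.angle (X-Y) (P-Y) + ∠ P Y Z = β  (angles as vectors)
  have hsplitZ := angle_split hp hq hDZne
  rw [← hPZ, ← angE, ← angE] at hsplitZ
  rw [hYa] at hsplitY
  rw [hZa] at hsplitZ
  have hY3 : InnerProductGeometry.angle (X - Y) (Z - Y) = β := (angE X Y Z).symm
  have hZ3 : InnerProductGeometry.angle (X - Z) (Y - Z) = γ := by
    rw [← angE, angle_comm]
  rw [hY3] at hsplitY
  rw [hZ3] at hsplitZ
  have hXYP : InnerProductGeometry.angle (X - Y) (P - Y) = β - β / 3 := by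
    rw [← angE]; linarith
  have hXZP : InnerProductGeometry.angle (X - Z) (P - Z) = γ - γ / 3 := by
    rw [← angE]; linarith
  have angZYP : InnerProductGeometry.angle (Z - Y) (P - Y) = β / 3 := by
    rw [InnerProductGeometry.angle_comm, ← angE]; exact hYa
  have angYZP : InnerProductGeometry.angle (Y - Z) (P - Z) = γ / 3 := by
    rw [InnerProductGeometry.angle_comm, ← angE]; exact hZa
  have E1ω : o.areaForm (X - Y) (P - Y) = r * DY := by
    rw [hPY, map_add, map_smul, map_smul, Orientation.areaForm_apply_self, smul_zero,
      zero_add, smul_eq_mul]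
  have E3ω : o.areaForm (Z - Y) (P - Y) = -(p * DY) := by
    rw [hPY]
    simp only [map_add, map_smul, Orientation.areaForm_apply_self, smul_eq_mul, smul_zero,
      mul_zero, add_zero, zero_add]
    rw [show (o.areaForm (Z - Y)) (X - Y) = -DY from by rw [hDY, o.areaForm_swap]]
    ring
  have E2ω : o.areaForm (X - Z) (P - Z) = q * DZ := by
    rw [hPZ, map_add, map_smul, map_smul, Orientation.areaForm_apply_self, smul_zero,
      zero_add, smul_eq_mul]
  have E4ω : o.areaForm (Y - Z) (P - Z) = -(p * DZ) := by
    rw [hPZ]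
    simp only [map_add, map_smul, Orientation.areaForm_apply_self, smul_eq_mul, smul_zero,
      mul_zero, add_zero, zero_add]
    rw [show (o.areaForm (Y - Z)) (X - Z) = -DZ from by rw [hDZ, o.areaForm_swap]]
    ring
  have E1 : Real.sin (β - β / 3) * (‖X - Y‖ * ‖P - Y‖) = r * |DY| := by
    rw [← abs_of_pos hr, ← abs_mul, ← E1ω, abs_areaForm, hXYP]
  have E2 : Real.sin (γ - γ / 3) * (‖X - Z‖ * ‖P - Z‖) = q * |DZ| := by
    rw [← abs_of_pos hq, ← abs_mul, ← E2ω, abs_areaForm, hXZP]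
  have E3 : Real.sin (β / 3) * (‖Z - Y‖ * ‖P - Y‖) = p * |DY| := by
    rw [← abs_of_pos hp, ← abs_mul, ← abs_neg (p * DY), ← E3ω, abs_areaForm, angZYP]
  have E4 : Real.sin (γ / 3) * (‖Y - Z‖ * ‖P - Z‖) = p * |DZ| := by
    rw [← abs_of_pos hp, ← abs_mul, ← abs_neg (p * DZ), ← E4ω, abs_areaForm, angYZP]
  rw [norm_sub_rev Y Z] at E4
  have key5 : (Real.sin (γ / 3) * (‖P - Z‖ * |DY|)) * (p * ‖Z - Y‖)
      = (Real.sin (β / 3) * (‖P - Y‖ * |DZ|)) * (p * ‖Z - Y‖) := by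
    linear_combination (Real.sin (β / 3) * ‖P - Y‖ * ‖Z - Y‖) * E4
      - (Real.sin (γ / 3) * ‖P - Z‖ * ‖Z - Y‖) * E3
  have E5 : Real.sin (γ / 3) * (‖P - Z‖ * |DY|) = Real.sin (β / 3) * (‖P - Y‖ * |DZ|) :=
    mul_right_cancel₀ (by positivity) key5
  have keyF : (q * Real.sin (γ / 3) * ‖X - Y‖ * Real.sin (β - β / 3)) * (|DY| * |DZ|)
      = (r * Real.sin (β / 3) * ‖X - Z‖ * Real.sin (γ - γ / 3)) * (|DY| * |DZ|) := by
    linear_combination (-(Real.sin (γ / 3) * ‖X - Y‖ * Real.sin (β - β / 3) * |DY|)) * E2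
      + (Real.sin (β - β / 3) * ‖X - Y‖ * Real.sin (γ - γ / 3) * ‖X - Z‖) * E5
      + (Real.sin (β / 3) * ‖X - Z‖ * Real.sin (γ - γ / 3) * |DZ|) * E1
  exact mul_right_cancel₀ (by positivity) keyF

end Morley

open Morley in
/-- Second Morley center: the lines from the vertices to the opposite Morley
vertices are concurrent. -/
theorem second_morley_center
    (A B C U₁ V₁ W₁ : Pt)
    (hABC : AffineIndependent ℝ ![A, B, C])
    (hU : InTriangleInterior A B C U₁)
    (hUB : ∠ U₁ B C = ∠ A B C / 3) (hUC : ∠ U₁ C B = ∠ B C A / 3)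
    (hV : InTriangleInterior A B C V₁)
    (hVC : ∠ V₁ C A = ∠ B C A / 3) (hVA : ∠ V₁ A C = ∠ B A C / 3)
    (hW : InTriangleInterior A B C W₁)
    (hWA : ∠ W₁ A B = ∠ B A C / 3) (hWB : ∠ W₁ B A = ∠ A B C / 3) :
    ∃ P : Pt, P ∈ line[ℝ, A, U₁] ∧ P ∈ line[ℝ, B, V₁] ∧ P ∈ line[ℝ, C, W₁] := by
  have hnc : ¬Collinear ℝ ({A, B, C} : Set Pt) :=
    affineIndependent_iff_not_collinear_set.mp hABC
  have hncB : ¬Collinear ℝ ({B, C, A} : Set Pt) := by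
    intro h; apply hnc
    have : ({B, C, A} : Set Pt) = {A, B, C} := by
      ext x; simp only [Set.mem_insert_iff, Set.mem_singleton_iff]; tauto
    rwa [this] at h
  have hncC : ¬Collinear ℝ ({C, A, B} : Set Pt) := by
    intro h; apply hnc
    have : ({C, A, B} : Set Pt) = {A, B, C} := by
      ext x; simp only [Set.mem_insert_iff, Set.mem_singleton_iff]; tauto
    rwa [this] at h
  obtain ⟨a₁, b₁, c₁, ha₁, hb₁, hc₁, hs₁, hU₁⟩ := hU
  obtain ⟨a₂, b₂, c₂, ha₂, hb₂, hc₂, hs₂, hV₁⟩ := hV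
  obtain ⟨a₃, b₃, c₃, ha₃, hb₃, hc₃, hs₃, hW₁⟩ := hW
  -- the three instances of the trigonometric computation
  have SU := cev A B C U₁ ha₁ hb₁ hc₁ hs₁ hU₁ hnc hUB hUC
  have SV := cev B C A V₁ hb₂ hc₂ ha₂ (by linarith) (by rw [hV₁]; module) hncB hVC
    (by rw [hVA, angle_comm C A B])
  have SW := cev C A B W₁ hc₃ ha₃ hb₃ (by linarith) (by rw [hW₁]; module) hncC
    (by rw [hWA, angle_comm C A B]) hWB
  -- positivity of the angles involved
  have hα0 : 0 < ∠ C A B := angle_pos_of_not_collinear hncC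
  have hαπ : ∠ C A B < π := angle_lt_pi_of_not_collinear hncC
  have hβ0 : 0 < ∠ A B C := angle_pos_of_not_collinear hnc
  have hβπ : ∠ A B C < π := angle_lt_pi_of_not_collinear hnc
  have hγ0 : 0 < ∠ B C A := angle_pos_of_not_collinear hncB
  have hγπ : ∠ B C A < π := angle_lt_pi_of_not_collinear hncB
  have pi_pos := Real.pi_pos
  have sα : 0 < Real.sin (∠ C A B / 3) := Real.sin_pos_of_pos_of_lt_pi (by linarith) (by linarith)
  have sβ : 0 < Real.sin (∠ A B C / 3) := Real.sin_pos_of_pos_of_lt_pi (by linarith) (by linarith)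
  have sγ : 0 < Real.sin (∠ B C A / 3) := Real.sin_pos_of_pos_of_lt_pi (by linarith) (by linarith)
  have sα2 : 0 < Real.sin (∠ C A B - ∠ C A B / 3) :=
    Real.sin_pos_of_pos_of_lt_pi (by linarith) (by linarith)
  have sβ2 : 0 < Real.sin (∠ A B C - ∠ A B C / 3) :=
    Real.sin_pos_of_pos_of_lt_pi (by linarith) (by linarith)
  have sγ2 : 0 < Real.sin (∠ B C A - ∠ B C A / 3) :=
    Real.sin_pos_of_pos_of_lt_pi (by linarith) (by linarith)
  have hAB : A ≠ B := by rintro rfl; exact hnc (by simpa using collinear_pair ℝ A C)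
  have hAC : A ≠ C := by
    rintro rfl; apply hnc
    have : ({A, B, A} : Set Pt) = {A, B} := by
      ext x; simp only [Set.mem_insert_iff, Set.mem_singleton_iff]; tauto
    rw [this]; exact collinear_pair ℝ A B
  have hBC : B ≠ C := by
    rintro rfl; apply hnc
    have : ({A, B, B} : Set Pt) = {A, B} := by
      ext x; simp only [Set.mem_insert_iff, Set.mem_singleton_iff]; tauto
    rw [this]; exact collinear_pair ℝ A B
  have nAB : 0 < ‖A - B‖ := by simpa [sub_eq_zero] using hAB
  have nAC : 0 < ‖A - C‖ := by simpa [sub_eq_zero] using hAC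
  have nBC : 0 < ‖B - C‖ := by simpa [sub_eq_zero] using hBC
  rw [norm_sub_rev B A] at SV
  rw [norm_sub_rev C A, norm_sub_rev C B] at SW
  -- Ceva's relation
  have hCeva : b₁ * c₂ * a₃ = c₁ * a₂ * b₃ := by
    have hKne : Real.sin (∠ B C A / 3) * Real.sin (∠ C A B / 3) * Real.sin (∠ A B C / 3) *
        (‖A - B‖ * ‖B - C‖ * ‖A - C‖) *
        (Real.sin (∠ A B C - ∠ A B C / 3) * Real.sin (∠ B C A - ∠ B C A / 3) *
          Real.sin (∠ C A B - ∠ C A B / 3)) ≠ 0 := by positivity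
    apply mul_right_cancel₀ hKne
    have P1 := congrArg₂ (· * ·) (congrArg₂ (· * ·) SU SV) SW
    linear_combination P1
  -- the concurrency point
  have ha₁' : a₁ = 1 - b₁ - c₁ := by linarith
  have hb₂' : b₂ = 1 - a₂ - c₂ := by linarith
  have hc₃' : c₃ = 1 - a₃ - b₃ := by linarith
  have hsne : (a₂ * a₃ + b₃ * a₂ + c₂ * a₃) ≠ 0 := by positivity
  have hb₁ne : b₁ ≠ 0 := ne_of_gt hb₁
  have hc₂ne : c₂ ≠ 0 := ne_of_gt hc₂
  have ha₃ne : a₃ ≠ 0 := ne_of_gt ha₃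
  have ha₂ne : a₂ ≠ 0 := ne_of_gt ha₂
  refine ⟨(a₂ * a₃ + b₃ * a₂ + c₂ * a₃)⁻¹ •
      ((a₂ * a₃) • A + (b₃ * a₂) • B + (c₂ * a₃) • C), ?_, ?_, ?_⟩
  · have hP : (a₂ * a₃ + b₃ * a₂ + c₂ * a₃)⁻¹ •
        ((a₂ * a₃) • A + (b₃ * a₂) • B + (c₂ * a₃) • C)
        = AffineMap.lineMap A U₁ ((b₃ * a₂) / ((a₂ * a₃ + b₃ * a₂ + c₂ * a₃) * b₁)) := by
      rw [AffineMap.lineMap_apply_module, hU₁, ha₁']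
      match_scalars
      · field_simp
        linear_combination (-1) * hCeva
      · field_simp
        try ring
      · field_simp
        linear_combination hCeva
    rw [hP]; exact AffineMap.lineMap_mem_affineSpan_pair _ _ _
  · have hP : (a₂ * a₃ + b₃ * a₂ + c₂ * a₃)⁻¹ •
        ((a₂ * a₃) • A + (b₃ * a₂) • B + (c₂ * a₃) • C)
        = AffineMap.lineMap B V₁ (a₃ / (a₂ * a₃ + b₃ * a₂ + c₂ * a₃)) := by
      rw [AffineMap.lineMap_apply_module, hV₁, hb₂']
      match_scalars
      · field_simp
        try ring
      · field_simp
        try ring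
      · field_simp
        try ring
    rw [hP]; exact AffineMap.lineMap_mem_affineSpan_pair _ _ _
  · have hP : (a₂ * a₃ + b₃ * a₂ + c₂ * a₃)⁻¹ •
        ((a₂ * a₃) • A + (b₃ * a₂) • B + (c₂ * a₃) • C)
        = AffineMap.lineMap C W₁ (a₂ / (a₂ * a₃ + b₃ * a₂ + c₂ * a₃)) := by
      rw [AffineMap.lineMap_apply_module, hW₁, hc₃']
      match_scalars
      · field_simp
        try ring
      · field_simp
        try ring
      · field_simp
        try ring
    rw [hP]; exact AffineMap.lineMap_mem_affineSpan_pair _ _ _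
end
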